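/- arXiv:2302.06447 — 8 statements merged into one kernel-verified Lean document; each statement's English description precedes it below -/
import Mathlib

section
/- Let (x_k) be a stochastic process on a probability space with values in a finite-dimensional real Hilbert space H, and let F : H → ℝ satisfy Assumption 1. If Assumption 2 holds, then the set {ω ∈ Ω : F∞(ω) ∈ F(zer ∇F)} has probability one, i.e., almost surely the limit F∞ of (F(x_k)) is a value attained by F at some critical point of F. -/
open MeasureTheory Filter Topology

theorem continuous_gradient_of_contDiff
    {H : Type*} [NormedAddCommGroup H] [InnerProductSpace ℝ H]
    [CompleteSpace H] {F : H → ℝ} (hF : ContDiff ℝ 1 F) :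
    Continuous (gradient F) := by
  have : gradient F = fun y => (InnerProductSpace.toDual ℝ H).symm (fderiv ℝ F y) := rfl
  rw [this]
  exact (InnerProductSpace.toDual ℝ H).symm.continuous.comp (hF.continuous_fderiv one_ne_zero)

/-- Under Assumptions 1 and 2, almost surely the limit `Finf` of `(F (x k))`
is a value attained by `F` at some critical point of `F`. -/
theorem as_limit_in_image_of_critical_points
    {H : Type*} [NormedAddCommGroup H] [InnerProductSpace ℝ H] [FiniteDimensional ℝ H]
    {Ω : Type*} [MeasureSpace Ω] [IsProbabilityMeasure (volume : Measure Ω)]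
    (F : H → ℝ)
    (hF_coercive : Tendsto F (Bornology.cobounded H) atTop)
    (hF_smooth : ContDiff ℝ 1 F)
    (x : ℕ → Ω → H) (Finf : Ω → ℝ)
    (hFconv : ∀ᵐ ω, Tendsto (fun k => F (x k ω)) atTop (𝓝 (Finf ω)))
    (hgrad : ∀ᵐ ω, Tendsto (fun k => gradient F (x k ω)) atTop (𝓝 (0 : H))) :
    ∀ᵐ ω, Finf ω ∈ F '' {y : H | gradient F y = 0} := by
  filter_upwards [hFconv, hgrad] with ω hF hg
  set a := Finf ω
  -- the set where F < a + 1 is bounded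
  have h1 : ∀ᶠ y in Bornology.cobounded H, a + 1 ≤ F y :=
    hF_coercive.eventually (eventually_ge_atTop (a + 1))
  have hbdd : Bornology.IsBounded {y : H | ¬ (a + 1 ≤ F y)} := by
    have : {y : H | ¬ (a + 1 ≤ F y)} = {y : H | a + 1 ≤ F y}ᶜ := by
      ext y; simp
    rw [this]
    exact Bornology.IsBounded.of_compl (by rw [compl_compl]; exact Bornology.isBounded_compl_iff.mpr h1)
  -- eventually the sequence lies in this bounded set
  have h2 : ∀ᶠ k in atTop, F (x k ω) < a + 1 :=
    hF.eventually (eventually_lt_nhds (by linarith : a < a + 1))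
  obtain ⟨N, hN⟩ := h2.exists_forall_of_atTop
  obtain ⟨R, hR⟩ := hbdd.subset_closedBall 0
  set y : ℕ → H := fun k => x (k + N) ω with hy
  have hymem : ∀ k, y k ∈ Metric.closedBall (0 : H) R := by
    intro k
    exact hR (by simpa using not_le.mpr (hN (k + N) (Nat.le_add_left N k)))
  obtain ⟨z, hz, φ, hφ, hlim⟩ :=
    (isCompact_closedBall (0 : H) R).tendsto_subseq hymem
  -- limits along the subsequence
  have hFy : Tendsto (fun k => F (y k)) atTop (𝓝 a) :=
    hF.comp (tendsto_add_atTop_nat N)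
  have hgy : Tendsto (fun k => gradient F (y k)) atTop (𝓝 (0 : H)) :=
    hg.comp (tendsto_add_atTop_nat N)
  have hFsub : Tendsto (fun j => F (y (φ j))) atTop (𝓝 a) :=
    hFy.comp hφ.tendsto_atTop
  have hgsub : Tendsto (fun j => gradient F (y (φ j))) atTop (𝓝 (0 : H)) :=
    hgy.comp hφ.tendsto_atTop
  have hFcont : Tendsto (fun j => F (y (φ j))) atTop (𝓝 (F z)) :=
    (hF_smooth.continuous.tendsto z).comp hlim
  have hgcont : Tendsto (fun j => gradient F (y (φ j))) atTop (𝓝 (gradient F z)) :=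
    ((continuous_gradient_of_contDiff hF_smooth).tendsto z).comp hlim
  refine ⟨z, ?_, ?_⟩
  · exact tendsto_nhds_unique hgcont hgsub
  · exact tendsto_nhds_unique hFcont hFsub
end

section
/- Let (x_k) be a stochastic process on a probability space with values in a finite-dimensional real Hilbert space H, and let F : H → ℝ satisfy Assumption 1 and Assumption 2. Suppose in addition that (‖x_{k+1} − x_k‖) converges almost surely to 0 and that the set zer ∇F is at most countable (countable or finite). Then the sequence (x_k) almost surely converges to a point of zer ∇F. -/
open MeasureTheory Filter Topology

/-- Under Assumptions 1 and 2, if moreover `‖x (k+1) - x k‖ → 0` almost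
surely and the set of critical points of `F` is at most countable, then `(x k)` converges
almost surely to a critical point of `F`. -/
theorem as_convergence_of_countable_critical_set
    {H : Type*} [NormedAddCommGroup H] [InnerProductSpace ℝ H] [FiniteDimensional ℝ H]
    {Ω : Type*} [MeasureSpace Ω] [IsProbabilityMeasure (volume : Measure Ω)]
    (F : H → ℝ)
    (hF_coercive : Tendsto F (Bornology.cobounded H) atTop)
    (hF_smooth : ContDiff ℝ 1 F)
    (x : ℕ → Ω → H) (Finf : Ω → ℝ)
    (hFconv : ∀ᵐ ω, Tendsto (fun k => F (x k ω)) atTop (𝓝 (Finf ω)))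
    (hgrad : ∀ᵐ ω, Tendsto (fun k => gradient F (x k ω)) atTop (𝓝 (0 : H)))
    (hstep : ∀ᵐ ω, Tendsto (fun k => ‖x (k+1) ω - x k ω‖) atTop (𝓝 0))
    (hcount : ({y : H | gradient F y = 0}).Countable) :
    ∀ᵐ ω, ∃ xstar : H, gradient F xstar = 0 ∧
      Tendsto (fun k => x k ω) atTop (𝓝 xstar) := by
  classical
  have hgc : Continuous (gradient F) :=
    (InnerProductSpace.toDual ℝ H).symm.continuous.comp (hF_smooth.continuous_fderiv one_ne_zero)
  filter_upwards [hFconv, hgrad, hstep] with ω hFc hg hs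
  set u : ℕ → H := fun k => x k ω with hu
  -- the sequence is bounded
  obtain ⟨M, hM⟩ := hFc.bddAbove_range
  have hbd : Bornology.IsBounded {y : H | F y ≤ M} := by
    have h1 : {y : H | M + 1 ≤ F y} ∈ Bornology.cobounded H :=
      hF_coercive.eventually_ge_atTop (M + 1)
    have h2 : Bornology.IsBounded {y : H | M + 1 ≤ F y}ᶜ :=
      Bornology.IsCobounded.compl (Bornology.isCobounded_def.mpr h1)
    exact h2.subset (fun y hy => by simp only [Set.mem_compl_iff, Set.mem_setOf_eq] at *; linarith)
  have hmem : ∀ k, u k ∈ {y : H | F y ≤ M} := fun k => hM ⟨k, rfl⟩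
  -- every cluster point is critical
  have hclus : ∀ (φ : ℕ → ℕ) (c : H), StrictMono φ → Tendsto (u ∘ φ) atTop (𝓝 c) →
      gradient F c = 0 := by
    intro φ c hφ hlim
    have h1 : Tendsto (fun n => gradient F (u (φ n))) atTop (𝓝 (gradient F c)) :=
      (hgc.tendsto c).comp hlim
    have h2 : Tendsto (fun n => gradient F (u (φ n))) atTop (𝓝 0) :=
      hg.comp hφ.tendsto_atTop
    exact tendsto_nhds_unique h1 h2
  -- any two cluster points coincide
  have huniq : ∀ a b : H, (∃ φ : ℕ → ℕ, StrictMono φ ∧ Tendsto (u ∘ φ) atTop (𝓝 a)) →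
      (∃ φ : ℕ → ℕ, StrictMono φ ∧ Tendsto (u ∘ φ) atTop (𝓝 b)) → a = b := by
    rintro a b ⟨φa, hφa, hla⟩ ⟨φb, hφb, hlb⟩
    by_contra hab
    set d := dist b a with hd'
    have hd : 0 < d := dist_pos.mpr (Ne.symm hab)
    set S := (fun y => dist y a) '' {y : H | gradient F y = 0} with hS'
    have hSc : S.Countable := hcount.image _
    obtain ⟨r, hr, hrS⟩ : ∃ r ∈ Set.Ioo 0 d, r ∉ S := by
      by_contra hc
      push_neg at hc
      have h1 : (Set.Ioo (0:ℝ) d).Countable := hSc.mono hc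
      have h2 := h1.le_aleph0
      rw [Cardinal.mk_Ioo_real hd] at h2
      exact Cardinal.aleph0_lt_continuum.not_ge h2
    set f : ℕ → ℝ := fun k => dist (u k) a with hf'
    -- f is frequently within 1/(n+1) of r
    have hfreq : ∀ n : ℕ, ∃ᶠ k in atTop, |f k - r| < 1/(n+1) := by
      intro n
      set ε : ℝ := 1/(n+1) with hε'
      have hε : 0 < ε := by positivity
      rw [frequently_atTop]
      intro N
      obtain ⟨M₀, hM₀⟩ := eventually_atTop.mp (hs.eventually (gt_mem_nhds hε))
      set M1 := max M₀ N with hM1'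
      obtain ⟨Na, hNa⟩ := Metric.tendsto_atTop.mp hla r hr.1
      obtain ⟨Nb, hNb⟩ := Metric.tendsto_atTop.mp hlb (d - r) (by linarith [hr.2])
      set k := φa (max Na M1) with hk'
      have hkM : M1 ≤ k := le_trans (le_max_right _ _) hφa.le_apply
      have hfk : f k < r := hNa (max Na M1) (le_max_left _ _)
      set m := φb (max Nb (k+1)) with hm'
      have hmk : k + 1 ≤ m := le_trans (le_max_right _ _) hφb.le_apply
      have hfm : r < f m := by
        have h1 : dist (u m) b < d - r := hNb _ (le_max_left _ _)
        have h2 : d ≤ dist b (u m) + dist (u m) a := dist_triangle b (u m) a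
        have h3 : dist b (u m) = dist (u m) b := dist_comm _ _
        simp only [hf']
        linarith
      have hex : ∃ j, r ≤ f (k+1+j) :=
        ⟨m - (k+1), by rw [Nat.add_sub_cancel' hmk]; exact hfm.le⟩
      set n0 := Nat.find hex with hn0'
      have hj1 : r ≤ f (k+1+n0) := Nat.find_spec hex
      have hprev : f (k + n0) < r := by
        rcases Nat.eq_zero_or_pos n0 with h0 | h0
        · simpa [h0] using hfk
        · have h4 := Nat.find_min hex (show n0 - 1 < n0 by omega)
          push_neg at h4
          have he : k + 1 + (n0 - 1) = k + n0 := by omega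
          rwa [he] at h4
      have hstepj : dist (u (k+n0+1)) (u (k+n0)) < ε := by
        have h5 := hM₀ (k+n0) (by omega)
        simpa [dist_eq_norm] using h5
      refine ⟨k+1+n0, by omega, ?_⟩
      have habs : |f (k+n0+1) - f (k+n0)| ≤ dist (u (k+n0+1)) (u (k+n0)) :=
        abs_dist_sub_le _ _ _
      have he2 : k+1+n0 = k+n0+1 := by omega
      rw [he2] at hj1 ⊢
      have h6 : f (k+n0+1) - f (k+n0) ≤ |f (k+n0+1) - f (k+n0)| := le_abs_self _
      rw [abs_sub_lt_iff]
      constructor <;> linarith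
    obtain ⟨ψ, hψ, hψ2⟩ := Filter.extraction_forall_of_frequently hfreq
    have hf0 : Tendsto (fun n => f (ψ n)) atTop (𝓝 r) := by
      rw [tendsto_iff_dist_tendsto_zero]
      exact squeeze_zero (fun n => dist_nonneg)
        (fun n => by rw [Real.dist_eq]; exact (hψ2 n).le)
        tendsto_one_div_add_atTop_nhds_zero_nat
    obtain ⟨c, -, χ, hχ, hχ2⟩ := tendsto_subseq_of_bounded hbd (fun n => hmem (ψ n))
    have hcl : Tendsto (u ∘ (ψ ∘ χ)) atTop (𝓝 c) := hχ2
    have hc0 : gradient F c = 0 := hclus (ψ ∘ χ) c (hψ.comp hχ) hcl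
    have h7 : Tendsto (fun n => dist (u (ψ (χ n))) a) atTop (𝓝 (dist c a)) :=
      hcl.dist tendsto_const_nhds
    have h8 : Tendsto (fun n => f (ψ (χ n))) atTop (𝓝 r) := hf0.comp hχ.tendsto_atTop
    have h9 : dist c a = r := tendsto_nhds_unique h7 h8
    exact hrS ⟨c, hc0, h9⟩
  -- existence of a limit
  obtain ⟨a, -, φ, hφ, hla⟩ := tendsto_subseq_of_bounded hbd hmem
  refine ⟨a, hclus φ a hφ hla, ?_⟩
  by_contra hna
  rw [Metric.tendsto_atTop] at hna
  push_neg at hna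
  obtain ⟨ε, hε, hfr⟩ := hna
  have hfr' : ∃ᶠ k in atTop, ε ≤ dist (u k) a := by
    rw [frequently_atTop]
    intro N
    obtain ⟨k, hk1, hk2⟩ := hfr N
    exact ⟨k, hk1, hk2⟩
  obtain ⟨φ2, hφ2, hP⟩ := Filter.extraction_of_frequently_atTop hfr'
  obtain ⟨b, -, χ, hχ, hlb⟩ := tendsto_subseq_of_bounded hbd (fun n => hmem (φ2 n))
  have hlb' : Tendsto (u ∘ (φ2 ∘ χ)) atTop (𝓝 b) := hlb
  have hba : a = b := huniq a b ⟨φ, hφ, hla⟩ ⟨φ2 ∘ χ, hφ2.comp hχ, hlb'⟩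
  have h10 : Tendsto (fun n => dist (u (φ2 (χ n))) a) atTop (𝓝 (dist b a)) :=
    hlb'.dist tendsto_const_nhds
  have h11 : ε ≤ dist b a := ge_of_tendsto' h10 (fun n => hP (χ n))
  rw [← hba, dist_self] at h11
  linarith
end

section
/- Let H be a finite-dimensional real Hilbert space, let C = ⋃_{i=1}^I C_i be a union of I ≥ 1 non-empty pairwise disjoint compact subsets C_1, …, C_I of H, and let f : H → ℝ be a differentiable function satisfying the Kurdyka–Łojasiewicz property on C. Suppose f is constant on each C_i with value f_{C_i}. Then there exist ε > 0, ζ > 0 and φ ∈ Φ_ζ such that for every i ∈ {1, …, I} and every x ∈ H with dist(x, C) < ε and 0 < f(x) − f_{C_i} < ζ, one has ‖∇f(x)‖ · φ'(f(x) − f_{C_i}) ≥ 1. -/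
open Filter Topology

/-- `φ ∈ Φ_ζ` for a finite `ζ > 0`: `φ` is concave and non-negative on `[0, ζ)`,
`φ 0 = 0`, `φ` is continuous at `0` (within the domain), continuously differentiable
on `(0, ζ)`, and `φ' > 0` on `(0, ζ)`. -/
def IsPhi (ζ : ℝ) (φ : ℝ → ℝ) : Prop :=
  ConcaveOn ℝ (Set.Ico 0 ζ) φ ∧
  (∀ s ∈ Set.Ico (0:ℝ) ζ, 0 ≤ φ s) ∧
  φ 0 = 0 ∧
  ContinuousWithinAt φ (Set.Ico 0 ζ) 0 ∧
  (∀ s ∈ Set.Ioo (0:ℝ) ζ, HasDerivAt φ (deriv φ s) s) ∧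
  ContinuousOn (deriv φ) (Set.Ioo 0 ζ) ∧
  (∀ s ∈ Set.Ioo (0:ℝ) ζ, 0 < deriv φ s)

/-- The Kurdyka–Łojasiewicz property of a differentiable function `f` on a set `E`. -/
def HasKLOn {H : Type*} [NormedAddCommGroup H] [InnerProductSpace ℝ H]
    [FiniteDimensional ℝ H] (f : H → ℝ) (E : Set H) : Prop :=
  ∀ x₀ ∈ E, ∃ V ∈ 𝓝 x₀, ∃ ζ > (0:ℝ), ∃ φ : ℝ → ℝ, IsPhi ζ φ ∧
    ∀ x ∈ V, 0 < f x - f x₀ → f x - f x₀ < ζ →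
      1 ≤ ‖gradient f x‖ * deriv φ (f x - f x₀)

/-- A finite sum of concave functions is concave. -/
lemma concaveOn_finset_sum {ι : Type*} (t : Finset ι) {s : Set ℝ} (hs : Convex ℝ s)
    {g : ι → ℝ → ℝ} (h : ∀ k ∈ t, ConcaveOn ℝ s (g k)) :
    ConcaveOn ℝ s (fun x => ∑ k ∈ t, g k x) := by
  classical
  induction t using Finset.induction_on with
  | empty => simpa using concaveOn_const (0:ℝ) hs
  | @insert a u hau ih =>
    simp only [Finset.sum_insert hau]
    exact (h a (Finset.mem_insert_self _ _)).add
      (ih fun k hk => h k (Finset.mem_insert_of_mem hk))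

/-- **extended uniformized KL property.** If `C = ⋃ i, C i` is a finite union
of non-empty pairwise disjoint compact sets, `f` is differentiable, satisfies the KL property
on `C`, and is constant on each `C i` with value `fC i`, then there are uniform `ε > 0`,
`ζ > 0` and `φ ∈ Φ_ζ` such that the KL inequality holds near `C` relative to each value
`fC i`. -/
theorem extended_uniformized_KL
    {H : Type*} [NormedAddCommGroup H] [InnerProductSpace ℝ H] [FiniteDimensional ℝ H]
    (I : ℕ) (hI : 1 ≤ I) (C : Fin I → Set H)
    (hC_ne : ∀ i, (C i).Nonempty)
    (hC_compact : ∀ i, IsCompact (C i))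
    (hC_disj : Pairwise (Function.onFun Disjoint C))
    (f : H → ℝ) (hf : Differentiable ℝ f)
    (hKL : HasKLOn f (⋃ i, C i))
    (fC : Fin I → ℝ) (hconst : ∀ i, ∀ x ∈ C i, f x = fC i) :
    ∃ ε > (0:ℝ), ∃ ζ > (0:ℝ), ∃ φ : ℝ → ℝ, IsPhi ζ φ ∧
      ∀ (i : Fin I) (x : H), Metric.infDist x (⋃ j, C j) < ε →
        0 < f x - fC i → f x - fC i < ζ →
        1 ≤ ‖gradient f x‖ * deriv φ (f x - fC i) := by
  classical
  set Cu : Set H := ⋃ i, C i with hCu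
  have hCu_compact : IsCompact Cu := isCompact_iUnion hC_compact
  have hCu_ne : Cu.Nonempty := by
    obtain ⟨x, hx⟩ := hC_ne ⟨0, hI⟩
    exact ⟨x, Set.mem_iUnion.2 ⟨⟨0, hI⟩, hx⟩⟩
  -- the minimal gap between distinct values of `fC` (or `1` if all values coincide)
  set T : Finset ℝ := insert 1 (((Finset.univ : Finset (Fin I × Fin I)).filter
      (fun p => fC p.1 ≠ fC p.2)).image (fun p => |fC p.1 - fC p.2|)) with hT
  have hT_ne : T.Nonempty := ⟨1, Finset.mem_insert_self _ _⟩
  set Δ : ℝ := T.min' hT_ne with hΔdef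
  have hΔpos : 0 < Δ := by
    have hmem := T.min'_mem hT_ne
    rw [← hΔdef] at hmem
    rcases Finset.mem_insert.1 hmem with h | h
    · rw [h]; norm_num
    · obtain ⟨p, hp, hpe⟩ := Finset.mem_image.1 h
      have hne := (Finset.mem_filter.1 hp).2
      rw [← hpe]
      exact abs_pos.2 (sub_ne_zero.2 hne)
  have hΔle : ∀ i j : Fin I, fC i ≠ fC j → Δ ≤ |fC i - fC j| := by
    intro i j hij
    exact Finset.min'_le _ _ (Finset.mem_insert_of_mem (Finset.mem_image.2
      ⟨(i, j), Finset.mem_filter.2 ⟨Finset.mem_univ _, hij⟩, rfl⟩))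
  -- per-point KL data (extended to all of `H` by classical junk values)
  have key : ∀ x₀ : H, ∃ (V : Set H) (ζ₀ : ℝ) (φ₀ : ℝ → ℝ) (i₀ : Fin I) (r : ℝ),
      x₀ ∈ Cu → (0 < r ∧ Metric.ball x₀ r ⊆ V ∧
        (∀ y ∈ Metric.ball x₀ r, |f y - f x₀| < Δ / 2) ∧ f x₀ = fC i₀ ∧ 0 < ζ₀ ∧
        IsPhi ζ₀ φ₀ ∧
        ∀ x ∈ V, 0 < f x - f x₀ → f x - f x₀ < ζ₀ →
          1 ≤ ‖gradient f x‖ * deriv φ₀ (f x - f x₀)) := by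
    intro x₀
    by_cases hx₀ : x₀ ∈ Cu
    · obtain ⟨V, hV, ζ₀, hζ₀, φ₀, hφ₀, hineq⟩ := hKL x₀ hx₀
      obtain ⟨i₀, hi₀⟩ := Set.mem_iUnion.1 hx₀
      obtain ⟨r₁, hr₁, hball₁⟩ := Metric.mem_nhds_iff.1 hV
      obtain ⟨r₂, hr₂, hball₂⟩ := Metric.continuousAt_iff.1 (hf x₀).continuousAt
        (Δ / 2) (by linarith)
      refine ⟨V, ζ₀, φ₀, i₀, min r₁ r₂, fun _ =>
        ⟨lt_min hr₁ hr₂, ?_, ?_, hconst i₀ x₀ hi₀, hζ₀, hφ₀, hineq⟩⟩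
      · exact fun y hy =>
          hball₁ (Metric.mem_ball.2 (lt_of_lt_of_le (Metric.mem_ball.1 hy) (min_le_left _ _)))
      · intro y hy
        have h2 : dist y x₀ < r₂ := lt_of_lt_of_le (Metric.mem_ball.1 hy) (min_le_right _ _)
        have := hball₂ h2
        rwa [Real.dist_eq] at this
    · exact ⟨Set.univ, 1, id, ⟨0, hI⟩, 1, fun h => absurd h hx₀⟩
  choose V ζf φf idx rf hkey using key
  -- finite subcover of `Cu` by the balls
  obtain ⟨t, ht_sub, ht_cover⟩ := hCu_compact.elim_nhds_subcover
    (fun x => Metric.ball x (rf x)) (fun x hx => Metric.ball_mem_nhds x (hkey x hx).1)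
  have ht_ne : t.Nonempty := by
    obtain ⟨c, hc⟩ := hCu_ne
    obtain ⟨k, hk, _⟩ := Set.mem_iUnion₂.1 (ht_cover hc)
    exact ⟨k, hk⟩
  obtain ⟨ε, hε, hthick⟩ := hCu_compact.exists_thickening_subset_open
    (isOpen_biUnion fun k _ => Metric.isOpen_ball) ht_cover
  have hIsPhi : ∀ k ∈ t, IsPhi (ζf k) (φf k) := fun k hk => (hkey k (ht_sub k hk)).2.2.2.2.2.1
  have hζf_pos : ∀ k ∈ t, 0 < ζf k := fun k hk => (hkey k (ht_sub k hk)).2.2.2.2.1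
  set ζ : ℝ := min (Δ / 2) (t.inf' ht_ne ζf) with hζdef
  have hζ_pos : 0 < ζ :=
    lt_min (by linarith) ((Finset.lt_inf'_iff _).2 fun k hk => hζf_pos k hk)
  have hζ_le : ∀ k ∈ t, ζ ≤ ζf k :=
    fun k hk => (min_le_right _ _).trans (Finset.inf'_le _ hk)
  have hζΔ : ζ ≤ Δ / 2 := min_le_left _ _
  have hIoo : ∀ k ∈ t, Set.Ioo (0:ℝ) ζ ⊆ Set.Ioo 0 (ζf k) :=
    fun k hk => Set.Ioo_subset_Ioo_right (hζ_le k hk)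
  set φ : ℝ → ℝ := fun s => ∑ k ∈ t, φf k s with hφdef
  -- derivative of the sum
  have hds : ∀ s ∈ Set.Ioo (0:ℝ) ζ, HasDerivAt φ (∑ k ∈ t, deriv (φf k) s) s := by
    intro s hs
    exact HasDerivAt.fun_sum fun k hk => (hIsPhi k hk).2.2.2.2.1 s (hIoo k hk hs)
  have hderiv_eq : ∀ s ∈ Set.Ioo (0:ℝ) ζ, deriv φ s = ∑ k ∈ t, deriv (φf k) s :=
    fun s hs => (hds s hs).deriv
  have hderiv_pos : ∀ s ∈ Set.Ioo (0:ℝ) ζ, ∀ k ∈ t, 0 < deriv (φf k) s :=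
    fun s hs k hk => (hIsPhi k hk).2.2.2.2.2.2 s (hIoo k hk hs)
  refine ⟨ε, hε, ζ, hζ_pos, φ, ⟨?_, ?_, ?_, ?_, ?_, ?_, ?_⟩, ?_⟩
  · -- concave
    exact concaveOn_finset_sum t (convex_Ico _ _) fun k hk =>
      ((hIsPhi k hk).1).subset (Set.Ico_subset_Ico_right (hζ_le k hk)) (convex_Ico _ _)
  · -- nonneg
    intro s hs
    exact Finset.sum_nonneg fun k hk =>
      (hIsPhi k hk).2.1 s (Set.Ico_subset_Ico_right (hζ_le k hk) hs)
  · -- φ 0 = 0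
    simp only [hφdef]
    exact Finset.sum_eq_zero fun k hk => (hIsPhi k hk).2.2.1
  · -- continuity at 0 within
    have h0 : φ 0 = ∑ k ∈ t, φf k 0 := rfl
    have : Filter.Tendsto φ (nhdsWithin 0 (Set.Ico 0 ζ)) (nhds (∑ k ∈ t, φf k 0)) := by
      apply tendsto_finset_sum
      intro k hk
      exact ((hIsPhi k hk).2.2.2.1).mono (Set.Ico_subset_Ico_right (hζ_le k hk))
    rw [ContinuousWithinAt, h0]
    exact this
  · -- HasDerivAt
    intro s hs
    rw [hderiv_eq s hs]
    exact hds s hs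
  · -- continuity of deriv
    apply ContinuousOn.congr (f := fun s => ∑ k ∈ t, deriv (φf k) s)
    · exact continuousOn_finset_sum t fun k hk =>
        ((hIsPhi k hk).2.2.2.2.2.1).mono (hIoo k hk)
    · exact fun s hs => hderiv_eq s hs
  · -- positivity of deriv
    intro s hs
    rw [hderiv_eq s hs]
    exact Finset.sum_pos (fun k hk => hderiv_pos s hs k hk) ht_ne
  · -- the uniform KL inequality
    intro i x hx hpos hlt
    have hxthick : x ∈ Metric.thickening ε Cu :=
      (Metric.mem_thickening_iff_infDist_lt hCu_ne).2 hx
    obtain ⟨k, hk, hxball⟩ := Set.mem_iUnion₂.1 (hthick hxthick)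
    obtain ⟨hr_pos, hball_V, hclose, hval, hζk_pos, hphik, hineqk⟩ := hkey k (ht_sub k hk)
    -- show `f k = fC i`
    have hfk : f k = fC i := by
      by_contra hne
      rw [hval] at hne
      have hΔ' := hΔle i (idx k) fun h => hne h.symm
      have h1 : |fC i - f x| < ζ := by
        rw [abs_sub_comm, abs_of_pos hpos]; exact hlt
      have h2 : |f x - f k| < Δ / 2 := hclose x hxball
      have : |fC i - fC (idx k)| < Δ := by
        rw [← hval]
        calc |fC i - f k| ≤ |fC i - f x| + |f x - f k| := abs_sub_le _ _ _
          _ < ζ + Δ / 2 := by linarith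
          _ ≤ Δ := by linarith
      linarith
    have hsIoo : f x - fC i ∈ Set.Ioo (0:ℝ) ζ := ⟨hpos, hlt⟩
    have hmain : 1 ≤ ‖gradient f x‖ * deriv (φf k) (f x - fC i) := by
      have := hineqk x (hball_V hxball) (by rw [hfk]; exact hpos)
        (by rw [hfk]; exact hlt.trans_le (hζ_le k hk))
      rwa [hfk] at this
    have hsum_ge : deriv (φf k) (f x - fC i) ≤ deriv φ (f x - fC i) := by
      rw [hderiv_eq _ hsIoo]
      exact Finset.single_le_sum (fun j hj => (hderiv_pos _ hsIoo j hj).le) hk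
    calc (1:ℝ) ≤ ‖gradient f x‖ * deriv (φf k) (f x - fC i) := hmain
      _ ≤ ‖gradient f x‖ * deriv φ (f x - fC i) :=
        mul_le_mul_of_nonneg_left hsum_ge (norm_nonneg _)
end

section
/- Let (x_k) be a stochastic process on a probability space (Ω, 𝓕, P) with values in a finite-dimensional real Hilbert space H, and let F : H → ℝ satisfy Assumption 1, Assumption 2 and Assumption 3. Let Π = liminf_{k→∞} {ω ∈ Ω : F(x_k(ω)) > F∞(ω)}. Then there exist a bounded function φ ∈ Φ_{+∞} and a positive integer-valued random variable K, finite almost surely, such that almost surely on Π, for every k > K, ‖∇F(x_k)‖ · φ'(F(x_k) − F∞) ≥ 1. -/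
open MeasureTheory Filter Topology

/-- `φ ∈ Φ_{+∞}`. -/
def IsPhiTop (φ : ℝ → ℝ) : Prop :=
  ConcaveOn ℝ (Set.Ici 0) φ ∧
  (∀ s ∈ Set.Ici (0:ℝ), 0 ≤ φ s) ∧
  φ 0 = 0 ∧
  ContinuousWithinAt φ (Set.Ici 0) 0 ∧
  (∀ s ∈ Set.Ioi (0:ℝ), HasDerivAt φ (deriv φ s) s) ∧
  ContinuousOn (deriv φ) (Set.Ioi 0) ∧
  (∀ s ∈ Set.Ioi (0:ℝ), 0 < deriv φ s)

namespace Aux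


variable {ζ : ℝ} {φ : ℝ → ℝ}

lemma phi_continuousOn (h : IsPhi ζ φ) : ContinuousOn φ (Set.Ico 0 ζ) := by
  intro t ht
  rcases eq_or_lt_of_le ht.1 with h0 | h0
  · rw [← h0]; exact h.2.2.2.1
  · exact ((h.2.2.2.2.1 t ⟨h0, ht.2⟩).continuousAt).continuousWithinAt

lemma phi_monotoneOn (h : IsPhi ζ φ) : MonotoneOn φ (Set.Ico 0 ζ) := by
  intro a ha b hb hab
  rcases eq_or_lt_of_le hab with rfl | hab'
  · exact le_rfl
  rcases eq_or_lt_of_le ha.1 with h0 | h0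
  · rw [← h0, h.2.2.1]; exact h.2.1 b hb
  · have hsub : Set.Icc a b ⊆ Set.Ico 0 ζ := fun t ht => ⟨le_trans ha.1 ht.1, lt_of_le_of_lt ht.2 hb.2⟩
    have := strictMonoOn_of_deriv_pos (convex_Icc a b) ((phi_continuousOn h).mono hsub)
      (fun t ht => by
        rw [interior_Icc] at ht
        exact h.2.2.2.2.2.2 t ⟨lt_trans h0 ht.1, lt_trans ht.2 hb.2⟩)
    exact (this (Set.left_mem_Icc.2 hab) (Set.right_mem_Icc.2 hab) hab').le

lemma phi_deriv_antitoneOn (h : IsPhi ζ φ) : AntitoneOn (deriv φ) (Set.Ioo 0 ζ) :=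
  ConcaveOn.antitoneOn_deriv (h.1.subset Set.Ioo_subset_Ico_self (convex_Ioo 0 ζ))
    (fun t ht => (h.2.2.2.2.1 t ht).differentiableAt)

lemma phi_mul_deriv_le (h : IsPhi ζ φ) {t : ℝ} (ht : t ∈ Set.Ioo 0 ζ) :
    t * deriv φ t ≤ φ t := by
  have h0 : (0:ℝ) ∈ Set.Ico 0 ζ := ⟨le_refl _, lt_trans ht.1 ht.2⟩
  have hts : t ∈ Set.Ico 0 ζ := ⟨ht.1.le, ht.2⟩
  have := ConcaveOn.le_slope_of_hasDerivAt h.1 h0 hts ht.1 (h.2.2.2.2.1 t ht)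
  rw [slope_def_field, h.2.2.1] at this
  have ht0 : (0:ℝ) < t := ht.1
  calc t * deriv φ t ≤ t * ((φ t - 0) / (t - 0)) := by
        apply mul_le_mul_of_nonneg_left _ ht0.le
        simpa using this
    _ = φ t := by rw [sub_zero, sub_zero]; field_simp

/-- the compression map `s ↦ δ s / (s + δ)`. -/
noncomputable def hc (δ : ℝ) (s : ℝ) : ℝ := δ * s / (s + δ)

lemma hc_hasDerivAt {δ s : ℝ} (h : 0 < s + δ) :
    HasDerivAt (hc δ) (δ ^ 2 / (s + δ) ^ 2) s := by
  have h1 : HasDerivAt (fun s : ℝ => δ * s) δ s := by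
    simpa using (hasDerivAt_id s).const_mul δ
  have h2 : HasDerivAt (fun s : ℝ => s + δ) 1 s := by
    simpa using (hasDerivAt_id s).add_const δ
  have := h1.div h2 h.ne'
  exact this.congr_deriv (by ring)

lemma hc_zero (δ : ℝ) : hc δ 0 = 0 := by simp [hc]

lemma hc_nonneg {δ s : ℝ} (hδ : 0 < δ) (hs : 0 ≤ s) : 0 ≤ hc δ s := by
  apply div_nonneg (by positivity) (by linarith)

lemma hc_pos {δ s : ℝ} (hδ : 0 < δ) (hs : 0 < s) : 0 < hc δ s := by
  apply div_pos (by positivity) (by linarith)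

lemma hc_lt {δ s : ℝ} (hδ : 0 < δ) (hs : 0 ≤ s) : hc δ s < δ := by
  rw [hc, div_lt_iff₀ (by linarith)]
  nlinarith

lemma hc_le_self {δ s : ℝ} (hδ : 0 < δ) (hs : 0 ≤ s) : hc δ s ≤ s := by
  rw [hc, div_le_iff₀ (by linarith)]
  nlinarith

lemma hc_mono {δ : ℝ} (hδ : 0 < δ) {a s : ℝ} (ha : 0 ≤ a) (has : a ≤ s) :
    hc δ a ≤ hc δ s := by
  rw [hc, hc, div_le_div_iff₀ (by linarith) (by linarith)]
  nlinarith [mul_le_mul_of_nonneg_left has (mul_pos hδ hδ).le]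

lemma hc_continuousOn {δ : ℝ} (hδ : 0 < δ) : ContinuousOn (hc δ) (Set.Ici 0) :=
  fun s hs => ((hc_hasDerivAt (by simp only [Set.mem_Ici] at hs; linarith)).continuousAt).continuousWithinAt

lemma hc_concaveOn {δ : ℝ} (hδ : 0 < δ) : ConcaveOn ℝ (Set.Ici 0) (hc δ) := by
  apply AntitoneOn.concaveOn_of_deriv (convex_Ici 0) (hc_continuousOn hδ)
  · intro s hs
    rw [interior_Ici] at hs
    exact ((hc_hasDerivAt (by simp only [Set.mem_Ioi] at hs; linarith)).differentiableAt).differentiableWithinAt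
  · rw [interior_Ici]
    intro a ha b hb hab
    simp only [Set.mem_Ioi] at ha hb
    rw [(hc_hasDerivAt (s := a) (by linarith)).deriv,
        (hc_hasDerivAt (s := b) (by linarith)).deriv]
    apply div_le_div_of_nonneg_left (by positivity) (by positivity)
    nlinarith


noncomputable def psi (φ : ℝ → ℝ) (δ : ℝ) : ℝ → ℝ := fun s => 4 * φ (hc δ s)
noncomputable def psid (φ : ℝ → ℝ) (δ : ℝ) : ℝ → ℝ :=
  fun s => 4 * deriv φ (hc δ s) * (δ ^ 2 / (s + δ) ^ 2)

variable {ζ δ : ℝ} {φ : ℝ → ℝ}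

lemma hc_mem_Ico (h : IsPhi ζ φ) (hδ : 0 < δ) (hδζ : δ < ζ) {s : ℝ} (hs : 0 ≤ s) :
    hc δ s ∈ Set.Ico 0 ζ := ⟨hc_nonneg hδ hs, lt_trans (hc_lt hδ hs) hδζ⟩

lemma hc_mem_Ioo (h : IsPhi ζ φ) (hδ : 0 < δ) (hδζ : δ < ζ) {s : ℝ} (hs : 0 < s) :
    hc δ s ∈ Set.Ioo 0 ζ := ⟨hc_pos hδ hs, lt_trans (hc_lt hδ hs.le) hδζ⟩

lemma psi_nonneg (h : IsPhi ζ φ) (hδ : 0 < δ) (hδζ : δ < ζ) {s : ℝ} (hs : 0 ≤ s) :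
    0 ≤ psi φ δ s := by
  have := h.2.1 _ (hc_mem_Ico h hδ hδζ hs)
  unfold psi; linarith

lemma psi_le (h : IsPhi ζ φ) (hδ : 0 < δ) (hδζ : δ < ζ) {s : ℝ} (hs : 0 ≤ s) :
    psi φ δ s ≤ 4 * φ δ := by
  have := phi_monotoneOn h (hc_mem_Ico h hδ hδζ hs) ⟨hδ.le, hδζ⟩ (hc_lt hδ hs).le
  unfold psi; linarith

lemma psi_zero {ζ : ℝ} {φ : ℝ → ℝ} (h : IsPhi ζ φ) (δ : ℝ) : psi φ δ 0 = 0 := by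
  unfold psi; rw [hc_zero, h.2.2.1]; ring

lemma psi_hasDerivAt (h : IsPhi ζ φ) (hδ : 0 < δ) (hδζ : δ < ζ) {s : ℝ} (hs : 0 < s) :
    HasDerivAt (psi φ δ) (psid φ δ s) s := by
  have h1 := hc_hasDerivAt (δ := δ) (s := s) (by linarith)
  have h2 := h.2.2.2.2.1 _ (hc_mem_Ioo h hδ hδζ hs)
  have h3 := (h2.comp s h1).const_mul 4
  have he : psid φ δ s = 4 * (deriv φ (hc δ s) * (δ ^ 2 / (s + δ) ^ 2)) := by
    unfold psid; ring
  rw [he]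
  exact h3

lemma psid_nonneg (h : IsPhi ζ φ) (hδ : 0 < δ) (hδζ : δ < ζ) {s : ℝ} (hs : 0 < s) :
    0 ≤ psid φ δ s := by
  have := h.2.2.2.2.2.2 _ (hc_mem_Ioo h hδ hδζ hs)
  unfold psid; positivity

lemma psid_pos (h : IsPhi ζ φ) (hδ : 0 < δ) (hδζ : δ < ζ) {s : ℝ} (hs : 0 < s) :
    0 < psid φ δ s := by
  have := h.2.2.2.2.2.2 _ (hc_mem_Ioo h hδ hδζ hs)
  unfold psid; positivity

lemma psid_bound (h : IsPhi ζ φ) (hδ : 0 < δ) (hδζ : δ < ζ) {a s : ℝ} (ha : 0 < a)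
    (has : a ≤ s) : psid φ δ s ≤ 4 * φ δ * δ / a ^ 2 := by
  have hs : 0 < s := lt_of_lt_of_le ha has
  have hhc := hc_mem_Ioo h hδ hδζ hs
  have hd : deriv φ (hc δ s) ≤ φ δ / hc δ s := by
    rw [le_div_iff₀ (hc_pos hδ hs)]
    calc deriv φ (hc δ s) * hc δ s = hc δ s * deriv φ (hc δ s) := by ring
      _ ≤ φ (hc δ s) := phi_mul_deriv_le h hhc
      _ ≤ φ δ := phi_monotoneOn h (hc_mem_Ico h hδ hδζ hs.le) ⟨hδ.le, hδζ⟩ (hc_lt hδ hs.le).le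
  have hφδ : 0 ≤ φ δ := h.2.1 _ ⟨hδ.le, hδζ⟩
  calc psid φ δ s = 4 * deriv φ (hc δ s) * (δ ^ 2 / (s + δ) ^ 2) := rfl
    _ ≤ 4 * (φ δ / hc δ s) * (δ ^ 2 / (s + δ) ^ 2) := by
        apply mul_le_mul_of_nonneg_right (by linarith) (by positivity)
    _ = 4 * φ δ * (δ / (s * (s + δ))) := by
        unfold hc; field_simp
    _ ≤ 4 * φ δ * (δ / a ^ 2) := by
        apply mul_le_mul_of_nonneg_left _ (by linarith)
        apply div_le_div_of_nonneg_left hδ.le (by positivity)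
        nlinarith
    _ = 4 * φ δ * δ / a ^ 2 := by ring

lemma psi_continuousOn (h : IsPhi ζ φ) (hδ : 0 < δ) (hδζ : δ < ζ) :
    ContinuousOn (psi φ δ) (Set.Ici 0) := by
  apply continuousOn_const.mul
  exact (phi_continuousOn h).comp (hc_continuousOn hδ) (fun s hs => hc_mem_Ico h hδ hδζ hs)

lemma psid_continuousOn (h : IsPhi ζ φ) (hδ : 0 < δ) (hδζ : δ < ζ) :
    ContinuousOn (psid φ δ) (Set.Ioi 0) := by
  apply ContinuousOn.mul
  · apply continuousOn_const.mul
    apply (h.2.2.2.2.2.1).comp ((hc_continuousOn hδ).mono Set.Ioi_subset_Ici_self)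
    intro s hs
    exact hc_mem_Ioo h hδ hδζ hs
  · apply continuousOn_const.div
    · exact (continuousOn_id.add continuousOn_const).pow 2
    · intro s hs
      simp only [Set.mem_Ioi] at hs
      positivity

lemma psi_concaveOn (h : IsPhi ζ φ) (hδ : 0 < δ) (hδζ : δ < ζ) :
    ConcaveOn ℝ (Set.Ici 0) (psi φ δ) := by
  refine ⟨convex_Ici 0, fun p hp q hq a b ha hb hab => ?_⟩
  simp only [Set.mem_Ici] at hp hq
  simp only [smul_eq_mul]
  have h1 : a * hc δ p + b * hc δ q ≤ hc δ (a * p + b * q) := by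
    have := (hc_concaveOn hδ).2 hp hq ha hb hab
    simpa using this
  have hm1 := hc_mem_Ico h hδ hδζ hp
  have hm2 := hc_mem_Ico h hδ hδζ hq
  have hcomb : 0 ≤ a * p + b * q := by positivity
  have hm3 := hc_mem_Ico h hδ hδζ hcomb
  have hmc : a * hc δ p + b * hc δ q ∈ Set.Ico 0 ζ := by
    constructor
    · have := hc_nonneg hδ hp; have := hc_nonneg hδ hq; positivity
    · have e1 : a * hc δ p ≤ a * δ := mul_le_mul_of_nonneg_left (hc_lt hδ hp).le ha
      have e2 : b * hc δ q ≤ b * δ := mul_le_mul_of_nonneg_left (hc_lt hδ hq).le hb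
      nlinarith
  have hφc : a * φ (hc δ p) + b * φ (hc δ q) ≤ φ (a * hc δ p + b * hc δ q) := by
    have := h.1.2 hm1 hm2 ha hb hab
    simpa using this
  have hφm : φ (a * hc δ p + b * hc δ q) ≤ φ (hc δ (a * p + b * q)) :=
    phi_monotoneOn h hmc hm3 h1
  simp only [psi]
  linarith

lemma psid_lower (h : IsPhi ζ φ) (hδ : 0 < δ) (hδζ : δ < ζ) {s : ℝ} (hs : 0 < s)
    (hsδ : s < δ) : deriv φ s ≤ psid φ δ s := by
  have hmem : s ∈ Set.Ioo 0 ζ := ⟨hs, lt_trans hsδ hδζ⟩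
  have h1 : deriv φ s ≤ deriv φ (hc δ s) :=
    phi_deriv_antitoneOn h (hc_mem_Ioo h hδ hδζ hs) hmem (hc_le_self hδ hs.le)
  have h2 : (1:ℝ)/4 ≤ δ ^ 2 / (s + δ) ^ 2 := by
    rw [le_div_iff₀ (by positivity)]
    nlinarith
  have h3 : 0 < deriv φ s := h.2.2.2.2.2.2 _ hmem
  have h4 : 0 ≤ deriv φ (hc δ s) := (h.2.2.2.2.2.2 _ (hc_mem_Ioo h hδ hδζ hs)).le
  unfold psid
  nlinarith

lemma master_phi (ζf : ℕ → ℝ) (φf : ℕ → ℝ → ℝ) (hζ : ∀ m, 0 < ζf m)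
    (hφ : ∀ m, IsPhi (ζf m) (φf m)) :
    ∃ Φ : ℝ → ℝ, IsPhiTop Φ ∧ (∀ s ∈ Set.Ici (0:ℝ), Φ s ≤ 2) ∧
      ∀ m, ∃ τ > (0:ℝ), ∀ s, 0 < s → s < τ → deriv (φf m) s ≤ deriv Φ s := by
  have hδex : ∀ m, ∃ δ : ℝ, 0 < δ ∧ δ < ζf m ∧ δ ≤ 1 ∧ 4 * φf m δ ≤ (1/2) ^ m := by
    intro m
    have hcw : ContinuousWithinAt (φf m) (Set.Ico 0 (ζf m)) 0 := (hφ m).2.2.2.1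
    have htd : Tendsto (φf m) (𝓝[Set.Ico 0 (ζf m)] 0) (𝓝 0) := by
      have := hcw.tendsto; rwa [(hφ m).2.2.1] at this
    have hpos : (0:ℝ) < (1/2) ^ m / 8 := by positivity
    have hev : ∀ᶠ t in 𝓝[Set.Ico 0 (ζf m)] 0, φf m t < (1/2) ^ m / 8 :=
      htd.eventually_lt_const hpos
    rw [eventually_nhdsWithin_iff, Metric.eventually_nhds_iff] at hev
    obtain ⟨ε, hε, hball⟩ := hev
    have hζm := hζ m
    refine ⟨min (ε/2) (min (ζf m / 2) 1), by positivity, ?_, ?_, ?_⟩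
    · calc min (ε/2) (min (ζf m / 2) 1) ≤ min (ζf m / 2) 1 := min_le_right _ _
        _ ≤ ζf m / 2 := min_le_left _ _
        _ < ζf m := by linarith
    · exact le_trans (min_le_right _ _) (min_le_right _ _)
    · have hmem : min (ε/2) (min (ζf m / 2) 1) ∈ Set.Ico 0 (ζf m) := by
        constructor
        · positivity
        · calc min (ε/2) (min (ζf m / 2) 1) ≤ min (ζf m / 2) 1 := min_le_right _ _
            _ ≤ ζf m / 2 := min_le_left _ _
            _ < ζf m := by linarith
      have hdist : dist (min (ε/2) (min (ζf m / 2) 1)) 0 < ε := by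
        rw [Real.dist_eq, sub_zero, abs_of_nonneg (by positivity)]
        calc min (ε/2) (min (ζf m / 2) 1) ≤ ε/2 := min_le_left _ _
          _ < ε := by linarith
      have := hball hdist hmem
      linarith
  choose δ hδpos hδζ hδ1 hδsmall using hδex
  have hφδnn : ∀ m, 0 ≤ φf m (δ m) := fun m => (hφ m).2.1 _ ⟨(hδpos m).le, hδζ m⟩
  have hΨnn : ∀ m s, 0 ≤ s → 0 ≤ psi (φf m) (δ m) s :=
    fun m s hs => psi_nonneg (hφ m) (hδpos m) (hδζ m) hs
  have hΨle : ∀ m s, 0 ≤ s → psi (φf m) (δ m) s ≤ (1/2) ^ m := by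
    intro m s hs
    calc psi (φf m) (δ m) s ≤ 4 * φf m (δ m) := psi_le (hφ m) (hδpos m) (hδζ m) hs
      _ ≤ (1/2) ^ m := hδsmall m
  have hsummhalf : Summable (fun m : ℕ => (1/2 : ℝ) ^ m) := summable_geometric_two
  have hΨsumm : ∀ s, 0 ≤ s → Summable (fun m => psi (φf m) (δ m) s) := by
    intro s hs
    exact Summable.of_nonneg_of_le (fun m => hΨnn m s hs) (fun m => hΨle m s hs) hsummhalf
  have hΨdnn : ∀ m s, 0 < s → 0 ≤ psid (φf m) (δ m) s :=
    fun m s hs => psid_nonneg (hφ m) (hδpos m) (hδζ m) hs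
  have hΨdbd : ∀ m a s, 0 < a → a ≤ s → psid (φf m) (δ m) s ≤ (1/2) ^ m / a ^ 2 := by
    intro m a s ha has
    calc psid (φf m) (δ m) s ≤ 4 * φf m (δ m) * δ m / a ^ 2 :=
          psid_bound (hφ m) (hδpos m) (hδζ m) ha has
      _ ≤ (1/2) ^ m / a ^ 2 := by
          have h1 : 4 * φf m (δ m) * δ m ≤ (1/2) ^ m := by
            nlinarith [hφδnn m, hδsmall m, hδ1 m, hδpos m]
          gcongr
  have hΨdsumm : ∀ s, 0 < s → Summable (fun m => psid (φf m) (δ m) s) := by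
    intro s hs
    exact Summable.of_nonneg_of_le (fun m => hΨdnn m s hs)
      (fun m => hΨdbd m s s hs le_rfl) (hsummhalf.div_const _)
  have hΦd : ∀ s, 0 < s →
      HasDerivAt (fun z => ∑' m, psi (φf m) (δ m) z) (∑' m, psid (φf m) (δ m) s) s := by
    intro s hs
    have h2 : (0:ℝ) < s/2 := by linarith
    apply hasDerivAt_tsum_of_isPreconnected
      (u := fun m : ℕ => (1/2 : ℝ) ^ m / (s/2) ^ 2) (hsummhalf.div_const _)
      (isOpen_Ioi (a := s/2)) (convex_Ioi _).isPreconnected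
      (fun m y hy => psi_hasDerivAt (hφ m) (hδpos m) (hδζ m) (lt_trans h2 hy))
      (fun m y hy => ?_) (Set.mem_Ioi.mpr (by linarith : s/2 < s))
      (hΨsumm s hs.le) (Set.mem_Ioi.mpr (by linarith : s/2 < s))
    rw [Real.norm_of_nonneg (hΨdnn m y (lt_trans h2 hy))]
    exact hΨdbd m (s/2) y h2 (le_of_lt hy)
  have hΦderiv : ∀ s, 0 < s →
      deriv (fun z => ∑' m, psi (φf m) (δ m) z) s = ∑' m, psid (φf m) (δ m) s :=
    fun s hs => (hΦd s hs).deriv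
  refine ⟨fun z => ∑' m, psi (φf m) (δ m) z, ⟨?_, ?_, ?_, ?_, ?_, ?_, ?_⟩, ?_, ?_⟩
  · -- concavity
    refine ⟨convex_Ici 0, fun p hp q hq a b ha hb hab => ?_⟩
    have hp' : (0:ℝ) ≤ p := hp
    have hq' : (0:ℝ) ≤ q := hq
    simp only [smul_eq_mul]
    have hcomb : (0:ℝ) ≤ a * p + b * q := by positivity
    have hterm : ∀ m, a * psi (φf m) (δ m) p + b * psi (φf m) (δ m) q
        ≤ psi (φf m) (δ m) (a * p + b * q) := by
      intro m
      have := (psi_concaveOn (hφ m) (hδpos m) (hδζ m)).2 hp hq ha hb hab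
      simpa using this
    have hs1 : Summable fun m => a * psi (φf m) (δ m) p := (hΨsumm p hp').mul_left a
    have hs2 : Summable fun m => b * psi (φf m) (δ m) q := (hΨsumm q hq').mul_left b
    calc a * (∑' m, psi (φf m) (δ m) p) + b * (∑' m, psi (φf m) (δ m) q)
        = ∑' m, (a * psi (φf m) (δ m) p + b * psi (φf m) (δ m) q) := by
          rw [Summable.tsum_add hs1 hs2, tsum_mul_left, tsum_mul_left]
      _ ≤ ∑' m, psi (φf m) (δ m) (a * p + b * q) :=
          Summable.tsum_le_tsum hterm (hs1.add hs2) (hΨsumm _ hcomb)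
  · -- nonneg
    intro s hs
    exact tsum_nonneg (fun m => hΨnn m s hs)
  · -- zero
    calc (∑' m, psi (φf m) (δ m) 0) = ∑' _ : ℕ, (0:ℝ) :=
          tsum_congr (fun m => psi_zero (hφ m) (δ m))
      _ = 0 := tsum_zero
  · -- continuity at 0
    have hcontOn : ContinuousOn (fun z => ∑' m, psi (φf m) (δ m) z) (Set.Ici 0) := by
      apply continuousOn_tsum (fun m => psi_continuousOn (hφ m) (hδpos m) (hδζ m)) hsummhalf
      intro m s hs
      rw [Real.norm_of_nonneg (hΨnn m s hs)]
      exact hΨle m s hs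
    exact hcontOn 0 (Set.mem_Ici.mpr le_rfl)
  · -- hasDerivAt
    intro s hs
    rw [Set.mem_Ioi] at hs
    rw [hΦderiv s hs]
    exact hΦd s hs
  · -- continuity of deriv
    intro s hs
    rw [Set.mem_Ioi] at hs
    have h2 : (0:ℝ) < s/2 := by linarith
    have hg : ContinuousOn (fun z => ∑' m, psid (φf m) (δ m) z) (Set.Ioi (s/2)) := by
      apply continuousOn_tsum
        (fun m => (psid_continuousOn (hφ m) (hδpos m) (hδζ m)).mono
          (fun z hz => lt_trans h2 hz))
        (hsummhalf.div_const ((s/2) ^ 2))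
      intro m z hz
      rw [Real.norm_of_nonneg (hΨdnn m z (lt_trans h2 hz))]
      exact hΨdbd m (s/2) z h2 (le_of_lt hz)
    have hca : ContinuousAt (fun z => ∑' m, psid (φf m) (δ m) z) s :=
      hg.continuousAt (Ioi_mem_nhds (by linarith))
    have heq : (fun z => ∑' m, psid (φf m) (δ m) z)
        =ᶠ[𝓝 s] deriv (fun z => ∑' m, psi (φf m) (δ m) z) := by
      filter_upwards [Ioi_mem_nhds hs] with z hz
      exact (hΦderiv z hz).symm
    exact (hca.congr heq).continuousWithinAt
  · -- positivity of deriv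
    intro s hs
    rw [Set.mem_Ioi] at hs
    rw [hΦderiv s hs]
    exact Summable.tsum_pos (hΨdsumm s hs) (fun m => hΨdnn m s hs) 0
      (psid_pos (hφ 0) (hδpos 0) (hδζ 0) hs)
  · -- bound by 2
    intro s hs
    calc (∑' m, psi (φf m) (δ m) s) ≤ ∑' m : ℕ, (1/2 : ℝ) ^ m :=
          Summable.tsum_le_tsum (fun m => hΨle m s hs) (hΨsumm s hs) hsummhalf
      _ = 2 := tsum_geometric_two
  · -- domination
    intro m
    refine ⟨δ m, hδpos m, fun s hs0 hsτ => ?_⟩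
    have h1 : deriv (φf m) s ≤ psid (φf m) (δ m) s :=
      psid_lower (hφ m) (hδpos m) (hδζ m) hs0 hsτ
    have h2 : psid (φf m) (δ m) s ≤ ∑' k, psid (φf k) (δ k) s :=
      Summable.le_tsum (hΨdsumm s hs0) m (fun k _ => hΨdnn k s hs0)
    rw [hΦderiv s hs0]
    linarith


end Aux

open Aux in
/-- **a stochastic KL property.** Under Assumptions 1, 2 and 3, with
`Π = liminf_k {ω : F (x k ω) > Finf ω}`, there exist a bounded `φ ∈ Φ_{+∞}` and a positive
integer-valued random variable `K` (finite a.s.) such that almost surely on `Π`, for every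
`k > K`, `‖∇F (x k)‖ φ'(F (x k) - Finf) ≥ 1`. -/
theorem stochastic_KL_property
    {H : Type*} [NormedAddCommGroup H] [InnerProductSpace ℝ H] [FiniteDimensional ℝ H]
    [MeasurableSpace H] [BorelSpace H]
    {Ω : Type*} [MeasureSpace Ω] [IsProbabilityMeasure (volume : Measure Ω)]
    (F : H → ℝ)
    (hF_coercive : Tendsto F (Bornology.cobounded H) atTop)
    (hF_smooth : ContDiff ℝ 1 F)
    (x : ℕ → Ω → H) (hx_meas : ∀ k, Measurable (x k))
    (Finf : Ω → ℝ) (hFinf_meas : Measurable Finf)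
    (hFconv : ∀ᵐ ω, Tendsto (fun k => F (x k ω)) atTop (𝓝 (Finf ω)))
    (hgrad : ∀ᵐ ω, Tendsto (fun k => gradient F (x k ω)) atTop (𝓝 (0 : H)))
    (hKL : HasKLOn F {y : H | gradient F y = 0})
    (I : ℕ) (hI : 1 ≤ I) (C : Fin I → Set H)
    (hC_ne : ∀ i, (C i).Nonempty)
    (hC_compact : ∀ i, IsCompact (C i))
    (hC_disj : Pairwise (Function.onFun Disjoint C))
    (hzer : {y : H | gradient F y = 0} = ⋃ i, C i) :
    ∃ φ : ℝ → ℝ, IsPhiTop φ ∧ (∃ M : ℝ, ∀ s ∈ Set.Ici (0:ℝ), φ s ≤ M) ∧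
      ∃ K : Ω → ℕ, Measurable K ∧ (∀ ω, 1 ≤ K ω) ∧
        ∀ᵐ ω, ω ∈ Filter.liminf (fun k => {ω' : Ω | Finf ω' < F (x k ω')}) atTop →
          ∀ k, K ω < k →
            1 ≤ ‖gradient F (x k ω)‖ * deriv φ (F (x k ω) - Finf ω) := by
  classical
  set Z : Set H := {y : H | gradient F y = 0} with hZdef
  have hgc : Continuous (gradient F) := by
    have h1 : Continuous (fderiv ℝ F) := hF_smooth.continuous_fderiv one_ne_zero
    exact (InnerProductSpace.toDual ℝ H).symm.continuous.comp h1
  have hFc : Continuous F := hF_smooth.continuous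
  have hZcomp : IsCompact Z := by rw [hzer]; exact isCompact_iUnion hC_compact
  have hZne : Z.Nonempty := by
    rw [hzer]
    obtain ⟨z0, hz0⟩ := hC_ne ⟨0, hI⟩
    exact ⟨z0, Set.mem_iUnion.mpr ⟨⟨0, hI⟩, hz0⟩⟩
  -- KL packages around each critical point
  have hpack : ∀ z ∈ Z, ∃ (U : Set H) (ζ : ℝ) (φ : ℝ → ℝ),
      IsOpen U ∧ z ∈ U ∧ 0 < ζ ∧ IsPhi ζ φ ∧
      (∀ y ∈ U, 0 < F y - F z → F y - F z < ζ ∧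
        1 ≤ ‖gradient F y‖ * deriv φ (F y - F z)) ∧
      (∀ y ∈ U ∩ Z, F y ≤ F z) := by
    intro z hz
    obtain ⟨V, hV, ζ, hζ, φ, hφ, hKLz⟩ := hKL z hz
    refine ⟨interior V ∩ F ⁻¹' (Set.Iio (F z + ζ)), ζ, φ, ?_, ?_, hζ, hφ, ?_, ?_⟩
    · exact isOpen_interior.inter (isOpen_Iio.preimage hFc)
    · refine ⟨mem_interior_iff_mem_nhds.mpr hV, ?_⟩
      simp only [Set.mem_preimage, Set.mem_Iio]; linarith
    · intro y hy hpos
      have hlt : F y - F z < ζ := by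
        have := hy.2; simp only [Set.mem_preimage, Set.mem_Iio] at this; linarith
      exact ⟨hlt, hKLz y (interior_subset hy.1) hpos hlt⟩
    · intro y hy
      by_contra hgt
      push_neg at hgt
      have hpos : 0 < F y - F z := by linarith
      have hlt : F y - F z < ζ := by
        have := hy.1.2; simp only [Set.mem_preimage, Set.mem_Iio] at this; linarith
      have h1 := hKLz y (interior_subset hy.1.1) hpos hlt
      have h0 : gradient F y = 0 := hy.2
      rw [h0] at h1
      simp at h1
      linarith
  choose! U ζv φv hUopen hUmem hζpos hφphi hKLU hUmax using hpack
  -- countability of critical values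
  have hcount : (F '' Z).Countable := by
    obtain ⟨b, hbc, -, hbasis⟩ := TopologicalSpace.exists_countable_basis H
    have hex : ∀ v ∈ F '' Z, ∃ B, B ∈ b ∧ ∃ z, z ∈ Z ∧ F z = v ∧ z ∈ B ∧ B ⊆ U z := by
      intro v hv
      obtain ⟨z, hz, rfl⟩ := hv
      obtain ⟨B, hBb, hzB, hBU⟩ := hbasis.exists_subset_of_mem_open (hUmem z hz) (hUopen z hz)
      exact ⟨B, hBb, z, hz, rfl, hzB, hBU⟩
    choose! B hBb hwit using hex
    have hmaps : Set.MapsTo B (F '' Z) b := fun v hv => hBb v hv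
    have hinj : Set.InjOn B (F '' Z) := by
      intro v hv w hw he
      obtain ⟨zv, hzv, hFzv, hzvB, hBUv⟩ := hwit v hv
      obtain ⟨zw, hzw, hFzw, hzwB, hBUw⟩ := hwit w hw
      have h1 : F zv ≤ F zw := hUmax zw hzw zv ⟨hBUw (he ▸ hzvB), hzv⟩
      have h2 : F zw ≤ F zv := hUmax zv hzv zw ⟨hBUv (he.symm ▸ hzwB), hzw⟩
      rw [← hFzv, ← hFzw]; linarith
    exact hmaps.countable_of_injOn hinj hbc
  have hVne : (F '' Z).Nonempty := hZne.image F
  obtain ⟨v, hvrange⟩ := hcount.exists_eq_range hVne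
  -- finite subcovers at each level
  have hSn : ∀ n : ℕ, ∃ (J : ℕ) (w : ℕ → H),
      (∀ j, j < J → w j ∈ Z ∧ F (w j) = v n) ∧
      Z ∩ F ⁻¹' {v n} ⊆ ⋃ j ∈ Finset.range J, U (w j) := by
    intro n
    have hScomp : IsCompact (Z ∩ F ⁻¹' {v n}) :=
      hZcomp.inter_right (isClosed_singleton.preimage hFc)
    have hcov : Z ∩ F ⁻¹' {v n} ⊆ ⋃ z : ↥(Z ∩ F ⁻¹' {v n}), U ↑z :=
      fun y hy => Set.mem_iUnion.mpr ⟨⟨y, hy⟩, hUmem y hy.1⟩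
    obtain ⟨t, ht⟩ := hScomp.elim_finite_subcover (fun z : ↥(Z ∩ F ⁻¹' {v n}) => U ↑z)
      (fun z => hUopen ↑z z.2.1) hcov
    obtain ⟨z₀, hz₀⟩ := hZne
    set L := t.toList with hLdef
    refine ⟨L.length, fun j => if h : j < L.length then (L.get ⟨j, h⟩ : H) else z₀,
      ?_, ?_⟩
    · intro j hj
      dsimp only
      rw [dif_pos hj]
      exact ⟨(L.get ⟨j, hj⟩).2.1, (L.get ⟨j, hj⟩).2.2⟩
    · intro y hy
      have := ht hy
      rw [Set.mem_iUnion₂] at this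
      obtain ⟨z, hzt, hyU⟩ := this
      have hzL : z ∈ L := by rw [hLdef]; exact Finset.mem_toList.mpr hzt
      obtain ⟨⟨j, hj⟩, hget⟩ := List.mem_iff_get.mp hzL
      rw [Set.mem_iUnion₂]
      refine ⟨j, Finset.mem_range.mpr hj, ?_⟩
      dsimp only
      rw [dif_pos hj, hget]
      exact hyU
  choose J w hw hcov using hSn
  have hJpos : ∀ n, 0 < J n := by
    intro n
    have hvn : v n ∈ F '' Z := by rw [hvrange]; exact ⟨n, rfl⟩
    obtain ⟨z, hz, hFz⟩ := hvn
    have hzS : z ∈ Z ∩ F ⁻¹' {v n} := ⟨hz, by simp [hFz]⟩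
    have := hcov n hzS
    rw [Set.mem_iUnion₂] at this
    obtain ⟨j, hj, -⟩ := this
    exact lt_of_le_of_lt (Nat.zero_le j) (Finset.mem_range.mp hj)
  -- flatten in a single countable family
  set nidx : ℕ → ℕ := fun m => m.unpair.1 with hnidxdef
  set jidx : ℕ → ℕ := fun m => if m.unpair.2 < J m.unpair.1 then m.unpair.2 else 0
    with hjidxdef
  have hjidx : ∀ m, jidx m < J (nidx m) := by
    intro m
    rw [hjidxdef, hnidxdef]
    dsimp only
    split
    · assumption
    · exact hJpos _
  have hwmem : ∀ m, w (nidx m) (jidx m) ∈ Z := fun m => (hw _ _ (hjidx m)).1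
  set ζf : ℕ → ℝ := fun m => ζv (w (nidx m) (jidx m)) with hζfdef
  set φf : ℕ → ℝ → ℝ := fun m => φv (w (nidx m) (jidx m)) with hφfdef
  obtain ⟨Φ, hΦtop, hΦbd, hΦdom⟩ := master_phi ζf φf
    (fun m => hζpos _ (hwmem m)) (fun m => hφphi _ (hwmem m))
  choose τ hτpos hτdom using hΦdom
  -- per-level thresholds
  have hrangene : ∀ n, (Finset.range (J n)).Nonempty :=
    fun n => ⟨0, Finset.mem_range.mpr (hJpos n)⟩
  set θ : ℕ → ℝ := fun n => (Finset.range (J n)).inf' (hrangene n)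
    (fun j => τ (Nat.pair n j)) with hθdef
  have hθpos : ∀ n, 0 < θ n := by
    intro n
    rw [hθdef]
    rw [Finset.lt_inf'_iff]
    exact fun j _ => hτpos _
  have hθle : ∀ n j, j < J n → θ n ≤ τ (Nat.pair n j) := by
    intro n j hj
    rw [hθdef]
    exact Finset.inf'_le _ (Finset.mem_range.mpr hj)
  -- the key deterministic inequality
  have hkey : ∀ n, ∀ y : H, y ∈ (⋃ j ∈ Finset.range (J n), U (w n j)) →
      0 < F y - v n → F y - v n < θ n →
      1 ≤ ‖gradient F y‖ * deriv Φ (F y - v n) := by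
    intro n y hy hpos hlt
    rw [Set.mem_iUnion₂] at hy
    obtain ⟨j, hjr, hyU⟩ := hy
    have hj : j < J n := Finset.mem_range.mp hjr
    obtain ⟨hwZ, hwF⟩ := hw n j hj
    have hKLj := hKLU (w n j) hwZ y hyU (by rw [hwF]; exact hpos)
    rw [hwF] at hKLj
    have hφeq : φf (Nat.pair n j) = φv (w n j) := by
      rw [hφfdef]
      simp only [hnidxdef, hjidxdef, Nat.unpair_pair, hj, if_pos]
    have hub : deriv (φv (w n j)) (F y - v n) ≤ deriv Φ (F y - v n) := by
      rw [← hφeq]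
      exact hτdom (Nat.pair n j) _ hpos (lt_of_lt_of_le hlt (hθle n j hj))
    calc (1:ℝ) ≤ ‖gradient F y‖ * deriv (φv (w n j)) (F y - v n) := hKLj.2
      _ ≤ ‖gradient F y‖ * deriv Φ (F y - v n) :=
          mul_le_mul_of_nonneg_left hub (norm_nonneg _)
  -- the tail inequality, almost everywhere on Π
  have hae : ∀ᵐ ω, ω ∈ Filter.liminf (fun k => {ω' : Ω | Finf ω' < F (x k ω')}) atTop →
      ∃ N, ∀ k, N < k → 1 ≤ ‖gradient F (x k ω)‖ * deriv Φ (F (x k ω) - Finf ω) := by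
    filter_upwards [hFconv, hgrad] with ω h1 h2 hPi
    have hev : ∀ᶠ k in atTop, Finf ω < F (x k ω) := by
      have := (Filter.mem_liminf_iff_eventually_mem).mp hPi
      filter_upwards [this] with k hk
      exact hk
    obtain ⟨Bd, hBd⟩ := h1.isBoundedUnder_le.bddAbove_range
    have hBd' : ∀ k, F (x k ω) ≤ Bd := fun k => hBd ⟨k, rfl⟩
    have hSb : Bornology.IsBounded {y : H | F y ≤ Bd} := by
      have hmem : {y : H | Bd + 1 ≤ F y} ∈ Bornology.cobounded H :=
        hF_coercive (eventually_ge_atTop (Bd + 1))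
      have h3 : Bornology.IsBounded {y : H | Bd + 1 ≤ F y}ᶜ :=
        Bornology.isBounded_compl_iff.mpr (Bornology.isCobounded_def.mpr hmem)
      apply h3.subset
      intro y hy
      simp only [Set.mem_compl_iff, Set.mem_setOf_eq] at *
      linarith
    have hxk_mem : ∀ k, x k ω ∈ {y : H | F y ≤ Bd} := fun k => hBd' k
    -- limit of any convergent subsequence is critical with value Finf ω
    have hsublim : ∀ (σ : ℕ → ℕ), StrictMono σ → ∀ a : H,
        Tendsto ((fun k => x k ω) ∘ σ) atTop (𝓝 a) → a ∈ Z ∧ F a = Finf ω := by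
      intro σ hσ a hconv
      constructor
      · have t1 : Tendsto (fun k => gradient F (x (σ k) ω)) atTop (𝓝 (gradient F a)) :=
          (hgc.tendsto a).comp hconv
        have t2 : Tendsto (fun k => gradient F (x (σ k) ω)) atTop (𝓝 (0:H)) :=
          h2.comp hσ.tendsto_atTop
        exact tendsto_nhds_unique t1 t2
      · have t1 : Tendsto (fun k => F (x (σ k) ω)) atTop (𝓝 (F a)) :=
          (hFc.tendsto a).comp hconv
        have t2 : Tendsto (fun k => F (x (σ k) ω)) atTop (𝓝 (Finf ω)) :=
          h1.comp hσ.tendsto_atTop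
        exact tendsto_nhds_unique t1 t2
    have hcrit : Finf ω ∈ F '' Z := by
      obtain ⟨a, ha, σ, hσ, hconv⟩ := tendsto_subseq_of_bounded hSb hxk_mem
      obtain ⟨haZ, haF⟩ := hsublim σ hσ a hconv
      exact ⟨a, haZ, haF⟩
    obtain ⟨n, hn⟩ : ∃ n, v n = Finf ω := by
      rw [hvrange] at hcrit; exact hcrit
    have hUnopen : IsOpen (⋃ j ∈ Finset.range (J n), U (w n j)) :=
      isOpen_biUnion (fun j hj => hUopen _ (hw n j (Finset.mem_range.mp hj)).1)
    have hUncontain : ∀ᶠ k in atTop, x k ω ∈ ⋃ j ∈ Finset.range (J n), U (w n j) := by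
      by_contra hcon
      rw [Filter.not_eventually] at hcon
      have hfreq : ∃ᶠ k in atTop,
          x k ω ∈ ({y : H | F y ≤ Bd} ∩ (⋃ j ∈ Finset.range (J n), U (w n j))ᶜ) :=
        hcon.mono (fun k hk => ⟨hxk_mem k, hk⟩)
      obtain ⟨a, ha, σ, hσ, hconv⟩ :=
        tendsto_subseq_of_frequently_bounded (hSb.subset Set.inter_subset_left) hfreq
      have haUn : a ∉ ⋃ j ∈ Finset.range (J n), U (w n j) := by
        have h4 : a ∈ closure ((⋃ j ∈ Finset.range (J n), U (w n j))ᶜ) :=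
          closure_mono Set.inter_subset_right ha
        rwa [hUnopen.isClosed_compl.closure_eq] at h4
      obtain ⟨haZ, haF⟩ := hsublim σ hσ a hconv
      exact haUn (hcov n ⟨haZ, by simp [haF, hn]⟩)
    have hsmall : ∀ᶠ k in atTop, F (x k ω) - Finf ω < θ n := by
      have h5 : Tendsto (fun k => F (x k ω) - Finf ω) atTop (𝓝 0) := by
        simpa using h1.sub (tendsto_const_nhds : Tendsto (fun _ : ℕ => Finf ω) atTop (𝓝 (Finf ω)))
      exact h5.eventually_lt_const (hθpos n)
    have hall : ∀ᶠ k in atTop,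
        1 ≤ ‖gradient F (x k ω)‖ * deriv Φ (F (x k ω) - Finf ω) := by
      filter_upwards [hUncontain, hsmall, hev] with k hk1 hk2 hk3
      have hpos : 0 < F (x k ω) - Finf ω := by linarith
      have := hkey n (x k ω) hk1 (by rw [hn]; exact hpos) (by rw [hn]; exact hk2)
      rwa [hn] at this
    obtain ⟨N, hN⟩ := eventually_atTop.mp hall
    exact ⟨N, fun k hk => hN k hk.le⟩
  -- construct the random index K
  set p : Ω → ℕ → Prop := fun ω N =>
    (∀ k, N < k → 1 ≤ ‖gradient F (x k ω)‖ * deriv Φ (F (x k ω) - Finf ω)) ∨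
    ¬ (∃ M, ∀ k, M < k → 1 ≤ ‖gradient F (x k ω)‖ * deriv Φ (F (x k ω) - Finf ω))
    with hpdef
  have hp : ∀ ω, ∃ N, p ω N := by
    intro ω
    by_cases hA : ∃ M, ∀ k, M < k → 1 ≤ ‖gradient F (x k ω)‖ * deriv Φ (F (x k ω) - Finf ω)
    · obtain ⟨M, hM⟩ := hA
      exact ⟨M, Or.inl hM⟩
    · exact ⟨0, Or.inr hA⟩
  have hRmeas : ∀ k, MeasurableSet
      {ω | 1 ≤ ‖gradient F (x k ω)‖ * deriv Φ (F (x k ω) - Finf ω)} := by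
    intro k
    have hm : Measurable fun ω => ‖gradient F (x k ω)‖ * deriv Φ (F (x k ω) - Finf ω) := by
      apply Measurable.mul
      · exact (continuous_norm.comp hgc).measurable.comp (hx_meas k)
      · exact (measurable_deriv Φ).comp ((hFc.measurable.comp (hx_meas k)).sub hFinf_meas)
    exact measurableSet_le measurable_const hm
  have hPmeas : ∀ N, MeasurableSet
      {ω | ∀ k, N < k → 1 ≤ ‖gradient F (x k ω)‖ * deriv Φ (F (x k ω) - Finf ω)} := by
    intro N
    have : {ω | ∀ k, N < k → 1 ≤ ‖gradient F (x k ω)‖ * deriv Φ (F (x k ω) - Finf ω)}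
        = ⋂ k, ⋂ (_ : N < k), {ω | 1 ≤ ‖gradient F (x k ω)‖ * deriv Φ (F (x k ω) - Finf ω)} := by
      ext ω; simp
    rw [this]
    exact MeasurableSet.iInter fun k => MeasurableSet.iInter fun _ => hRmeas k
  have hAmeas : MeasurableSet
      {ω | ∃ M, ∀ k, M < k → 1 ≤ ‖gradient F (x k ω)‖ * deriv Φ (F (x k ω) - Finf ω)} := by
    have : {ω | ∃ M, ∀ k, M < k → 1 ≤ ‖gradient F (x k ω)‖ * deriv Φ (F (x k ω) - Finf ω)}
        = ⋃ M, {ω | ∀ k, M < k → 1 ≤ ‖gradient F (x k ω)‖ * deriv Φ (F (x k ω) - Finf ω)} := by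
      ext ω; simp
    rw [this]
    exact MeasurableSet.iUnion hPmeas
  have hpmeas : ∀ N, MeasurableSet {ω | p ω N} := by
    intro N
    have : {ω | p ω N} =
        {ω | ∀ k, N < k → 1 ≤ ‖gradient F (x k ω)‖ * deriv Φ (F (x k ω) - Finf ω)} ∪
        {ω | ∃ M, ∀ k, M < k → 1 ≤ ‖gradient F (x k ω)‖ * deriv Φ (F (x k ω) - Finf ω)}ᶜ := by
      ext ω; simp only [hpdef, Set.mem_setOf_eq, Set.mem_union, Set.mem_compl_iff]
    rw [this]
    exact (hPmeas N).union hAmeas.compl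
  refine ⟨Φ, hΦtop, ⟨2, hΦbd⟩, fun ω => Nat.find (hp ω) + 1, ?_, fun ω => Nat.le_add_left 1 _, ?_⟩
  · have : Measurable fun ω => Nat.find (hp ω) := measurable_find hp hpmeas
    exact this.add_const 1
  · filter_upwards [hae] with ω hω hPi
    intro k hk
    have hA : ∃ M, ∀ k', M < k' →
        1 ≤ ‖gradient F (x k' ω)‖ * deriv Φ (F (x k' ω) - Finf ω) := hω hPi
    have hfind : (∀ k', Nat.find (hp ω) < k' →
          1 ≤ ‖gradient F (x k' ω)‖ * deriv Φ (F (x k' ω) - Finf ω)) ∨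
        ¬ (∃ M, ∀ k', M < k' →
          1 ≤ ‖gradient F (x k' ω)‖ * deriv Φ (F (x k' ω) - Finf ω)) :=
      Nat.find_spec (hp ω)
    rcases hfind with htail | hbad
    · exact htail k (lt_trans (Nat.lt_succ_self _) hk)
    · exact absurd hA hbad
end

section
/- Let (x_k) be a stochastic process with values in a finite-dimensional real Hilbert space H and let F : H → ℝ satisfy Assumption 1. If Assumption 4 holds, then Assumption 2 holds: (F(x_k)) converges almost surely to an almost surely finite random variable F∞, and (∇F(x_k)) converges almost surely to 0; moreover ∑_k v_k ‖∇F(x_k)‖² < +∞ almost surely. -/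
open MeasureTheory Filter Topology

namespace RSAux

variable {Ω : Type*} {m0 : MeasurableSpace Ω}

lemma robbins_siegmund (μ : Measure Ω) [IsProbabilityMeasure μ]
    (𝓕 : Filtration ℕ m0)
    (Y Z w : ℕ → Ω → ℝ) (u : ℕ → ℝ)
    (hY_nonneg : ∀ k ω, 0 ≤ Y k ω)
    (hZ_nonneg : ∀ k ω, 0 ≤ Z k ω)
    (hw_nonneg : ∀ k ω, 0 ≤ w k ω)
    (hY_adapted : ∀ k, StronglyMeasurable[𝓕 k] (Y k))
    (hZ_adapted : ∀ k, StronglyMeasurable[𝓕 k] (Z k))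
    (hw_adapted : ∀ k, StronglyMeasurable[𝓕 k] (w k))
    (hY_int : ∀ k, Integrable (Y k) μ)
    (hZ_int : ∀ k, Integrable (Z k) μ)
    (hw_int : ∀ k, Integrable (w k) μ)
    (hu : ∀ k, 0 ≤ u k) (hu_sum : Summable u)
    (hw_sum : ∀ᵐ ω ∂μ, Summable fun k => w k ω)
    (hdescent : ∀ k, ∀ᵐ ω ∂μ,
      (μ[Y (k + 1)|𝓕 k]) ω ≤ (1 + u k) * Y k ω - Z k ω + w k ω) :
    ∀ᵐ ω ∂μ, (∃ c, Tendsto (fun k => Y k ω) atTop (𝓝 c)) ∧ Summable (fun k => Z k ω) := by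
  classical
  -- the compounding product
  set P : ℕ → ℝ := fun k => ∏ j ∈ Finset.range k, (1 + u j) with hPdef
  have hP1 : ∀ k, 1 ≤ P k := by
    intro k
    simp only [hPdef]
    have h := Finset.prod_le_prod (s := Finset.range k) (f := fun _ => (1:ℝ))
      (g := fun j => 1 + u j) (fun j _ => zero_le_one) (fun j _ => by show (1:ℝ) ≤ 1 + u j; linarith [hu j])
    simpa using h
  have hP0 : ∀ k, 0 < P k := fun k => lt_of_lt_of_le one_pos (hP1 k)
  have hPsucc : ∀ k, P (k + 1) = P k * (1 + u k) := by
    intro k; simp only [hPdef]; exact Finset.prod_range_succ _ _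
  have hPmono : Monotone P := monotone_nat_of_le_succ fun k => by
    have := hP0 k; have := hu k
    rw [hPsucc k]; nlinarith
  set C : ℝ := Real.exp (∑' k, u k) with hCdef
  have hPC : ∀ k, P k ≤ C := by
    intro k
    simp only [hPdef]
    calc (∏ j ∈ Finset.range k, (1 + u j)) ≤ ∏ j ∈ Finset.range k, Real.exp (u j) :=
          Finset.prod_le_prod (fun j _ => by linarith [hu j])
            (fun j _ => by linarith [Real.add_one_le_exp (u j)])
      _ = Real.exp (∑ j ∈ Finset.range k, u j) := (Real.exp_sum _ _).symm
      _ ≤ C := Real.exp_le_exp.2 (Summable.sum_le_tsum _ (fun j _ => hu j) hu_sum)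
  have hPtend : Tendsto P atTop (𝓝 (⨆ k, P k)) :=
    tendsto_atTop_ciSup hPmono ⟨C, fun x ⟨k, hk⟩ => hk ▸ hPC k⟩
  -- the compensated process
  set M : ℕ → Ω → ℝ := fun k ω => (P k)⁻¹ * Y k ω +
      ∑ j ∈ Finset.range k, ((P (j + 1))⁻¹ * Z j ω - w j ω) with hMdef
  have hM_adapted : StronglyAdapted 𝓕 M := by
    intro k
    simp only [hMdef]
    refine ((hY_adapted k).const_mul _).add ?_
    refine Finset.stronglyMeasurable_fun_sum _ fun j hj => ?_
    rw [Finset.mem_range] at hj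
    exact (((hZ_adapted j).mono (𝓕.mono hj.le)).const_mul _).sub
      ((hw_adapted j).mono (𝓕.mono hj.le))
  have hM_int : ∀ k, Integrable (M k) μ := by
    intro k
    simp only [hMdef]
    exact ((hY_int k).const_mul _).add
      (integrable_finset_sum _ fun j _ => ((hZ_int j).const_mul _).sub (hw_int j))
  have hM_super : Supermartingale M 𝓕 μ := by
    refine supermartingale_nat hM_adapted hM_int fun k => ?_
    set S : Ω → ℝ := fun ω => ∑ j ∈ Finset.range (k + 1), ((P (j + 1))⁻¹ * Z j ω - w j ω)
      with hSdef
    have hS_meas : StronglyMeasurable[𝓕 k] S := by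
      simp only [hSdef]
      refine Finset.stronglyMeasurable_fun_sum _ fun j hj => ?_
      rw [Finset.mem_range, Nat.lt_succ_iff] at hj
      exact (((hZ_adapted j).mono (𝓕.mono hj)).const_mul _).sub
        ((hw_adapted j).mono (𝓕.mono hj))
    have hS_int : Integrable S μ := by
      simp only [hSdef]
      exact integrable_finset_sum _ fun j _ => ((hZ_int j).const_mul _).sub (hw_int j)
    have hsplit : M (k + 1) = (P (k + 1))⁻¹ • Y (k + 1) + S := by
      funext ω
      simp [hMdef, hSdef, smul_eq_mul]
    have e1 : μ[M (k + 1)|𝓕 k]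
        =ᵐ[μ] μ[(P (k + 1))⁻¹ • Y (k + 1)|𝓕 k] + μ[S|𝓕 k] := by
      rw [hsplit]
      exact condExp_add ((hY_int (k + 1)).smul (P (k + 1))⁻¹) hS_int _
    have e2 : μ[(P (k + 1))⁻¹ • Y (k + 1)|𝓕 k]
        =ᵐ[μ] (P (k + 1))⁻¹ • μ[Y (k + 1)|𝓕 k] := condExp_smul _ _ _
    have e3 : μ[S|𝓕 k] = S := condExp_of_stronglyMeasurable (𝓕.le k) hS_meas hS_int
    have hkey : (P (k + 1))⁻¹ * (1 + u k) = (P k)⁻¹ := by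
      rw [hPsucc k, mul_inv, mul_assoc, inv_mul_cancel₀ (by linarith [hu k] : (1:ℝ) + u k ≠ 0),
        mul_one]
    filter_upwards [e1, e2, hdescent k] with ω h1 h2 hd
    have hPinv1 : (P (k + 1))⁻¹ ≤ 1 := by
      rw [inv_le_one_iff₀]; right; exact hP1 _
    have hPinv0 : (0:ℝ) ≤ (P (k + 1))⁻¹ := inv_nonneg.2 (hP0 _).le
    have hmul := mul_le_mul_of_nonneg_left hd hPinv0
    have hexp : (P (k + 1))⁻¹ * ((1 + u k) * Y k ω - Z k ω + w k ω)
        + ((P (k + 1))⁻¹ * Z k ω - w k ω)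
        = (P k)⁻¹ * Y k ω + ((P (k + 1))⁻¹ - 1) * w k ω := by
      have : (P (k + 1))⁻¹ * ((1 + u k) * Y k ω) = (P k)⁻¹ * Y k ω := by
        rw [← mul_assoc, hkey]
      nlinarith [this]
    have hle2 : ((P (k + 1))⁻¹ - 1) * w k ω ≤ 0 :=
      mul_nonpos_of_nonpos_of_nonneg (by linarith) (hw_nonneg k ω)
    have hMk : M k ω = (P k)⁻¹ * Y k ω
        + ∑ j ∈ Finset.range k, ((P (j + 1))⁻¹ * Z j ω - w j ω) := by simp [hMdef]
    have hSeval : S ω = ∑ j ∈ Finset.range k, ((P (j + 1))⁻¹ * Z j ω - w j ω)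
        + ((P (k + 1))⁻¹ * Z k ω - w k ω) := by
      simp only [hSdef, Finset.sum_range_succ]
    calc (μ[M (k + 1)|𝓕 k]) ω
        = (μ[(P (k + 1))⁻¹ • Y (k + 1)|𝓕 k] + μ[S|𝓕 k]) ω := h1
      _ = (P (k + 1))⁻¹ * (μ[Y (k + 1)|𝓕 k]) ω + S ω := by
          simp only [Pi.add_apply, h2, e3, Pi.smul_apply, smul_eq_mul]
      _ ≤ M k ω := by rw [hMk, hSeval]; linarith
  -- monotone partial sums of w
  have hwmono : ∀ ω, Monotone (fun k => ∑ j ∈ Finset.range k, w j ω) := fun ω =>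
    monotone_nat_of_le_succ fun k => by
      rw [Finset.sum_range_succ]; linarith [hw_nonneg k ω]
  -- lower bound for M
  have hMlb : ∀ k ω, -(∑ j ∈ Finset.range k, w j ω) ≤ M k ω := by
    intro k ω
    have h1 : ∑ j ∈ Finset.range k, (-(w j ω))
        ≤ ∑ j ∈ Finset.range k, ((P (j + 1))⁻¹ * Z j ω - w j ω) := by
      refine Finset.sum_le_sum fun j _ => ?_
      have := mul_nonneg (inv_nonneg.2 (hP0 (j + 1)).le) (hZ_nonneg j ω)
      linarith
    have h2 : 0 ≤ (P k)⁻¹ * Y k ω :=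
      mul_nonneg (inv_nonneg.2 (hP0 k).le) (hY_nonneg k ω)
    have h3 : M k ω = (P k)⁻¹ * Y k ω
        + ∑ j ∈ Finset.range k, ((P (j + 1))⁻¹ * Z j ω - w j ω) := by simp [hMdef]
    rw [h3]
    have h4 : ∑ j ∈ Finset.range k, (-(w j ω)) = -(∑ j ∈ Finset.range k, w j ω) := by
      simp
    linarith [h1, h2, h4 ▸ h1]
  -- convergence of M on the event where the w-sums stay below a
  have key : ∀ a : ℕ, ∀ᵐ ω ∂μ,
      (∀ k, ∑ j ∈ Finset.range (k + 1), w j ω ≤ (a : ℝ)) →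
      ∃ c, Tendsto (fun n => M n ω) atTop (𝓝 c) := by
    intro a
    set ξ : ℕ → Ω → ℝ := fun k ω =>
      if ∑ j ∈ Finset.range (k + 1), w j ω ≤ (a : ℝ) then 1 else 0 with hξdef
    have hξ_adapted : StronglyAdapted 𝓕 ξ := by
      intro k
      have hsm : StronglyMeasurable[𝓕 k]
          (fun ω => ∑ j ∈ Finset.range (k + 1), w j ω) :=
        Finset.stronglyMeasurable_fun_sum _ fun j hj =>
          (hw_adapted j).mono (𝓕.mono (Nat.lt_succ_iff.1 (Finset.mem_range.1 hj)))
      have hms : MeasurableSet[𝓕 k]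
          {ω | ∑ j ∈ Finset.range (k + 1), w j ω ≤ (a : ℝ)} :=
        measurableSet_le hsm.measurable measurable_const
      have heq : ξ k = Set.indicator
          {ω | ∑ j ∈ Finset.range (k + 1), w j ω ≤ (a : ℝ)} (fun _ => (1:ℝ)) := by
        funext ω
        simp only [hξdef, Set.indicator_apply, Set.mem_setOf_eq]
      rw [heq]
      exact stronglyMeasurable_const.indicator hms
    have hξbdd : ∀ n ω, ξ n ω ≤ 1 := fun n ω => by
      simp only [hξdef]; split <;> norm_num
    have hξnonneg : ∀ n ω, 0 ≤ ξ n ω := fun n ω => by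
      simp only [hξdef]; split <;> norm_num
    set G : ℕ → Ω → ℝ :=
      fun n => ∑ k ∈ Finset.range n, ξ k * ((-M) (k + 1) - (-M) k) with hGdef
    have hG : Submartingale G 𝓕 μ :=
      hM_super.neg.sum_mul_sub hξ_adapted hξbdd hξnonneg
    set N : ℕ → Ω → ℝ :=
      fun n ω => M 0 ω + ∑ k ∈ Finset.range n, ξ k ω * (M (k + 1) ω - M k ω) with hNdef
    have hGN : ∀ n ω, G n ω = M 0 ω - N n ω := by
      intro n ω
      have hterm : ∀ k, (ξ k * ((-M) (k + 1) - (-M) k)) ω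
          = -(ξ k ω * (M (k + 1) ω - M k ω)) := fun k => by
        simp only [Pi.mul_apply, Pi.sub_apply, Pi.neg_apply]; ring
      simp only [hGdef, hNdef, Finset.sum_apply]
      rw [Finset.sum_congr rfl fun k _ => hterm k, Finset.sum_neg_distrib]
      ring
    -- key induction: N is bounded below and equals M while the w-sums stay small
    have hNkey : ∀ ω n, -(a : ℝ) ≤ N n ω ∧
        ((∀ j < n, ∑ i ∈ Finset.range (j + 1), w i ω ≤ (a : ℝ)) → N n ω = M n ω) := by
      intro ω n
      induction n with
      | zero =>
        have hN0 : N 0 ω = M 0 ω := by simp [hNdef]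
        have hM0 : M 0 ω = Y 0 ω := by simp [hMdef, hPdef]
        constructor
        · rw [hN0, hM0]
          have := hY_nonneg 0 ω
          have : (0:ℝ) ≤ (a:ℝ) := Nat.cast_nonneg a
          linarith [hY_nonneg 0 ω]
        · intro _; exact hN0
      | succ n ih =>
        have hstep : N (n + 1) ω = N n ω + ξ n ω * (M (n + 1) ω - M n ω) := by
          simp only [hNdef, Finset.sum_range_succ]; ring
        by_cases h : ∑ i ∈ Finset.range (n + 1), w i ω ≤ (a : ℝ)
        · have hξ1 : ξ n ω = 1 := by simp only [hξdef]; rw [if_pos h]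
          have hall : ∀ j < n, ∑ i ∈ Finset.range (j + 1), w i ω ≤ (a : ℝ) := fun j hj =>
            le_trans (hwmono ω (by omega : j + 1 ≤ n + 1)) h
          have heq : N n ω = M n ω := ih.2 hall
          have heq' : N (n + 1) ω = M (n + 1) ω := by rw [hstep, hξ1, heq]; ring
          refine ⟨?_, fun _ => heq'⟩
          rw [heq']
          calc -(a : ℝ) ≤ -(∑ j ∈ Finset.range (n + 1), w j ω) := by linarith
            _ ≤ M (n + 1) ω := hMlb _ ω
        · have hξ0 : ξ n ω = 0 := by simp only [hξdef]; rw [if_neg h]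
          refine ⟨?_, fun hall => absurd (hall n (Nat.lt_succ_self n)) h⟩
          rw [hstep, hξ0]
          simpa using ih.1
    -- L¹ bound for G
    have hGbd : ∀ n ω, G n ω ≤ ‖M 0 ω‖ + a := by
      intro n ω
      rw [hGN n ω]
      have h1 := (hNkey ω n).1
      have h2 : M 0 ω ≤ ‖M 0 ω‖ := by rw [Real.norm_eq_abs]; exact le_abs_self _
      linarith
    have hGabs : ∀ n ω, ‖G n ω‖ ≤ 2 * (‖M 0 ω‖ + a) - G n ω := by
      intro n ω
      have hb : (0:ℝ) ≤ ‖M 0 ω‖ + a := by positivity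
      have := hGbd n ω
      rw [Real.norm_eq_abs]
      rcases abs_cases (G n ω) with ⟨h, h'⟩ | ⟨h, h'⟩ <;> linarith
    have hEG : ∀ n, 0 ≤ ∫ ω, G n ω ∂μ := by
      intro n
      have h01 := hG.setIntegral_le (Nat.zero_le n) (MeasurableSet.univ)
      rw [setIntegral_univ, setIntegral_univ] at h01
      have hG0 : ∀ ω, G 0 ω = 0 := fun ω => by simp [hGdef]
      calc (0:ℝ) = ∫ ω, G 0 ω ∂μ := by
            rw [integral_congr_ae (Eventually.of_forall hG0)]; simp
        _ ≤ ∫ ω, G n ω ∂μ := h01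
    have hInt1 : ∀ n, ∫ ω, ‖G n ω‖ ∂μ ≤ 2 * ((∫ ω, ‖M 0 ω‖ ∂μ) + a) := by
      intro n
      have hint2 : Integrable (fun ω => 2 * (‖M 0 ω‖ + a) - G n ω) μ :=
        ((((hM_int 0).norm.add (integrable_const _)).const_mul 2)).sub (hG.integrable n)
      calc ∫ ω, ‖G n ω‖ ∂μ ≤ ∫ ω, (2 * (‖M 0 ω‖ + a) - G n ω) ∂μ :=
            integral_mono (hG.integrable n).norm hint2 (fun ω => hGabs n ω)
        _ = 2 * ((∫ ω, ‖M 0 ω‖ ∂μ) + a) - ∫ ω, G n ω ∂μ := by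
            have hi1 : Integrable (fun ω => 2 * (‖M 0 ω‖ + (a:ℝ))) μ :=
              ((hM_int 0).norm.add (integrable_const _)).const_mul 2
            rw [integral_sub hi1 (hG.integrable n)]
            congr 1
            rw [integral_const_mul]
            congr 1
            rw [integral_add (hM_int 0).norm (integrable_const _), integral_const]
            simp [measure_univ]
        _ ≤ 2 * ((∫ ω, ‖M 0 ω‖ ∂μ) + a) := by linarith [hEG n]
    set R : NNReal := (2 * ((∫ ω, ‖M 0 ω‖ ∂μ) + a)).toNNReal with hRdef
    have hGsnorm : ∀ n, eLpNorm (G n) 1 μ ≤ (R : ENNReal) := by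
      intro n
      rw [eLpNorm_one_eq_lintegral_enorm,
        ← ofReal_integral_norm_eq_lintegral_enorm (hG.integrable n)]
      exact ENNReal.ofReal_le_ofReal (hInt1 n)
    have hae := hG.exists_ae_tendsto_of_bdd hGsnorm
    filter_upwards [hae] with ω hc hbound
    obtain ⟨c, hc⟩ := hc
    have hNM : ∀ n, N n ω = M n ω := fun n => (hNkey ω n).2 fun j _ => hbound j
    refine ⟨M 0 ω - c, ?_⟩
    have heqn : ∀ n, M n ω = M 0 ω - G n ω := fun n => by
      rw [← hNM n, hGN n ω]; ring
    exact Tendsto.congr (fun n => (heqn n).symm) (tendsto_const_nhds.sub hc)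
  have hae_all : ∀ᵐ ω ∂μ, ∀ a : ℕ,
      (∀ k, ∑ j ∈ Finset.range (k + 1), w j ω ≤ (a : ℝ)) →
      ∃ c, Tendsto (fun n => M n ω) atTop (𝓝 c) := (ae_all_iff).2 key
  filter_upwards [hae_all, hw_sum] with ω hconv hsum
  obtain ⟨a, ha⟩ := exists_nat_ge (∑' k, w k ω)
  have hbd : ∀ k, ∑ j ∈ Finset.range (k + 1), w j ω ≤ (a : ℝ) := fun k =>
    le_trans (Summable.sum_le_tsum _ (fun j _ => hw_nonneg j ω) hsum) ha
  obtain ⟨c, hc⟩ := hconv a hbd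
  have hW : Tendsto (fun k => ∑ j ∈ Finset.range k, w j ω) atTop (𝓝 (∑' j, w j ω)) :=
    hsum.hasSum.tendsto_sum_nat
  have hMW : Tendsto (fun k => M k ω + ∑ j ∈ Finset.range k, w j ω) atTop
      (𝓝 (c + ∑' j, w j ω)) := hc.add hW
  obtain ⟨c0, hc0⟩ := hMW.bddAbove_range
  have hMeval : ∀ n, M n ω = (P n)⁻¹ * Y n ω
      + (∑ j ∈ Finset.range n, (P (j + 1))⁻¹ * Z j ω - ∑ j ∈ Finset.range n, w j ω) := by
    intro n
    simp only [hMdef, Finset.sum_sub_distrib]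
  have hAZle : ∀ n, ∑ j ∈ Finset.range n, (P (j + 1))⁻¹ * Z j ω ≤ c0 := by
    intro n
    clear_value P M C
    have h2 : 0 ≤ (P n)⁻¹ * Y n ω :=
      mul_nonneg (inv_nonneg.2 (hP0 n).le) (hY_nonneg n ω)
    have h3 : M n ω + ∑ j ∈ Finset.range n, w j ω ≤ c0 := hc0 ⟨n, rfl⟩
    have h4 := hMeval n
    calc ∑ j ∈ Finset.range n, (P (j + 1))⁻¹ * Z j ω
        = M n ω - (P n)⁻¹ * Y n ω + ∑ j ∈ Finset.range n, w j ω := by rw [h4]; ring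
      _ ≤ c0 := by linarith
  have hAZsum : Summable (fun j => (P (j + 1))⁻¹ * Z j ω) :=
    summable_of_sum_range_le
      (fun j => mul_nonneg (inv_nonneg.2 (hP0 (j + 1)).le) (hZ_nonneg j ω)) hAZle
  have hZsum : Summable (fun j => Z j ω) := by
    refine Summable.of_nonneg_of_le (fun j => hZ_nonneg j ω) (fun j => ?_)
      (hAZsum.mul_left C)
    have h1 := hP0 (j + 1)
    have h2 := hPC (j + 1)
    have h3 := hZ_nonneg j ω
    have h5 : 1 ≤ C * (P (j + 1))⁻¹ := by
      rw [← div_eq_mul_inv, le_div_iff₀ h1]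
      linarith
    calc Z j ω = 1 * Z j ω := (one_mul _).symm
      _ ≤ (C * (P (j + 1))⁻¹) * Z j ω := mul_le_mul_of_nonneg_right h5 h3
      _ = C * ((P (j + 1))⁻¹ * Z j ω) := by ring
  refine ⟨?_, hZsum⟩
  have hAZt : Tendsto (fun n => ∑ j ∈ Finset.range n, (P (j + 1))⁻¹ * Z j ω) atTop
      (𝓝 (∑' j, (P (j + 1))⁻¹ * Z j ω)) := hAZsum.hasSum.tendsto_sum_nat
  have hYhat : Tendsto (fun n => (P n)⁻¹ * Y n ω) atTop
      (𝓝 (c - ∑' j, (P (j + 1))⁻¹ * Z j ω + ∑' j, w j ω)) := by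
    have heq : ∀ n, (P n)⁻¹ * Y n ω = M n ω
        - ∑ j ∈ Finset.range n, (P (j + 1))⁻¹ * Z j ω + ∑ j ∈ Finset.range n, w j ω := by
      intro n
      rw [hMeval n]; ring
    exact Tendsto.congr (fun n => (heq n).symm) ((hc.sub hAZt).add hW)
  refine ⟨(⨆ k, P k) * (c - ∑' j, (P (j + 1))⁻¹ * Z j ω + ∑' j, w j ω), ?_⟩
  refine (hPtend.mul hYhat).congr fun n => ?_
  rw [← mul_assoc, mul_inv_cancel₀ (hP0 n).ne', one_mul]

end RSAux

/-- Under Assumption 1 (coercivity, continuous differentiability) and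
Assumption 4 (adapted integrable processes, quasi-supermartingale descent inequality and
conditional step bound), Assumption 2 holds: `F (x k)` converges a.s. to an a.s. finite
random variable `Finf`, `∇F (x k) → 0` a.s., and `∑ v k ‖∇F (x k)‖² < ∞` a.s. -/
theorem assumption2_of_assumption4
    {H : Type*} [NormedAddCommGroup H] [InnerProductSpace ℝ H] [FiniteDimensional ℝ H]
    {Ω : Type*} {m0 : MeasurableSpace Ω} (μ : Measure Ω) [IsProbabilityMeasure μ]
    (𝓕 : Filtration ℕ m0)
    (F : H → ℝ)
    (hF_coercive : Tendsto F (Bornology.cobounded H) atTop)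
    (hF_smooth : ContDiff ℝ 1 F)
    (Fstar : ℝ) (hFstar : IsLeast (Set.range F) Fstar)
    (x : ℕ → Ω → H)
    (hFx_adapted : ∀ k, StronglyMeasurable[𝓕 k] (fun ω => F (x k ω)))
    (hFx_int : ∀ k, Integrable (fun ω => F (x k ω)) μ)
    (hgradx_adapted : ∀ k, StronglyMeasurable[𝓕 k] (fun ω => ‖gradient F (x k ω)‖ ^ 2))
    (hgradx_int : ∀ k, Integrable (fun ω => ‖gradient F (x k ω)‖ ^ 2) μ)
    (u v r s t : ℕ → ℝ) (w : ℕ → Ω → ℝ)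
    (hu : ∀ k, 0 ≤ u k) (hv : ∀ k, 0 ≤ v k) (hr : ∀ k, 0 ≤ r k)
    (hs : ∀ k, 0 ≤ s k) (ht : ∀ k, 0 ≤ t k)
    (hw_nonneg : ∀ k ω, 0 ≤ w k ω)
    (hw_adapted : ∀ k, StronglyMeasurable[𝓕 k] (w k))
    (hw_int : ∀ k, Integrable (w k) μ)
    (hu_sum : Summable u)
    (hv_inf : ∃ ε > (0:ℝ), ∀ k, ε ≤ v k)
    (hr_sum : Summable r) (ht_sum : Summable t)
    (hw_sum : ∀ᵐ ω ∂μ, Summable fun k => w k ω)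
    (hdescent : ∀ k, ∀ᵐ ω ∂μ,
      (μ[fun ω' => F (x (k + 1) ω') - Fstar | 𝓕 k]) ω ≤
        (1 + u k) * (F (x k ω) - Fstar) - v k * ‖gradient F (x k ω)‖ ^ 2 + w k ω)
    (hstep : ∀ k, ∀ᵐ ω ∂μ,
      (μ[fun ω' => ‖x (k + 1) ω' - x k ω'‖ | 𝓕 k]) ω ≤
        r k * Real.sqrt (F (x k ω) - Fstar) + s k * ‖gradient F (x k ω)‖ + t k) :
    ∃ Finf : Ω → ℝ,
      (∀ᵐ ω ∂μ, Tendsto (fun k => F (x k ω)) atTop (𝓝 (Finf ω))) ∧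
      (∀ᵐ ω ∂μ, Tendsto (fun k => gradient F (x k ω)) atTop (𝓝 (0 : H))) ∧
      (∀ᵐ ω ∂μ, Summable fun k => v k * ‖gradient F (x k ω)‖ ^ 2) := by
  classical
  obtain ⟨ε, hε, hεv⟩ := hv_inf
  have hFge : ∀ y, Fstar ≤ F y := fun y => hFstar.2 ⟨y, rfl⟩
  have hrs := RSAux.robbins_siegmund μ 𝓕
      (fun k ω => F (x k ω) - Fstar)
      (fun k ω => v k * ‖gradient F (x k ω)‖ ^ 2) w u
      (fun k ω => sub_nonneg.2 (hFge _))
      (fun k ω => mul_nonneg (hv k) (by positivity))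
      hw_nonneg
      (fun k => (hFx_adapted k).sub stronglyMeasurable_const)
      (fun k => (hgradx_adapted k).const_mul _)
      hw_adapted
      (fun k => (hFx_int k).sub (integrable_const _))
      (fun k => (hgradx_int k).const_mul _)
      hw_int hu hu_sum hw_sum hdescent
  set Finf : Ω → ℝ := fun ω =>
    if h : ∃ c, Tendsto (fun k => F (x k ω)) atTop (𝓝 c) then h.choose else 0 with hFinf
  refine ⟨Finf, ?_, ?_, ?_⟩
  · filter_upwards [hrs] with ω hω
    obtain ⟨⟨c, hc⟩, -⟩ := hω
    have hc' : Tendsto (fun k => F (x k ω)) atTop (𝓝 (c + Fstar)) := by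
      have := hc.add (tendsto_const_nhds (x := Fstar))
      simpa using this
    have hex : ∃ c', Tendsto (fun k => F (x k ω)) atTop (𝓝 c') := ⟨_, hc'⟩
    simp only [hFinf, dif_pos hex]
    exact hex.choose_spec
  · filter_upwards [hrs] with ω hω
    obtain ⟨-, hsum⟩ := hω
    have hsum2 : Summable fun k => ‖gradient F (x k ω)‖ ^ 2 := by
      refine Summable.of_nonneg_of_le (fun k => by positivity) (fun k => ?_)
        (hsum.mul_left ε⁻¹)
      have h1 := hεv k
      have h2 : (0:ℝ) ≤ ‖gradient F (x k ω)‖ ^ 2 := by positivity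
      have h5 : 1 ≤ ε⁻¹ * v k := by
        rw [mul_comm, ← div_eq_mul_inv, le_div_iff₀ hε]
        linarith
      calc ‖gradient F (x k ω)‖ ^ 2 = 1 * ‖gradient F (x k ω)‖ ^ 2 := (one_mul _).symm
        _ ≤ (ε⁻¹ * v k) * ‖gradient F (x k ω)‖ ^ 2 := mul_le_mul_of_nonneg_right h5 h2
        _ = ε⁻¹ * (v k * ‖gradient F (x k ω)‖ ^ 2) := by ring
    have h0 : Tendsto (fun k => ‖gradient F (x k ω)‖ ^ 2) atTop (𝓝 0) :=
      hsum2.tendsto_atTop_zero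
    have h1 : Tendsto (fun k => ‖gradient F (x k ω)‖) atTop (𝓝 0) := by
      have h2 := (Real.continuous_sqrt.tendsto 0).comp h0
      simp only [Function.comp_def, Real.sqrt_zero] at h2
      refine h2.congr fun k => ?_
      exact Real.sqrt_sq (norm_nonneg _)
    exact tendsto_zero_iff_norm_tendsto_zero.2 h1
  · filter_upwards [hrs] with ω hω
    exact hω.2
end

section
/- Let (x_k) be a stochastic process with values in a finite-dimensional real Hilbert space H, and suppose Assumption 1, Assumption 3 and Assumption 4 hold. Assume further that the sequence (s_k p_k / v_k) is non-increasing and that there exists γ ∈ (0,1) with P(Ξ_γ) = 1. Let φ ∈ Φ_{+∞} be bounded, and define Γ_φ = ∑_{k=1}^∞ (s_k p_k / v_k) [ φ( L_k(x_k, w_0, …, w_{k−1}) − L_{k,∞} ) − φ( E[L_{k+1}(x_{k+1}, w_0, …, w_k) | 𝓕_k] − E[L_{k+1,∞} | 𝓕_k] ) ]. Then Γ_φ < +∞ almost surely. -/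
open MeasureTheory Filter Topology

section AuxiliaryLemmas

section PhiAux

variable {φ : ℝ → ℝ}

lemma phi_tangent (hφ : IsPhiTop φ) {y : ℝ} (hy : 0 < y) {z : ℝ} (hz : 0 ≤ z) :
    φ z ≤ φ y + deriv φ y * (z - y) := by
  obtain ⟨hconc, -, -, -, hderiv, -, -⟩ := hφ
  have hy' : y ∈ Set.Ici (0:ℝ) := le_of_lt hy
  rcases lt_trichotomy z y with h | h | h
  · have hs := hconc.le_slope_of_hasDerivAt hz hy' h (hderiv y hy)
    rw [slope_def_field] at hs
    have hyz : 0 < y - z := by linarith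
    rw [le_div_iff₀ hyz] at hs
    nlinarith
  · simp [h]
  · have hs := hconc.slope_le_of_hasDerivAt hy' (le_of_lt (hy.trans h) : (0:ℝ) ≤ z) h (hderiv y hy)
    rw [slope_def_field] at hs
    have hyz : 0 < z - y := by linarith
    rw [div_le_iff₀ hyz] at hs
    nlinarith

lemma phi_deriv_anti (hφ : IsPhiTop φ) : AntitoneOn (deriv φ) (Set.Ioi 0) := by
  obtain ⟨hconc, -, -, -, hderiv, -, -⟩ := hφ
  exact (hconc.subset Set.Ioi_subset_Ici_self (convex_Ioi 0)).antitoneOn_deriv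
    (fun z hz => (hderiv z hz).differentiableAt)

lemma phi_contOn (hφ : IsPhiTop φ) : ContinuousOn φ (Set.Ici 0) := by
  obtain ⟨-, -, -, hcont0, hderiv, -, -⟩ := hφ
  intro z hz
  rcases eq_or_lt_of_le (Set.mem_Ici.mp hz) with h | h
  · rwa [← h]
  · exact (hderiv z h).continuousAt.continuousWithinAt

lemma phi_mono (hφ : IsPhiTop φ) : MonotoneOn φ (Set.Ici 0) := by
  have := strictMonoOn_of_deriv_pos (convex_Ici (0:ℝ)) (phi_contOn hφ)
    (fun z hz => hφ.2.2.2.2.2.2 z (by rwa [interior_Ici] at hz))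
  exact this.monotoneOn

end PhiAux

lemma jensen_aux {Ω : Type*} {m m0 : MeasurableSpace Ω} (hm : m ≤ m0) (μ : Measure Ω)
    [IsProbabilityMeasure μ] {φ : ℝ → ℝ} (hφ : IsPhiTop φ) {M : ℝ}
    (hM : ∀ s ∈ Set.Ici (0:ℝ), φ s ≤ M)
    {X : Ω → ℝ} (hX : Integrable X μ) (hX0 : 0 ≤ᵐ[μ] X) :
    ∫ ω, φ (max (X ω) 0) ∂μ ≤ ∫ ω, φ (max ((μ[X|m]) ω) 0) ∂μ := by
  have hψcont : Continuous fun z : ℝ => φ (max z 0) :=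
    (phi_contOn hφ).comp_continuous (continuous_id.max continuous_const)
      (fun z => le_max_right z 0)
  have hψ0 : ∀ z : ℝ, 0 ≤ φ (max z 0) := fun z => hφ.2.1 _ (le_max_right z 0)
  have hψM : ∀ z : ℝ, φ (max z 0) ≤ M := fun z => hM _ (le_max_right z 0)
  have hM0 : 0 ≤ M := by simpa [hφ.2.2.1] using hM 0 (Set.mem_Ici.2 le_rfl)
  set Y : Ω → ℝ := μ[X|m] with hYdef
  have hY0 : 0 ≤ᵐ[μ] Y := condExp_nonneg hX0
  have hYsm : StronglyMeasurable[m] Y := stronglyMeasurable_condExp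
  have hYasm : AEStronglyMeasurable Y μ := (hYsm.mono hm).aestronglyMeasurable
  -- helper for integrability of bounded functions
  have hbdd_int : ∀ f : Ω → ℝ, AEStronglyMeasurable f μ → (∀ ω, 0 ≤ f ω) → (∀ ω, f ω ≤ M) →
      Integrable f μ := by
    intro f hfm h0 h1
    refine Integrable.mono' (integrable_const M) hfm ?_
    exact Eventually.of_forall fun ω => by rw [Real.norm_eq_abs, abs_of_nonneg (h0 ω)]; exact h1 ω
  have hintX : Integrable (fun ω => φ (max (X ω) 0)) μ :=
    hbdd_int _ (hψcont.comp_aestronglyMeasurable hX.1) (fun ω => hψ0 _) (fun ω => hψM _)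
  have hintY : Integrable (fun ω => φ (max (Y ω) 0)) μ :=
    hbdd_int _ (hψcont.comp_aestronglyMeasurable hYasm) (fun ω => hψ0 _) (fun ω => hψM _)
  -- step for each ε > 0
  have hstep : ∀ ε : ℝ, 0 < ε →
      ∫ ω, φ (max (X ω) 0) ∂μ ≤ ∫ ω, φ (max (Y ω + ε) 0) ∂μ := by
    intro ε hε
    set D : ℝ → ℝ := fun z => deriv φ (max z 0 + ε) with hDdef
    have hd_mem : ∀ z : ℝ, max z 0 + ε ∈ Set.Ioi (0:ℝ) := fun z => by
      have := le_max_right z 0; simp only [Set.mem_Ioi]; linarith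
    have hDcont : Continuous D :=
      hφ.2.2.2.2.2.1.comp_continuous
        ((continuous_id.max continuous_const).add continuous_const) hd_mem
    have hDpos : ∀ z, 0 < D z := fun z => hφ.2.2.2.2.2.2 _ (hd_mem z)
    have hDle : ∀ z, D z ≤ deriv φ ε := fun z => by
      refine phi_deriv_anti hφ (Set.mem_Ioi.2 hε) (hd_mem z) ?_
      have := le_max_right z 0; linarith
    set Z : Ω → ℝ := fun ω => D (Y ω) with hZdef
    have hZsm : StronglyMeasurable[m] Z := hDcont.comp_stronglyMeasurable hYsm
    have hZbdd : ∀ᵐ ω ∂μ, ‖Z ω‖ ≤ deriv φ ε := Eventually.of_forall fun ω => by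
      rw [Real.norm_eq_abs, abs_of_pos (hDpos _)]; exact hDle _
    have hXY_int : Integrable (X - Y) μ := hX.sub integrable_condExp
    have hZXY_int : Integrable (Z * (X - Y)) μ :=
      hXY_int.bdd_mul (hZsm.mono hm).aestronglyMeasurable hZbdd
    -- the cross term has zero integral
    have hcross : ∫ ω, Z ω * (X ω - Y ω) ∂μ = 0 := by
      have h1 : μ[Z * (X - Y)|m] =ᵐ[μ] Z * μ[X - Y|m] :=
        condExp_stronglyMeasurable_mul_of_bound hm hZsm hXY_int (deriv φ ε) hZbdd
      have h2 : μ[X - Y|m] =ᵐ[μ] 0 := by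
        have : μ[X - Y|m] =ᵐ[μ] μ[X|m] - μ[Y|m] :=
          condExp_sub (μ := μ) (m := m) (f := X) (g := Y) hX (integrable_condExp (f := X) (m := m))
        have hYY : μ[Y|m] = Y := condExp_of_stronglyMeasurable hm hYsm integrable_condExp
        refine this.trans ?_
        rw [hYY]
        exact Eventually.of_forall fun ω => by simp [hYdef]
      have h3 : μ[Z * (X - Y)|m] =ᵐ[μ] 0 := by
        refine h1.trans ?_
        filter_upwards [h2] with ω h2ω
        simp only [Pi.mul_apply, Pi.zero_apply] at h2ω ⊢
        rw [h2ω, mul_zero]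
      have h4 : ∫ ω, Z ω * (X ω - Y ω) ∂μ = ∫ ω, (μ[Z * (X - Y)|m]) ω ∂μ :=
        (integral_condExp hm (f := Z * (X - Y))).symm
      rw [h4, integral_congr_ae h3]
      simp
    -- pointwise inequality
    have hptwise : ∀ᵐ ω ∂μ,
        φ (max (X ω) 0) ≤ φ (max (Y ω + ε) 0) + Z ω * (X ω - Y ω) := by
      filter_upwards [hX0, hY0] with ω hx0 hy0
      simp only [Pi.zero_apply] at hx0 hy0
      have hYε : (0:ℝ) < Y ω + ε := by linarith
      have hmaxX : max (X ω) 0 = X ω := max_eq_left hx0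
      have hmaxY : max (Y ω + ε) 0 = Y ω + ε := max_eq_left (le_of_lt hYε)
      have hZω : Z ω = deriv φ (Y ω + ε) := by
        simp only [hZdef, hDdef]
        rw [max_eq_left hy0]
      rw [hmaxX, hmaxY, hZω]
      have := phi_tangent hφ hYε hx0
      have hpos : 0 < deriv φ (Y ω + ε) := hφ.2.2.2.2.2.2 _ (Set.mem_Ioi.2 hYε)
      nlinarith
    have hintYε : Integrable (fun ω => φ (max (Y ω + ε) 0)) μ :=
      hbdd_int _ (hψcont.comp_aestronglyMeasurable (hYasm.add aestronglyMeasurable_const))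
        (fun ω => hψ0 _) (fun ω => hψM _)
    calc ∫ ω, φ (max (X ω) 0) ∂μ
        ≤ ∫ ω, (φ (max (Y ω + ε) 0) + Z ω * (X ω - Y ω)) ∂μ :=
          integral_mono_ae hintX (hintYε.add hZXY_int) hptwise
      _ = ∫ ω, φ (max (Y ω + ε) 0) ∂μ + ∫ ω, Z ω * (X ω - Y ω) ∂μ :=
          integral_add hintYε hZXY_int
      _ = ∫ ω, φ (max (Y ω + ε) 0) ∂μ := by rw [hcross, add_zero]
  -- pass to the limit ε = 1/(n+1) → 0
  have htend : Tendsto (fun n : ℕ => ∫ ω, φ (max (Y ω + 1/(n+1)) 0) ∂μ) atTop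
      (𝓝 (∫ ω, φ (max (Y ω) 0) ∂μ)) := by
    refine tendsto_integral_of_dominated_convergence (fun _ => M) ?_ (integrable_const M) ?_ ?_
    · intro n
      exact hψcont.comp_aestronglyMeasurable (hYasm.add aestronglyMeasurable_const)
    · intro n
      exact Eventually.of_forall fun ω => by
        rw [Real.norm_eq_abs, abs_of_nonneg (hψ0 _)]; exact hψM _
    · refine Eventually.of_forall fun ω => ?_
      have h1 : Tendsto (fun n : ℕ => Y ω + 1/(n+1)) atTop (𝓝 (Y ω)) := by
        have := tendsto_one_div_add_atTop_nhds_zero_nat (𝕜 := ℝ)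
        simpa using tendsto_const_nhds.add this
      exact (hψcont.tendsto (Y ω)).comp h1
  refine ge_of_tendsto htend (Eventually.of_forall fun n => ?_)
  exact hstep (1/(n+1)) (by positivity)


lemma tele_bound {c a : ℕ → ℝ} {M : ℝ} (hc : Antitone c) (hc0 : ∀ k, 0 ≤ c k)
    (ha0 : ∀ k, 0 ≤ a k) (haM : ∀ k, a k ≤ M) (n : ℕ) :
    ∑ j ∈ Finset.range n, c (j+1) * (a (j+1) - a (j+2)) ≤ c 1 * M := by
  have key : ∀ n, ∑ j ∈ Finset.range n, c (j+1) * (a (j+1) - a (j+2)) ≤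
      c 1 * a 1 - c (n+1) * a (n+1) := by
    intro n
    induction n with
    | zero => simp
    | succ n ih =>
      rw [Finset.sum_range_succ]
      have h1 : c (n+2) ≤ c (n+1) := hc (by omega)
      nlinarith [ha0 (n+2), ha0 (n+1), hc0 (n+2), hc0 (n+1)]
  have := key n
  nlinarith [hc0 1, hc0 (n+1), ha0 (n+1), ha0 1, haM 1]

lemma MeasureTheory.StronglyMeasurable.div_const' {α : Type*} {m : MeasurableSpace α} {f : α → ℝ}
    (hf : StronglyMeasurable[m] f) (c : ℝ) : StronglyMeasurable[m] fun x => f x / c := by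
  simpa [div_eq_mul_inv] using hf.mul_const c⁻¹

lemma MeasureTheory.AEStronglyMeasurable.div_const' {α : Type*} {m : MeasurableSpace α} {μ : Measure α}
    {f : α → ℝ} (hf : AEStronglyMeasurable f μ) (c : ℝ) :
    AEStronglyMeasurable (fun x => f x / c) μ := by
  simpa [div_eq_mul_inv] using hf.mul_const c⁻¹

end AuxiliaryLemmas

/-- Under Assumptions 1, 3 and 4, if `(s k p k / v k)` is non-increasing
and `P(Ξ_γ) = 1` for some `γ ∈ (0,1)`, then for any bounded `φ ∈ Φ_{+∞}` the series `Γ_φ`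
is almost surely finite (i.e. the non-negative series indexed by `k ≥ 1` is summable). -/
theorem gamma_phi_summable
    {H : Type*} [NormedAddCommGroup H] [InnerProductSpace ℝ H] [FiniteDimensional ℝ H]
    {Ω : Type*} {m0 : MeasurableSpace Ω} (μ : Measure Ω) [IsProbabilityMeasure μ]
    (𝓕 : Filtration ℕ m0)
    (F : H → ℝ)
    -- Assumption 1
    (hF_coercive : Tendsto F (Bornology.cobounded H) atTop)
    (hF_smooth : ContDiff ℝ 1 F)
    (Fstar : ℝ) (hFstar : IsLeast (Set.range F) Fstar)
    -- Assumption 3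
    (hKL : HasKLOn F {y : H | gradient F y = 0})
    (I : ℕ) (hI : 1 ≤ I) (C : Fin I → Set H)
    (hC_ne : ∀ i, (C i).Nonempty)
    (hC_compact : ∀ i, IsCompact (C i))
    (hC_disj : Pairwise (Function.onFun Disjoint C))
    (hzer : {y : H | gradient F y = 0} = ⋃ i, C i)
    -- Assumption 4
    (x : ℕ → Ω → H)
    (hFx_adapted : ∀ k, StronglyMeasurable[𝓕 k] (fun ω => F (x k ω)))
    (hFx_int : ∀ k, Integrable (fun ω => F (x k ω)) μ)
    (hgradx_adapted : ∀ k, StronglyMeasurable[𝓕 k] (fun ω => ‖gradient F (x k ω)‖ ^ 2))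
    (hgradx_int : ∀ k, Integrable (fun ω => ‖gradient F (x k ω)‖ ^ 2) μ)
    (u v r s t : ℕ → ℝ) (w : ℕ → Ω → ℝ)
    (hu : ∀ k, 0 ≤ u k) (hv : ∀ k, 0 ≤ v k) (hr : ∀ k, 0 ≤ r k)
    (hs : ∀ k, 0 ≤ s k) (ht : ∀ k, 0 ≤ t k)
    (hw_nonneg : ∀ k ω, 0 ≤ w k ω)
    (hw_adapted : ∀ k, StronglyMeasurable[𝓕 k] (w k))
    (hw_int : ∀ k, Integrable (w k) μ)
    (hu_sum : Summable u)
    (hv_inf : ∃ ε > (0:ℝ), ∀ k, ε ≤ v k)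
    (hr_sum : Summable r) (ht_sum : Summable t)
    (hw_sum : ∀ᵐ ω ∂μ, Summable fun k => w k ω)
    (hdescent : ∀ k, ∀ᵐ ω ∂μ,
      (μ[fun ω' => F (x (k + 1) ω') - Fstar | 𝓕 k]) ω ≤
        (1 + u k) * (F (x k ω) - Fstar) - v k * ‖gradient F (x k ω)‖ ^ 2 + w k ω)
    (hstep : ∀ k, ∀ᵐ ω ∂μ,
      (μ[fun ω' => ‖x (k + 1) ω' - x k ω'‖ | 𝓕 k]) ω ≤
        r k * Real.sqrt (F (x k ω) - Fstar) + s k * ‖gradient F (x k ω)‖ + t k)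
    -- the almost sure limit of `F (x k)`
    (Finf : Ω → ℝ)
    (hFinf : ∀ᵐ ω ∂μ, Tendsto (fun k => F (x k ω)) atTop (𝓝 (Finf ω)))
    -- auxiliary quantities
    (p : ℕ → ℝ) (hp : ∀ k, p k = ∏ i ∈ Finset.range (k + 1), (1 + u i))
    (L : ℕ → Ω → ℝ)
    (hL : ∀ k ω, L k ω =
      (F (x k ω) - Fstar) / p (k - 1) - ∑ i ∈ Finset.range k, w i ω / p i)
    (Linf : ℕ → Ω → ℝ)
    (hLinf : ∀ k ω, Linf k ω =
      (Finf ω - Fstar) / p k - ∑ i ∈ Finset.range k, w i ω / p i)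
    -- the event `Ξ_γ` has probability one for some `γ ∈ (0,1)`
    (γ : ℝ) (hγ : γ ∈ Set.Ioo (0:ℝ) 1)
    (Ξ : Set Ω)
    (hΞ : Ξ = {ω | ∀ k, 1 ≤ k →
      Finf ω < F (x k ω) ∧
      |Linf k ω - (μ[Linf (k + 1) | 𝓕 k]) ω| ≤
        γ * (v k / p k) * ‖gradient F (x k ω)‖ ^ 2})
    (hΞ_prob : μ Ξ = 1)
    -- `(s k * p k / v k)` is non-increasing
    (hmono : Antitone fun k => s k * p k / v k)
    -- a bounded function `φ ∈ Φ_{+∞}`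
    (φ : ℝ → ℝ) (hφ : IsPhiTop φ)
    (hφ_bdd : ∃ M : ℝ, ∀ s ∈ Set.Ici (0:ℝ), φ s ≤ M) :
    ∀ᵐ ω ∂μ, Summable fun k : ℕ =>
      s (k + 1) * p (k + 1) / v (k + 1) *
        (φ (L (k + 1) ω - Linf (k + 1) ω) -
          φ ((μ[L (k + 2) | 𝓕 (k + 1)]) ω - (μ[Linf (k + 2) | 𝓕 (k + 1)]) ω)) := by
  classical
  obtain ⟨M, hM⟩ := hφ_bdd
  obtain ⟨ε₀, hε₀, hvlb⟩ := hv_inf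
  have hm : ∀ k, 𝓕 k ≤ m0 := fun k => 𝓕.le k
  have hvpos : ∀ k, 0 < v k := fun k => lt_of_lt_of_le hε₀ (hvlb k)
  have hppos : ∀ k, 0 < p k := by
    intro k; rw [hp]
    refine Finset.prod_pos fun i _ => ?_
    linarith [hu i]
  have hp1 : ∀ k, (1:ℝ) ≤ p k := by
    intro k; rw [hp]
    calc (1:ℝ) = ∏ _i ∈ Finset.range (k+1), 1 := by simp
      _ ≤ ∏ i ∈ Finset.range (k+1), (1 + u i) :=
        Finset.prod_le_prod (fun i _ => zero_le_one) (fun i _ => by linarith [hu i])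
  have hpsucc : ∀ k, p (k+1) = p k * (1 + u (k+1)) := fun k => by
    rw [hp, hp, Finset.prod_range_succ]
  have hpmono : Monotone p := monotone_nat_of_le_succ fun k => by
    rw [hpsucc]; nlinarith [hppos k, hu (k+1)]
  have hFle : ∀ y, Fstar ≤ F y := fun y => hFstar.2 ⟨y, rfl⟩
  have hM0 : 0 ≤ M := by simpa [hφ.2.2.1] using hM 0 (Set.mem_Ici.2 le_rfl)
  -- measurability
  have hFxm : ∀ k, StronglyMeasurable (fun ω => F (x k ω)) := fun k => (hFx_adapted k).mono (hm k)
  have hGm : ∀ k, StronglyMeasurable (fun ω => ‖gradient F (x k ω)‖^2) :=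
    fun k => (hgradx_adapted k).mono (hm k)
  have hwm : ∀ k, StronglyMeasurable (w k) := fun k => (hw_adapted k).mono (hm k)
  have hFinfasm : AEStronglyMeasurable Finf μ :=
    aestronglyMeasurable_of_tendsto_ae atTop (fun k => (hFxm k).aestronglyMeasurable) hFinf
  -- integrability of L
  have hLfun : ∀ k, L k = fun ω => (F (x k ω) - Fstar) / p (k-1) -
      ∑ i ∈ Finset.range k, w i ω / p i := fun k => funext (hL k)
  have hSw_int : ∀ k, Integrable (fun ω => ∑ i ∈ Finset.range k, w i ω / p i) μ :=
    fun k => integrable_finset_sum _ fun i _ => (hw_int i).div_const _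
  have hL_int : ∀ k, Integrable (L k) μ := by
    intro k; rw [hLfun k]
    exact (((hFx_int k).sub (integrable_const Fstar)).div_const _).sub (hSw_int k)
  -- a.e. version of the Ξ hypotheses
  have hXi : ∀ᵐ ω ∂μ, ∀ k, 1 ≤ k → Finf ω < F (x k ω) ∧
      |Linf k ω - (μ[Linf (k+1)|𝓕 k]) ω| ≤ γ * (v k / p k) * ‖gradient F (x k ω)‖^2 := by
    set g : Ω → ℝ := hFinfasm.mk Finf with hgdef
    have hgm : StronglyMeasurable g := hFinfasm.stronglyMeasurable_mk
    have hgae : Finf =ᵐ[μ] g := hFinfasm.ae_eq_mk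
    set Ξ' : Set Ω := {ω | ∀ k, 1 ≤ k → g ω < F (x k ω) ∧
        |((g ω - Fstar) / p k - ∑ i ∈ Finset.range k, w i ω / p i) - (μ[Linf (k+1)|𝓕 k]) ω| ≤
          γ * (v k / p k) * ‖gradient F (x k ω)‖^2} with hΞ'def
    have hΞ'meas : MeasurableSet Ξ' := by
      have : Ξ' = ⋂ k, {ω | 1 ≤ k → g ω < F (x k ω) ∧
          |((g ω - Fstar) / p k - ∑ i ∈ Finset.range k, w i ω / p i) - (μ[Linf (k+1)|𝓕 k]) ω| ≤
            γ * (v k / p k) * ‖gradient F (x k ω)‖^2} := by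
        ext ω; simp only [hΞ'def, Set.mem_setOf_eq, Set.mem_iInter]
      rw [this]
      refine MeasurableSet.iInter fun k => ?_
      by_cases hk : 1 ≤ k
      · simp only [hk, forall_true_left]
        refine MeasurableSet.inter ?_ ?_
        · exact measurableSet_lt hgm.measurable (hFxm k).measurable
        · have h1 : Measurable fun ω => ((g ω - Fstar) / p k -
              ∑ i ∈ Finset.range k, w i ω / p i) - (μ[Linf (k+1)|𝓕 k]) ω := by
            apply Measurable.sub
            · apply Measurable.sub
              · exact (hgm.measurable.sub measurable_const).div_const _
              · exact Finset.measurable_sum _ fun i _ => (hwm i).measurable.div_const _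
            · exact (stronglyMeasurable_condExp.mono (hm k)).measurable
          have h2 : Measurable fun ω => γ * (v k / p k) * ‖gradient F (x k ω)‖^2 :=
            (hGm k).measurable.const_mul _
          exact measurableSet_le h1.abs h2
      · simp only [hk, false_implies]
        exact MeasurableSet.univ
    have hcompl : μ {ω | ¬ (Finf ω = g ω)} = 0 := hgae
    have hsub : Ξ ∩ {ω | Finf ω = g ω} ⊆ Ξ' := by
      rintro ω ⟨hω, heq⟩
      rw [hΞ] at hω
      simp only [Set.mem_setOf_eq] at hω heq ⊢
      intro k hk
      obtain ⟨h1, h2⟩ := hω k hk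
      rw [hLinf k ω, heq] at h2
      exact ⟨heq ▸ h1, h2⟩
    have hΞ'1 : μ Ξ' = 1 := by
      refine le_antisymm prob_le_one ?_
      calc (1:ENNReal) = μ Ξ := hΞ_prob.symm
        _ ≤ μ (Ξ ∩ {ω | Finf ω = g ω}) + μ (Ξ \ {ω | Finf ω = g ω}) :=
            measure_le_inter_add_diff μ Ξ _
        _ ≤ μ Ξ' + 0 := by
            refine add_le_add (measure_mono hsub) ?_
            refine le_trans (measure_mono fun ω hω => ?_) (le_of_eq hcompl)
            exact hω.2
        _ = μ Ξ' := add_zero _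
    have hΞ'ae : ∀ᵐ ω ∂μ, ω ∈ Ξ' := by
      have hc : μ Ξ'ᶜ = 0 := by
        rw [measure_compl hΞ'meas (measure_ne_top μ _), hΞ'1, measure_univ, tsub_self]
      exact (MeasureTheory.ae_iff).2 (by simpa [Set.compl_def] using hc)
    filter_upwards [hΞ'ae, hgae] with ω hω heq
    intro k hk
    obtain ⟨h1, h2⟩ := hω k hk
    rw [hLinf k ω, heq]
    exact ⟨heq ▸ h1, h2⟩
  -- integrability of Linf
  have hLinffun : ∀ k, Linf k = fun ω => (Finf ω - Fstar) / p k -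
      ∑ i ∈ Finset.range k, w i ω / p i := fun k => funext (hLinf k)
  have hLinfasm : ∀ k, AEStronglyMeasurable (Linf k) μ := by
    intro k; rw [hLinffun k]
    exact ((hFinfasm.sub aestronglyMeasurable_const).div_const' _).sub (hSw_int k).1
  have hLinf_int1 : Integrable (Linf 1) μ := by
    have hbound : ∀ᵐ ω ∂μ, ‖Linf 1 ω‖ ≤
        |(μ[Linf 2|𝓕 1]) ω| + γ * (v 1 / p 1) * ‖gradient F (x 1 ω)‖^2 := by
      filter_upwards [hXi] with ω hω
      obtain ⟨-, h2⟩ := hω 1 le_rfl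
      rw [Real.norm_eq_abs]
      have h3 : Linf 1 ω = (μ[Linf 2|𝓕 1]) ω + (Linf 1 ω - (μ[Linf 2|𝓕 1]) ω) := by ring
      rw [h3]
      exact le_trans (abs_add_le _ _) (by exact add_le_add_right h2 _)
    exact Integrable.mono' (integrable_condExp.abs.add ((hgradx_int 1).const_mul _))
      (hLinfasm 1) hbound
  have hFinf_int : Integrable Finf μ := by
    have heq : Finf = fun ω => p 1 * (Linf 1 ω + ∑ i ∈ Finset.range 1, w i ω / p i) + Fstar := by
      funext ω
      rw [hLinf 1 ω]
      have h0 : p 1 ≠ 0 := ne_of_gt (hppos 1)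
      field_simp
      ring
    rw [heq]
    exact ((hLinf_int1.add (hSw_int 1)).const_mul _).add (integrable_const _)
  have hLinf_int : ∀ k, Integrable (Linf k) μ := by
    intro k; rw [hLinffun k]
    exact ((hFinf_int.sub (integrable_const _)).div_const _).sub (hSw_int k)
  -- conditional descent inequality for L
  have hcondL : ∀ k, 1 ≤ k → ∀ᵐ ω ∂μ,
      (μ[L (k+1)|𝓕 k]) ω ≤ L k ω - (v k / p k) * ‖gradient F (x k ω)‖^2 := by
    intro k hk
    obtain ⟨j, rfl⟩ : ∃ j, k = j + 1 := ⟨k - 1, (Nat.succ_pred_eq_of_pos hk).symm⟩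
    have hLk1 : L (j+1+1) = (p (j+1))⁻¹ • (fun ω => F (x (j+1+1) ω) - Fstar) -
        fun ω => ∑ i ∈ Finset.range (j+1+1), w i ω / p i := by
      funext ω
      simp only [Pi.sub_apply, Pi.smul_apply, smul_eq_mul]
      rw [hL]
      simp only [Nat.add_sub_cancel]
      ring
    have hint1 : Integrable ((p (j+1))⁻¹ • fun ω => F (x (j+1+1) ω) - Fstar) μ :=
      (((hFx_int _).sub (integrable_const Fstar))).smul _
    have hsm_sum : StronglyMeasurable[𝓕 (j+1)]
        (fun ω => ∑ i ∈ Finset.range (j+1+1), w i ω / p i) := by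
      refine Finset.stronglyMeasurable_fun_sum _ fun i hi => ?_
      have hi' : i ≤ j + 1 := by
        have := Finset.mem_range.mp hi; omega
      exact ((hw_adapted i).mono (𝓕.mono hi')).div_const' _
    have hcsum : μ[(fun ω => ∑ i ∈ Finset.range (j+1+1), w i ω / p i)|𝓕 (j+1)] =
        fun ω => ∑ i ∈ Finset.range (j+1+1), w i ω / p i :=
      condExp_of_stronglyMeasurable (hm (j+1)) hsm_sum (hSw_int _)
    have h1 : μ[L (j+1+1)|𝓕 (j+1)] =ᵐ[μ]
        (p (j+1))⁻¹ • μ[(fun ω => F (x (j+1+1) ω) - Fstar)|𝓕 (j+1)] -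
          fun ω => ∑ i ∈ Finset.range (j+1+1), w i ω / p i := by
      rw [hLk1]
      refine (condExp_sub hint1 (hSw_int _) _).trans ?_
      have h2 := condExp_smul (μ := μ) (m := 𝓕 (j+1)) ((p (j+1))⁻¹)
        (fun ω => F (x (j+1+1) ω) - Fstar)
      rw [hcsum]
      exact EventuallyEq.sub h2 EventuallyEq.rfl
    filter_upwards [h1, hdescent (j+1)] with ω hω hdω
    rw [hω]
    simp only [Pi.sub_apply, Pi.smul_apply, smul_eq_mul]
    rw [hL (j+1) ω]
    simp only [Nat.add_sub_cancel]
    rw [Finset.sum_range_succ]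
    have hple : (0:ℝ) ≤ (p (j+1))⁻¹ := le_of_lt (inv_pos.2 (hppos _))
    have h4 : (p (j+1))⁻¹ * (μ[fun ω' => F (x (j+1+1) ω') - Fstar|𝓕 (j+1)]) ω ≤
        (p (j+1))⁻¹ * ((1 + u (j+1)) * (F (x (j+1) ω) - Fstar) -
          v (j+1) * ‖gradient F (x (j+1) ω)‖^2 + w (j+1) ω) :=
      mul_le_mul_of_nonneg_left hdω hple
    have hkey : (p (j+1))⁻¹ * ((1 + u (j+1)) * (F (x (j+1) ω) - Fstar) -
          v (j+1) * ‖gradient F (x (j+1) ω)‖^2 + w (j+1) ω) =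
        (F (x (j+1) ω) - Fstar) / p j - v (j+1) / p (j+1) * ‖gradient F (x (j+1) ω)‖^2 +
          w (j+1) ω / p (j+1) := by
      have hpj := hpsucc j
      have h0 : p j ≠ 0 := ne_of_gt (hppos j)
      have h0' : p (j+1) ≠ 0 := ne_of_gt (hppos (j+1))
      field_simp
      rw [hpj]
      ring
    rw [hkey] at h4
    linarith
  -- equality δ = E[Δ|𝓕 k]
  have hδeq : ∀ k, (fun ω => (μ[L (k+1)|𝓕 k]) ω - (μ[Linf (k+1)|𝓕 k]) ω) =ᵐ[μ]
      μ[fun ω => L (k+1) ω - Linf (k+1) ω|𝓕 k] := by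
    intro k
    have h := condExp_sub (μ := μ) (m := 𝓕 k) (hL_int (k+1)) (hLinf_int (k+1))
    have h2 : μ[fun ω => L (k+1) ω - Linf (k+1) ω|𝓕 k] = μ[L (k+1) - Linf (k+1)|𝓕 k] := rfl
    rw [h2]
    filter_upwards [h] with ω hω
    simp only [Pi.sub_apply] at hω
    rw [hω]
  have hFstar_le_Finf : ∀ᵐ ω ∂μ, Fstar ≤ Finf ω := by
    filter_upwards [hFinf] with ω hω
    exact ge_of_tendsto hω (Eventually.of_forall fun j => hFle (x j ω))
  -- Δ ≥ 0 a.e.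
  have hΔ0 : ∀ k, 1 ≤ k → ∀ᵐ ω ∂μ, 0 ≤ L k ω - Linf k ω := by
    intro k hk
    filter_upwards [hXi, hFstar_le_Finf] with ω hXiω hFs
    have h1 : Finf ω < F (x k ω) := (hXiω k hk).1
    rw [hL k ω, hLinf k ω]
    have h2 : (Finf ω - Fstar) / p k ≤ (F (x k ω) - Fstar) / p k :=
      (div_le_div_iff_of_pos_right (hppos k)).2 (by linarith)
    have h3 : (F (x k ω) - Fstar) / p k ≤ (F (x k ω) - Fstar) / p (k-1) :=
      div_le_div_of_nonneg_left (by linarith [hFle (x k ω)]) (hppos _) (hpmono (Nat.sub_le k 1))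
    linarith
  -- δ ≤ Δ a.e.
  have hgap : ∀ k, 1 ≤ k → ∀ᵐ ω ∂μ,
      (μ[L (k+1)|𝓕 k]) ω - (μ[Linf (k+1)|𝓕 k]) ω ≤ L k ω - Linf k ω := by
    intro k hk
    filter_upwards [hcondL k hk, hXi] with ω h1 h2
    have h3 := (h2 k hk).2
    have h4 : Linf k ω - (μ[Linf (k+1)|𝓕 k]) ω ≤
        γ * (v k / p k) * ‖gradient F (x k ω)‖^2 := (abs_le.1 h3).2
    have h5 : 0 ≤ v k / p k * ‖gradient F (x k ω)‖^2 :=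
      mul_nonneg (div_nonneg (hv k) (hppos k).le) (pow_nonneg (norm_nonneg _) 2)
    nlinarith [hγ.2, hγ.1]
  -- δ ≥ 0 a.e.
  have hδ0 : ∀ k, 1 ≤ k → ∀ᵐ ω ∂μ, 0 ≤ (μ[L (k+1)|𝓕 k]) ω - (μ[Linf (k+1)|𝓕 k]) ω := by
    intro k hk
    have hnn : (0:Ω → ℝ) ≤ᵐ[μ] fun ω => L (k+1) ω - Linf (k+1) ω := by
      filter_upwards [hΔ0 (k+1) (by omega)] with ω h
      exact h
    have h := condExp_nonneg (μ := μ) (m := 𝓕 k)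
      (f := fun ω => L (k+1) ω - Linf (k+1) ω) hnn
    filter_upwards [h, hδeq k] with ω h1 h2
    rw [h2]
    exact h1
  -- ψ-composed integrals
  have hψcont : Continuous fun z : ℝ => φ (max z 0) :=
    (phi_contOn hφ).comp_continuous (continuous_id.max continuous_const) fun z => le_max_right z 0
  have hψ0 : ∀ z : ℝ, 0 ≤ φ (max z 0) := fun z => hφ.2.1 _ (le_max_right z 0)
  have hψM : ∀ z : ℝ, φ (max z 0) ≤ M := fun z => hM _ (le_max_right z 0)
  have hψint : ∀ f : Ω → ℝ, AEStronglyMeasurable f μ →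
      Integrable (fun ω => φ (max (f ω) 0)) μ := by
    intro f hf
    refine Integrable.mono' (integrable_const M) (hψcont.comp_aestronglyMeasurable hf) ?_
    exact Eventually.of_forall fun ω => by
      rw [Real.norm_eq_abs, abs_of_nonneg (hψ0 _)]; exact hψM _
  have hΔasm : ∀ k, AEStronglyMeasurable (fun ω => L k ω - Linf k ω) μ :=
    fun k => (hL_int k).1.sub (hLinfasm k)
  have hδasm : ∀ k, AEStronglyMeasurable
      (fun ω => (μ[L (k+1)|𝓕 k]) ω - (μ[Linf (k+1)|𝓕 k]) ω) μ :=
    fun k => ((stronglyMeasurable_condExp.mono (hm k)).aestronglyMeasurable).sub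
      ((stronglyMeasurable_condExp.mono (hm k)).aestronglyMeasurable)
  set a : ℕ → ℝ := fun k => ∫ ω, φ (max (L k ω - Linf k ω) 0) ∂μ with hadef
  set b : ℕ → ℝ := fun k =>
    ∫ ω, φ (max ((μ[L (k+1)|𝓕 k]) ω - (μ[Linf (k+1)|𝓕 k]) ω) 0) ∂μ with hbdef
  have ha0 : ∀ k, 0 ≤ a k := fun k => integral_nonneg fun ω => hψ0 _
  have haM : ∀ k, a k ≤ M := by
    intro k
    calc a k ≤ ∫ _ω, M ∂μ :=
          integral_mono (hψint _ (hΔasm k)) (integrable_const M) fun ω => hψM _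
      _ = M := by simp
  -- Jensen step
  have hJensen : ∀ k, 1 ≤ k → a (k+1) ≤ b k := by
    intro k hk
    have hXint : Integrable (fun ω => L (k+1) ω - Linf (k+1) ω) μ :=
      (hL_int (k+1)).sub (hLinf_int (k+1))
    have hX0 : 0 ≤ᵐ[μ] fun ω => L (k+1) ω - Linf (k+1) ω := by
      filter_upwards [hΔ0 (k+1) (by omega)] with ω h
      exact h
    have h1 := jensen_aux (hm k) μ hφ hM hXint hX0
    refine le_trans h1 (le_of_eq (integral_congr_ae ?_))
    filter_upwards [hδeq k] with ω h
    exact (congrArg (fun z => φ (max z 0)) h).symm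
  -- the terms of the series
  set c : ℕ → ℝ := fun k => s k * p k / v k with hcdef
  have hc0 : ∀ k, 0 ≤ c k := fun k =>
    div_nonneg (mul_nonneg (hs k) (le_trans zero_le_one (hp1 k))) (hv k)
  have hcanti : Antitone c := hmono
  set T : ℕ → Ω → ℝ := fun k ω => c k *
    (φ (L k ω - Linf k ω) - φ ((μ[L (k+1)|𝓕 k]) ω - (μ[Linf (k+1)|𝓕 k]) ω)) with hTdef
  have hTmax : ∀ k, 1 ≤ k → ∀ᵐ ω ∂μ, T k ω =
      c k * (φ (max (L k ω - Linf k ω) 0) -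
        φ (max ((μ[L (k+1)|𝓕 k]) ω - (μ[Linf (k+1)|𝓕 k]) ω) 0)) := by
    intro k hk
    filter_upwards [hΔ0 k hk, hδ0 k hk] with ω h1 h2
    rw [max_eq_left h1, max_eq_left h2]
  have hT0 : ∀ k, 1 ≤ k → ∀ᵐ ω ∂μ, 0 ≤ T k ω := by
    intro k hk
    filter_upwards [hΔ0 k hk, hδ0 k hk, hgap k hk] with ω h1 h2 h3
    have h4 : φ ((μ[L (k+1)|𝓕 k]) ω - (μ[Linf (k+1)|𝓕 k]) ω) ≤ φ (L k ω - Linf k ω) :=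
      phi_mono hφ (Set.mem_Ici.2 h2) (Set.mem_Ici.2 (le_trans h2 h3)) h3
    exact mul_nonneg (hc0 k) (by linarith)
  have hTint : ∀ k, 1 ≤ k → Integrable (T k) μ := by
    intro k hk
    refine Integrable.congr ?_ (EventuallyEq.symm (hTmax k hk))
    exact ((hψint _ (hΔasm k)).sub (hψint _ (hδasm k))).const_mul (c k)
  have hTval : ∀ k, 1 ≤ k → ∫ ω, T k ω ∂μ ≤ c k * (a k - a (k+1)) := by
    intro k hk
    have h1 : ∫ ω, T k ω ∂μ = c k * (a k - b k) := by
      rw [integral_congr_ae (hTmax k hk), integral_const_mul,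
        integral_sub (hψint _ (hΔasm k)) (hψint _ (hδasm k))]
    rw [h1]
    have h2 := hJensen k hk
    exact mul_le_mul_of_nonneg_left (by linarith) (hc0 k)
  have hsum_le : ∀ n, ∑ j ∈ Finset.range n, ∫ ω, T (j+1) ω ∂μ ≤ c 1 * M := by
    intro n
    refine le_trans (Finset.sum_le_sum fun j _ => hTval (j+1) (by omega)) ?_
    exact tele_bound hcanti hc0 ha0 haM n
  -- summability via the lintegral bound
  have hTasm : ∀ k, 1 ≤ k → AEStronglyMeasurable (T k) μ := fun k hk => (hTint k hk).1
  have hlint : ∀ k, 1 ≤ k → ∫⁻ ω, ENNReal.ofReal (T k ω) ∂μ = ENNReal.ofReal (∫ ω, T k ω ∂μ) :=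
    fun k hk => (ofReal_integral_eq_lintegral_ofReal (hTint k hk) (hT0 k hk)).symm
  have hlsum : ∫⁻ ω, ∑' j : ℕ, ENNReal.ofReal (T (j+1) ω) ∂μ ≤ ENNReal.ofReal (c 1 * M) := by
    have hmeas : ∀ j : ℕ, AEMeasurable (fun ω => ENNReal.ofReal (T (j+1) ω)) μ := fun j =>
      ENNReal.measurable_ofReal.comp_aemeasurable (hTasm (j+1) (by omega)).aemeasurable
    rw [lintegral_tsum hmeas]
    calc ∑' j : ℕ, ∫⁻ ω, ENNReal.ofReal (T (j+1) ω) ∂μ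
        = ∑' j : ℕ, ENNReal.ofReal (∫ ω, T (j+1) ω ∂μ) :=
          tsum_congr fun j => hlint (j+1) (by omega)
      _ ≤ ENNReal.ofReal (c 1 * M) := by
          refine ENNReal.tsum_le_of_sum_range_le fun n => ?_
          rw [← ENNReal.ofReal_sum_of_nonneg fun j _ =>
            integral_nonneg_of_ae (hT0 (j+1) (by omega))]
          exact ENNReal.ofReal_le_ofReal (hsum_le n)
  have hae_fin : ∀ᵐ ω ∂μ, ∑' j : ℕ, ENNReal.ofReal (T (j+1) ω) < ⊤ := by
    refine ae_lt_top' (AEMeasurable.ennreal_tsum fun j => ?_) ?_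
    · exact ENNReal.measurable_ofReal.comp_aemeasurable (hTasm (j+1) (by omega)).aemeasurable
    · exact ne_of_lt (lt_of_le_of_lt hlsum ENNReal.ofReal_lt_top)
  have hT0' : ∀ᵐ ω ∂μ, ∀ j : ℕ, 0 ≤ T (j+1) ω := ae_all_iff.2 fun j => hT0 (j+1) (by omega)
  filter_upwards [hae_fin, hT0'] with ω h1 h2
  have h3 := ENNReal.summable_toReal (ne_of_lt h1)
  refine Summable.congr h3 fun j => ?_
  rw [ENNReal.toReal_ofReal (h2 j)]
end

section
/- Let F : H → ℝ be coercive and β-Lipschitz differentiable (β > 0) on a finite-dimensional real Hilbert space H, with minimal value F*. Let (x_k) be generated by the preconditioned stochastic gradient scheme x_{k+1} = x_k − α_k U_k f_k with respect to the canonical filtration 𝓕_k = σ(x_0, …, x_k), where the U_k are 𝓕_k-measurable self-adjoint linear operators satisfying μ_k ‖x‖² ≤ ⟨x, U_k x⟩ ≤ ν_k ‖x‖² a.s. for every x ∈ H, and the gradient estimates satisfy E[‖f_k‖² | 𝓕_k] ≤ a_k (F(x_k) − F*) + b_k ‖∇F(x_k)‖² + c_k a.s. Assume inf_k μ_k > 0,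 ∑_k α_k ν_k a_k^{1/2} < ∞, ∑_k α_k ν_k c_k^{1/2} < ∞, and additionally that (f_k) is conditionally unbiased (E[f_k | 𝓕_k] = ∇F(x_k) a.s. for every k) and inf_k α_k (μ_k − α_k β ν_k² b_k / 2) > 0. Then (x_k) satisfies Assumption 4: there exist non-negative deterministic sequences (u_k), (v_k), (r_k), (s_k), (t_k) and a non-negative 𝓕_k-adapted integrable process (w_k) with ∑ u_k < ∞, inf_k v_k > 0, ∑ r_k < ∞, ∑ t_k < ∞, ∑ w_k < ∞ a.s., such that for all k: E[F(x_{k+1}) − F* | 𝓕_k] ≤ (1 + u_k)(F(x_k) − F*) − v_k ‖∇F(x_k)‖² + w_k a.s. and E[‖x_{k+1} − x_k‖ | 𝓕_k] ≤ r_k √(F(x_k) − F*) + s_k ‖∇F(x_k)‖ + t_k a.s. -/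
open MeasureTheory Filter Topology RealInnerProductSpace

lemma descent_lemma {H : Type*} [NormedAddCommGroup H] [InnerProductSpace ℝ H] [CompleteSpace H] [CompleteSpace H]
    (F : H → ℝ) (β : ℝ) (hβ : 0 ≤ β) (hF_diff : Differentiable ℝ F)
    (hF_lip : LipschitzWith (Real.toNNReal β) (gradient F)) (x y : H) :
    F y ≤ F x + ⟪gradient F x, y - x⟫ + β / 2 * ‖y - x‖ ^ 2 := by
  set d := y - x with hd
  have hc : ∀ t : ℝ, HasDerivAt (fun t : ℝ => x + t • d) d t := by
    intro t
    simpa using ((hasDerivAt_id t).smul_const d).const_add x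
  have hFc : ∀ t : ℝ, HasDerivAt (fun t : ℝ => F (x + t • d))
      (⟪gradient F (x + t • d), d⟫) t := by
    intro t
    have h1 : HasFDerivAt F ((InnerProductSpace.toDual ℝ H) (gradient F (x + t • d))) (x + t • d) :=
      hasGradientAt_iff_hasFDerivAt.mp (hF_diff _).hasGradientAt
    have h7 := h1.comp_hasDerivAt t (hc t)
    simp only [Function.comp_def, InnerProductSpace.toDual_apply_apply] at h7
    exact h7
  set g : ℝ → ℝ := fun t => F (x + t • d) - t * ⟪gradient F x, d⟫ - β / 2 * t ^ 2 * ‖d‖ ^ 2 with hg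
  have hg' : ∀ t : ℝ, HasDerivAt g
      (⟪gradient F (x + t • d), d⟫ - ⟪gradient F x, d⟫ - β * t * ‖d‖ ^ 2) t := by
    intro t
    have h2 : HasDerivAt (fun t : ℝ => t * ⟪gradient F x, d⟫) (⟪gradient F x, d⟫) t := by
      simpa using (hasDerivAt_id t).mul_const _
    have h3 : HasDerivAt (fun t : ℝ => β / 2 * t ^ 2 * ‖d‖ ^ 2) (β * t * ‖d‖ ^ 2) t := by
      have := ((hasDerivAt_pow 2 t).const_mul (β / 2)).mul_const (‖d‖ ^ 2)
      exact this.congr_deriv (by push_cast; ring)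
    exact ((hFc t).sub h2).sub h3
  have hmono : AntitoneOn g (Set.Icc (0:ℝ) 1) := by
    apply antitoneOn_of_deriv_nonpos (convex_Icc 0 1)
    · exact (fun t _ => ((hg' t).continuousAt.continuousWithinAt))
    · exact fun t _ => ((hg' t).differentiableAt.differentiableWithinAt)
    · intro t ht
      rw [interior_Icc] at ht
      rw [(hg' t).deriv]
      have h4 : ⟪gradient F (x + t • d) - gradient F x, d⟫ ≤ β * t * ‖d‖ ^ 2 := by
        calc ⟪gradient F (x + t • d) - gradient F x, d⟫ ≤ ‖gradient F (x + t • d) - gradient F x‖ * ‖d‖ :=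
              real_inner_le_norm _ _
          _ ≤ β * t * ‖d‖ ^ 2 := by
              have h5 := hF_lip.dist_le_mul (x + t • d) x
              simp only [dist_eq_norm, add_sub_cancel_left] at h5
              have h6 : ‖t • d‖ = t * ‖d‖ := by
                rw [norm_smul, Real.norm_eq_abs, abs_of_nonneg ht.1.le]
              rw [h6, Real.coe_toNNReal _ hβ] at h5
              calc ‖gradient F (x + t • d) - gradient F x‖ * ‖d‖ ≤ (β * (t * ‖d‖)) * ‖d‖ := by
                    apply mul_le_mul_of_nonneg_right _ (norm_nonneg d)
                    exact h5
                _ = β * t * ‖d‖ ^ 2 := by ring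
      rw [inner_sub_left] at h4
      linarith
  have := hmono (Set.left_mem_Icc.mpr one_pos.le) (Set.right_mem_Icc.mpr one_pos.le) one_pos.le
  simp only [hg, one_smul, zero_smul, add_zero, zero_pow, one_pow, mul_one, mul_zero, zero_mul,
    sub_zero, one_mul] at this
  have hxy : x + d = y := by rw [hd]; abel
  rw [hxy] at this
  linarith

-- gradient norm squared bound
lemma grad_sq_bound {H : Type*} [NormedAddCommGroup H] [InnerProductSpace ℝ H] [CompleteSpace H]
    (F : H → ℝ) (β : ℝ) (hβ : 0 < β) (hF_diff : Differentiable ℝ F)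
    (hF_lip : LipschitzWith (Real.toNNReal β) (gradient F))
    (Fstar : ℝ) (hFstar : ∀ z, Fstar ≤ F z) (z : H) :
    ‖gradient F z‖ ^ 2 ≤ 2 * β * (F z - Fstar) := by
  have hd := descent_lemma F β hβ.le hF_diff hF_lip z (z - β⁻¹ • gradient F z)
  have h1 : (z - β⁻¹ • gradient F z) - z = -(β⁻¹ • gradient F z) := by abel
  rw [h1] at hd
  have h2 : ⟪gradient F z, -(β⁻¹ • gradient F z)⟫ = -(β⁻¹ * ‖gradient F z‖ ^ 2) := by
    rw [inner_neg_right, real_inner_smul_right, real_inner_self_eq_norm_sq]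
  have h3 : ‖-(β⁻¹ • gradient F z)‖ ^ 2 = β⁻¹ ^ 2 * ‖gradient F z‖ ^ 2 := by
    rw [norm_neg, norm_smul, Real.norm_eq_abs, abs_of_nonneg (by positivity : (0:ℝ) ≤ β⁻¹)]
    ring
  rw [h2, h3] at hd
  have h4 := hFstar (z - β⁻¹ • gradient F z)
  have hβ' : β⁻¹ * β = 1 := inv_mul_cancel₀ hβ.ne'
  have e : β / 2 * (β⁻¹ ^ 2 * ‖gradient F z‖ ^ 2) = β⁻¹ / 2 * ‖gradient F z‖ ^ 2 := by
    field_simp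
  rw [e] at hd
  have key : β⁻¹ / 2 * ‖gradient F z‖ ^ 2 ≤ F z - Fstar := by linarith
  calc ‖gradient F z‖ ^ 2 = 2 * β * (β⁻¹ / 2 * ‖gradient F z‖ ^ 2) := by
        field_simp
    _ ≤ 2 * β * (F z - Fstar) := mul_le_mul_of_nonneg_left key (by positivity)


-- operator norm bound from form bound, for selfadjoint A
lemma selfadj_norm_bound {H : Type*} [NormedAddCommGroup H] [InnerProductSpace ℝ H]
    (A : H →L[ℝ] H) (hA : ∀ y z : H, ⟪A y, z⟫ = ⟪y, A z⟫) (ν : ℝ)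
    (hlow : ∀ z : H, 0 ≤ ⟪z, A z⟫) (hup : ∀ z : H, ⟪z, A z⟫ ≤ ν * ‖z‖ ^ 2)
    (z : H) : ‖A z‖ ≤ ν * ‖z‖ := by
  by_cases hAz : A z = 0
  · rw [hAz, norm_zero]
    rcases eq_or_ne z 0 with hz | hz
    · simp [hz]
    · have hzn : (0:ℝ) < ‖z‖ := norm_pos_iff.mpr hz
      have := (hlow z).trans (hup z)
      nlinarith
  · have hz : z ≠ 0 := fun h => hAz (by rw [h, map_zero])
    have hzn : (0:ℝ) < ‖z‖ := norm_pos_iff.mpr hz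
    set y : H := (‖z‖ / ‖A z‖) • A z with hy
    have hAzn : (0:ℝ) < ‖A z‖ := norm_pos_iff.mpr hAz
    have hyn : ‖y‖ = ‖z‖ := by
      rw [hy, norm_smul, Real.norm_eq_abs, abs_of_nonneg (by positivity), div_mul_cancel₀]
      exact hAzn.ne'
    -- 4⟪Az, y⟫ = ⟪A(z+y), z+y⟫ - ⟪A(z-y), z-y⟫
    have hpol : 4 * ⟪A z, y⟫ = ⟪z + y, A (z + y)⟫ - ⟪z - y, A (z - y)⟫ := by
      simp only [map_add, map_sub, inner_add_left, inner_add_right, inner_sub_left,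
        inner_sub_right]
      have h1 : ⟪y, A z⟫ = ⟪A z, y⟫ := real_inner_comm _ _
      have h2 : ⟪z, A y⟫ = ⟪A z, y⟫ := by rw [← hA z y]
      linarith
    have h3 : ⟪z + y, A (z + y)⟫ ≤ ν * ‖z + y‖ ^ 2 := hup _
    have h4 : 0 ≤ ⟪z - y, A (z - y)⟫ := hlow _
    have h5 : ‖z + y‖ ^ 2 ≤ 4 * ‖z‖ ^ 2 := by
      have := norm_add_le z y
      rw [hyn] at this
      nlinarith [norm_nonneg z, norm_nonneg (z + y)]
    have h6 : ⟪A z, y⟫ = ‖z‖ * ‖A z‖ := by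
      rw [hy, real_inner_smul_right, real_inner_self_eq_norm_sq]
      field_simp
    have hν : 0 ≤ ν := by
      have := (hlow z).trans (hup z)
      nlinarith
    nlinarith [mul_le_mul_of_nonneg_left h5 hν, mul_pos hzn hAzn]


lemma condexp_comp_clm' {Ω : Type*} {m m0 : MeasurableSpace Ω} {μ : Measure Ω}
    [IsFiniteMeasure μ] (hm : m ≤ m0)
    {E F' : Type*} [NormedAddCommGroup E] [NormedSpace ℝ E] [CompleteSpace E]
    [NormedAddCommGroup F'] [NormedSpace ℝ F'] [CompleteSpace F']
    (T : E →L[ℝ] F') {f : Ω → E} (hf : Integrable f μ) :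
    (fun ω => T ((μ[f|m]) ω)) =ᵐ[μ] μ[fun ω => T (f ω)|m] := by
  haveI : SigmaFinite (μ.trim hm) := inferInstance
  refine ae_eq_condExp_of_forall_setIntegral_eq hm (T.integrable_comp hf)
    (fun s _ _ => (T.integrable_comp integrable_condExp).integrableOn)
    (fun s hs hμs => ?_)
    (StronglyMeasurable.aestronglyMeasurable (T.continuous.comp_stronglyMeasurable stronglyMeasurable_condExp))
  rw [T.integral_comp_comm integrable_condExp.integrableOn,
    T.integral_comp_comm hf.integrableOn, setIntegral_condExp hm hf hs]

/-- Pull-out property for inner products with an `m`-measurable vector factor. -/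
lemma condexp_inner_pull {Ω : Type*} {m m0 : MeasurableSpace Ω} {μ : Measure Ω}
    [IsFiniteMeasure μ] (hm : m ≤ m0)
    {H : Type*} [NormedAddCommGroup H] [InnerProductSpace ℝ H] [FiniteDimensional ℝ H]
    {g f : Ω → H} (hg : StronglyMeasurable[m] g) (hf : Integrable f μ)
    (hgf : Integrable (fun ω => ‖g ω‖ * ‖f ω‖) μ) :
    μ[fun ω => ⟪g ω, f ω⟫|m] =ᵐ[μ] fun ω => ⟪g ω, (μ[f|m]) ω⟫ := by
  classical
  set b := stdOrthonormalBasis ℝ H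
  set n := Module.finrank ℝ H
  have hsum : (fun ω => ⟪g ω, f ω⟫) =
      ∑ i : Fin n, fun ω => ⟪g ω, b i⟫ * ⟪b i, f ω⟫ := by
    funext ω
    rw [Finset.sum_apply]
    exact (b.sum_inner_mul_inner (g ω) (f ω)).symm
  have hgm0 : StronglyMeasurable g := hg.mono hm
  have hbnorm : ∀ i : Fin n, ‖b i‖ = 1 := fun i => b.orthonormal.1 i
  have hint : ∀ i : Fin n, Integrable (fun ω => ⟪g ω, b i⟫ * ⟪b i, f ω⟫) μ := by
    intro i
    refine Integrable.mono hgf ?_ (Filter.Eventually.of_forall fun ω => ?_)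
    · exact (hgm0.aestronglyMeasurable.inner
        (aestronglyMeasurable_const : AEStronglyMeasurable (fun _ => b i) μ)).mul
        ((aestronglyMeasurable_const : AEStronglyMeasurable (fun _ => b i) μ).inner hf.1)
    · rw [Real.norm_eq_abs, abs_mul, Real.norm_eq_abs, abs_of_nonneg
        (mul_nonneg (norm_nonneg _) (norm_nonneg _))]
      have h1 : |⟪g ω, b i⟫| ≤ ‖g ω‖ := by
        calc |⟪g ω, b i⟫| ≤ ‖g ω‖ * ‖b i‖ := abs_real_inner_le_norm _ _
          _ = ‖g ω‖ := by rw [hbnorm i, mul_one]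
      have h2 : |⟪b i, f ω⟫| ≤ ‖f ω‖ := by
        calc |⟪b i, f ω⟫| ≤ ‖b i‖ * ‖f ω‖ := abs_real_inner_le_norm _ _
          _ = ‖f ω‖ := by rw [hbnorm i, one_mul]
      exact mul_le_mul h1 h2 (abs_nonneg _) (norm_nonneg _)
  have h_i : ∀ i : Fin n, (μ[fun ω => ⟪g ω, b i⟫ * ⟪b i, f ω⟫|m]) =ᵐ[μ]
      fun ω => ⟪g ω, b i⟫ * ⟪b i, (μ[f|m]) ω⟫ := by
    intro i
    have hfm : StronglyMeasurable[m] (fun ω => ⟪g ω, b i⟫) :=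
      hg.inner (stronglyMeasurable_const : StronglyMeasurable[m] (fun _ => b i))
    have hmul := condExp_mul_of_stronglyMeasurable_left (μ := μ) hfm
      (by simpa [Pi.mul_def] using hint i)
      ((innerSL ℝ (b i)).integrable_comp hf)
    have hclm := condexp_comp_clm' hm (innerSL ℝ (b i)) hf
    simp only [innerSL_apply_apply] at hmul hclm
    have : (fun ω => ⟪g ω, b i⟫) * (μ[fun ω => ⟪b i, f ω⟫|m]) =ᵐ[μ]
        fun ω => ⟪g ω, b i⟫ * ⟪b i, (μ[f|m]) ω⟫ := by
      filter_upwards [hclm] with ω hω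
      simp only [Pi.mul_apply]
      rw [← hω]
    calc μ[fun ω => ⟪g ω, b i⟫ * ⟪b i, f ω⟫|m]
        = μ[(fun ω => ⟪g ω, b i⟫) * fun ω => ⟪b i, f ω⟫|m] := rfl
      _ =ᵐ[μ] (fun ω => ⟪g ω, b i⟫) * (μ[fun ω => ⟪b i, f ω⟫|m]) := hmul
      _ =ᵐ[μ] fun ω => ⟪g ω, b i⟫ * ⟪b i, (μ[f|m]) ω⟫ := this
  have hall : ∀ᵐ ω ∂μ, ∀ i : Fin n, (μ[fun ω => ⟪g ω, b i⟫ * ⟪b i, f ω⟫|m]) ω =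
      ⟪g ω, b i⟫ * ⟪b i, (μ[f|m]) ω⟫ := ae_all_iff.2 fun i => h_i i
  have hce : μ[fun ω => ⟪g ω, f ω⟫|m] =ᵐ[μ]
      ∑ i : Fin n, μ[fun ω => ⟪g ω, b i⟫ * ⟪b i, f ω⟫|m] := by
    rw [hsum]
    exact condExp_finsetSum (fun i _ => hint i) _
  filter_upwards [hce, hall] with ω hω hωall
  rw [hω, Finset.sum_apply]
  rw [Finset.sum_congr rfl fun i _ => hωall i]
  exact b.sum_inner_mul_inner (g ω) ((μ[f|m]) ω)


lemma le_sqrt_of_rat_bound {L M : ℝ} (hM : 0 ≤ M)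
    (h : ∀ q : ℚ, 0 < (q:ℝ) → L ≤ M / (2*q) + q/2) : L ≤ Real.sqrt M := by
  refine le_of_forall_pos_le_add fun ε hε => ?_
  obtain ⟨q, hq1, hq2⟩ := exists_rat_btwn (lt_add_of_pos_right (Real.sqrt M) hε)
  have hq0 : 0 < (q:ℝ) := lt_of_le_of_lt (Real.sqrt_nonneg M) hq1
  have h1 := h q hq0
  have h2 : M / (2*q) ≤ Real.sqrt M / 2 := by
    have hs : Real.sqrt M * Real.sqrt M = M := Real.mul_self_sqrt hM
    rw [div_le_div_iff₀ (by positivity) two_pos]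
    nlinarith [hs, Real.sqrt_nonneg M]
  linarith

/-- conditional Cauchy-Schwarz / Jensen for the square root -/
lemma condexp_le_sqrt_condexp_sq {Ω : Type*} {m m0 : MeasurableSpace Ω} {μ : Measure Ω}
    [IsFiniteMeasure μ] (hm : m ≤ m0) {g : Ω → ℝ} (hg0 : ∀ ω, 0 ≤ g ω)
    (hgi : Integrable g μ) (hg2i : Integrable (fun ω => g ω ^ 2) μ) :
    ∀ᵐ ω ∂μ, (μ[g|m]) ω ≤ Real.sqrt ((μ[fun ω' => g ω' ^ 2|m]) ω) := by
  haveI : SigmaFinite (μ.trim hm) := inferInstance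
  have hq : ∀ q : ℚ, 0 < (q:ℝ) → ∀ᵐ ω ∂μ,
      (μ[g|m]) ω ≤ (μ[fun ω' => g ω' ^ 2|m]) ω / (2*q) + q/2 := by
    intro q hq0
    have hpt : g ≤ᵐ[μ] fun ω => (1/(2*(q:ℝ))) • (g ω ^ 2) + q/2 := by
      refine Filter.Eventually.of_forall fun ω => ?_
      show g ω ≤ (1/(2*(q:ℝ))) * (g ω ^ 2) + (q:ℝ)/2
      have hnum : 0 ≤ g ω ^ 2 + (q:ℝ)*(q:ℝ) - g ω * (2*(q:ℝ)) := by nlinarith [sq_nonneg (g ω - q)]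
      have hdiff : (1/(2*(q:ℝ))) * (g ω ^ 2) + (q:ℝ)/2 - g ω
          = (g ω ^ 2 + (q:ℝ)*(q:ℝ) - g ω * (2*(q:ℝ))) / (2*(q:ℝ)) := by
        field_simp
      have := div_nonneg hnum (by positivity : (0:ℝ) ≤ 2*(q:ℝ))
      linarith
    have hrhs_int : Integrable (fun ω => (1/(2*(q:ℝ))) • (g ω ^ 2) + (q:ℝ)/2) μ :=
      ((hg2i.smul (1/(2*(q:ℝ)))).add (integrable_const _))
    have hmono := condExp_mono (m := m) hgi hrhs_int hpt
    have hsplit : μ[fun ω => (1/(2*(q:ℝ))) • (g ω ^ 2) + (q:ℝ)/2|m] =ᵐ[μ]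
        fun ω => (1/(2*(q:ℝ))) * (μ[fun ω' => g ω' ^ 2|m]) ω + (q:ℝ)/2 := by
      have h1 : (fun ω => (1/(2*(q:ℝ))) • (g ω ^ 2) + (q:ℝ)/2)
          = ((1/(2*(q:ℝ))) • fun ω => g ω ^ 2) + fun _ => (q:ℝ)/2 := rfl
      rw [h1]
      calc μ[((1/(2*(q:ℝ))) • fun ω => g ω ^ 2) + fun _ => (q:ℝ)/2|m]
          =ᵐ[μ] μ[(1/(2*(q:ℝ))) • fun ω => g ω ^ 2|m] + μ[fun _ => (q:ℝ)/2|m] :=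
            condExp_add (hg2i.smul _) (integrable_const _) _
        _ =ᵐ[μ] fun ω => (1/(2*(q:ℝ))) * (μ[fun ω' => g ω' ^ 2|m]) ω + (q:ℝ)/2 := by
            have h2 := condExp_smul (μ := μ) (m := m) (1/(2*(q:ℝ))) (fun ω => g ω ^ 2)
            have h3 : μ[fun _ => (q:ℝ)/2|m] = fun _ => (q:ℝ)/2 := condExp_const hm _
            filter_upwards [h2] with ω hω
            simp only [Pi.add_apply, hω, h3, Pi.smul_apply, smul_eq_mul]
    filter_upwards [hmono, hsplit] with ω h4 h5
    calc (μ[g|m]) ω ≤ (μ[fun ω => (1/(2*(q:ℝ))) • (g ω ^ 2) + (q:ℝ)/2|m]) ω := h4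
      _ = (1/(2*(q:ℝ))) * (μ[fun ω' => g ω' ^ 2|m]) ω + (q:ℝ)/2 := h5
      _ = (μ[fun ω' => g ω' ^ 2|m]) ω / (2*q) + q/2 := by ring
  have hpos : ∀ᵐ ω ∂μ, 0 ≤ (μ[fun ω' => g ω' ^ 2|m]) ω :=
    condExp_nonneg (Filter.Eventually.of_forall fun ω => sq_nonneg _)
  have hall : ∀ᵐ ω ∂μ, ∀ q : ℚ, 0 < (q:ℝ) →
      (μ[g|m]) ω ≤ (μ[fun ω' => g ω' ^ 2|m]) ω / (2*q) + q/2 := by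
    rw [ae_all_iff]
    intro q
    by_cases hq0 : 0 < (q:ℝ)
    · filter_upwards [hq q hq0] with ω hω _
      exact hω
    · exact Filter.Eventually.of_forall fun ω h => absurd h hq0
  filter_upwards [hall, hpos] with ω h1 h2
  exact le_sqrt_of_rat_bound h2 fun q hq0 => h1 q hq0

lemma my_sqrt_add_le (x y : ℝ) (hx : 0 ≤ x) (hy : 0 ≤ y) :
    Real.sqrt (x + y) ≤ Real.sqrt x + Real.sqrt y := by
  have h1 : Real.sqrt x ^ 2 = x := Real.sq_sqrt hx
  have h2 : Real.sqrt y ^ 2 = y := Real.sq_sqrt hy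
  have h3 : x + y ≤ (Real.sqrt x + Real.sqrt y) ^ 2 := by
    nlinarith [Real.sqrt_nonneg x, Real.sqrt_nonneg y]
  calc Real.sqrt (x + y) ≤ Real.sqrt ((Real.sqrt x + Real.sqrt y) ^ 2) := Real.sqrt_le_sqrt h3
    _ = Real.sqrt x + Real.sqrt y := Real.sqrt_sq (by positivity)

lemma my_summable_sq {g : ℕ → ℝ} (hg0 : ∀ n, 0 ≤ g n) (hg : Summable g) :
    Summable (fun n => g n ^ 2) := by
  have h0 := hg.tendsto_atTop_zero
  have h1 : ∀ᶠ n in atTop, g n ≤ 1 := h0.eventually_le_const (by norm_num : (0:ℝ) < 1)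
  obtain ⟨N, hN⟩ := (Filter.eventually_atTop).1 h1
  rw [← summable_nat_add_iff N]
  refine Summable.of_nonneg_of_le (fun n => sq_nonneg _) (fun n => ?_)
    ((summable_nat_add_iff N).2 hg)
  have h2 : g (n + N) ≤ 1 := hN (n + N) (by omega)
  nlinarith [hg0 (n + N)]

/-- **Proposition 7, case (i).** A preconditioned stochastic gradient scheme
with conditionally unbiased gradient estimates satisfying the second-moment bound, under the
stated step-size and spectrum conditions, satisfies Assumption 4. -/
theorem sgd_unbiased_satisfies_assumption4
    {H : Type*} [NormedAddCommGroup H] [InnerProductSpace ℝ H] [FiniteDimensional ℝ H]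
    [MeasurableSpace H] [BorelSpace H]
    {Ω : Type*} {m0 : MeasurableSpace Ω} (μ : Measure Ω) [IsProbabilityMeasure μ]
    (F : H → ℝ)
    (hF_coercive : Tendsto F (Bornology.cobounded H) atTop)
    (β : ℝ) (hβ : 0 < β)
    (hF_diff : Differentiable ℝ F)
    (hF_lip : LipschitzWith (Real.toNNReal β) (gradient F))
    (Fstar : ℝ) (hFstar : IsLeast (Set.range F) Fstar)
    (x : ℕ → Ω → H) (hx_meas : ∀ k, StronglyMeasurable (x k))
    (f : ℕ → Ω → H) (hf_int : ∀ k, Integrable (f k) μ)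
    (hf_sq_int : ∀ k, Integrable (fun ω => ‖f k ω‖ ^ 2) μ)
    (U : ℕ → Ω → H →L[ℝ] H)
    (α a b c μ' ν : ℕ → ℝ)
    (hα : ∀ k, 0 < α k) (ha : ∀ k, 0 ≤ a k) (hb : ∀ k, 0 ≤ b k) (hc : ∀ k, 0 ≤ c k)
    (hμ'_pos : ∀ k, 0 < μ' k) (hν_pos : ∀ k, 0 < ν k)
    -- the preconditioned stochastic gradient scheme
    (hscheme : ∀ k ω, x (k + 1) ω = x k ω - α k • (U k ω) (f k ω))
    -- `U k` is `𝓕 k`-measurable and self-adjoint, with a.s. uniformly bounded spectrum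
    (hU_adapted : ∀ k, StronglyMeasurable[(Filtration.natural x hx_meas) k] (U k))
    (hU_selfadj : ∀ k ω, ∀ y z : H, ⟪(U k ω) y, z⟫ = ⟪y, (U k ω) z⟫)
    (hU_spectrum : ∀ k, ∀ᵐ ω ∂μ, ∀ z : H,
      μ' k * ‖z‖ ^ 2 ≤ ⟪z, (U k ω) z⟫ ∧ ⟪z, (U k ω) z⟫ ≤ ν k * ‖z‖ ^ 2)
    -- conditional second moment bound on the gradient estimates
    (hmoment : ∀ k, ∀ᵐ ω ∂μ,
      (μ[fun ω' => ‖f k ω'‖ ^ 2 | (Filtration.natural x hx_meas) k]) ω ≤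
        a k * (F (x k ω) - Fstar) + b k * ‖gradient F (x k ω)‖ ^ 2 + c k)
    -- conditions (5.9)
    (hμ'_inf : ∃ ε > (0:ℝ), ∀ k, ε ≤ μ' k)
    (hsum_a : Summable fun k => α k * ν k * Real.sqrt (a k))
    (hsum_c : Summable fun k => α k * ν k * Real.sqrt (c k))
    -- case (i): conditionally unbiased gradient estimates
    (hunbiased : ∀ k,
      μ[f k | (Filtration.natural x hx_meas) k] =ᵐ[μ] fun ω => gradient F (x k ω))
    (hstep : ∃ ε > (0:ℝ), ∀ k, ε ≤ α k * (μ' k - α k * β * ν k ^ 2 * b k / 2)) :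
    ∃ (u v r s t : ℕ → ℝ) (w : ℕ → Ω → ℝ),
      (∀ k, 0 ≤ u k) ∧ (∀ k, 0 ≤ v k) ∧ (∀ k, 0 ≤ r k) ∧
      (∀ k, 0 ≤ s k) ∧ (∀ k, 0 ≤ t k) ∧ (∀ k ω, 0 ≤ w k ω) ∧
      (∀ k, StronglyMeasurable[(Filtration.natural x hx_meas) k] (w k)) ∧
      (∀ k, Integrable (w k) μ) ∧
      Summable u ∧ (∃ ε > (0:ℝ), ∀ k, ε ≤ v k) ∧ Summable r ∧ Summable t ∧
      (∀ᵐ ω ∂μ, Summable fun k => w k ω) ∧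
      (∀ k, ∀ᵐ ω ∂μ,
        (μ[fun ω' => F (x (k + 1) ω') - Fstar | (Filtration.natural x hx_meas) k]) ω ≤
          (1 + u k) * (F (x k ω) - Fstar) - v k * ‖gradient F (x k ω)‖ ^ 2 + w k ω) ∧
      (∀ k, ∀ᵐ ω ∂μ,
        (μ[fun ω' => ‖x (k + 1) ω' - x k ω'‖ | (Filtration.natural x hx_meas) k]) ω ≤
          r k * Real.sqrt (F (x k ω) - Fstar) + s k * ‖gradient F (x k ω)‖ + t k) := by
  classical
  obtain ⟨ε₀, hε₀, hεstep⟩ := hstep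
  have hFst : ∀ z, Fstar ≤ F z := fun z => hFstar.2 ⟨z, rfl⟩
  have hβ2 : (0:ℝ) < 1/(2*β) := by positivity
  set ℱ := Filtration.natural x hx_meas with hℱdef
  have hm : ∀ k, ℱ k ≤ m0 := fun k => ℱ.le k
  set C : ℕ → ℝ := fun k => β * α k ^ 2 * ν k ^ 2 / 2 with hCdef
  have hC0 : ∀ k, 0 ≤ C k := fun k => by
    have := hβ.le
    positivity
  have hCa : ∀ k, C k * a k = β / 2 * (α k * ν k * Real.sqrt (a k)) ^ 2 := by
    intro k
    have : Real.sqrt (a k) ^ 2 = a k := Real.sq_sqrt (ha k)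
    simp only [hCdef, mul_pow, this]
    ring
  have hCc : ∀ k, C k * c k = β / 2 * (α k * ν k * Real.sqrt (c k)) ^ 2 := by
    intro k
    have : Real.sqrt (c k) ^ 2 = c k := Real.sq_sqrt (hc k)
    simp only [hCdef, mul_pow, this]
    ring
  have hsum_u : Summable (fun k => C k * a k) := by
    have h1 : Summable (fun k => β / 2 * (α k * ν k * Real.sqrt (a k)) ^ 2) :=
      (my_summable_sq (fun n => mul_nonneg (mul_nonneg (hα n).le (hν_pos n).le)
        (Real.sqrt_nonneg _)) hsum_a).mul_left _
    exact h1.congr fun k => (hCa k).symm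
  have hsum_w : Summable (fun k => C k * c k) := by
    have h1 : Summable (fun k => β / 2 * (α k * ν k * Real.sqrt (c k)) ^ 2) :=
      (my_summable_sq (fun n => mul_nonneg (mul_nonneg (hα n).le (hν_pos n).le)
        (Real.sqrt_nonneg _)) hsum_c).mul_left _
    exact h1.congr fun k => (hCc k).symm
  -- a.e. operator norm bound
  have hop : ∀ k, ∀ᵐ ω ∂μ, ∀ z : H, ‖U k ω z‖ ≤ ν k * ‖z‖ := by
    intro k
    filter_upwards [hU_spectrum k] with ω hω z
    exact selfadj_norm_bound (U k ω) (hU_selfadj k ω) (ν k)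
      (fun z' => le_trans (mul_nonneg (hμ'_pos k).le (by positivity)) (hω z').1)
      (fun z' => (hω z').2) z
  -- gradient square bound
  have hgs : ∀ z : H, ‖gradient F z‖ ^ 2 ≤ 2 * β * (F z - Fstar) :=
    grad_sq_bound F β hβ hF_diff hF_lip Fstar hFst
  -- measurability of building blocks
  have hx_m : ∀ k, StronglyMeasurable[ℱ k] (x k) := Filtration.stronglyAdapted_natural hx_meas
  have hFx_m : ∀ k, StronglyMeasurable[ℱ k] (fun ω => F (x k ω) - Fstar) := fun k =>
    (hF_diff.continuous.comp_stronglyMeasurable (hx_m k)).sub stronglyMeasurable_const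
  have hgx_m : ∀ k, StronglyMeasurable[ℱ k] (fun ω => gradient F (x k ω)) := fun k =>
    hF_lip.continuous.comp_stronglyMeasurable (hx_m k)
  have hg_m : ∀ k, StronglyMeasurable[ℱ k] (fun ω => U k ω (gradient F (x k ω))) := by
    intro k
    have hpair : StronglyMeasurable[ℱ k] (fun ω => (U k ω, gradient F (x k ω))) :=
      (hU_adapted k).prodMk (hgx_m k)
    exact (isBoundedBilinearMap_apply.continuous).comp_stronglyMeasurable hpair
  -- pointwise displacement identity and bound
  have hΔeq : ∀ k ω, x (k+1) ω - x k ω = -(α k • U k ω (f k ω)) := by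
    intro k ω
    rw [hscheme k ω]
    abel
  have hΔbound : ∀ k, ∀ᵐ ω ∂μ, ‖x (k+1) ω - x k ω‖ ≤ α k * ν k * ‖f k ω‖ := by
    intro k
    filter_upwards [hop k] with ω hω
    rw [hΔeq k ω, norm_neg, norm_smul, Real.norm_eq_abs, abs_of_pos (hα k)]
    calc α k * ‖U k ω (f k ω)‖ ≤ α k * (ν k * ‖f k ω‖) :=
          mul_le_mul_of_nonneg_left (hω _) (hα k).le
      _ = α k * ν k * ‖f k ω‖ := by ring
  refine ⟨fun k => C k * a k,
    fun k => min (α k * (μ' k - α k * β * ν k ^ 2 * b k / 2)) (1/(2*β)),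
    fun k => α k * ν k * Real.sqrt (a k),
    fun k => α k * ν k * Real.sqrt (b k),
    fun k => α k * ν k * Real.sqrt (c k),
    fun k _ => C k * c k,
    fun k => mul_nonneg (hC0 k) (ha k),
    fun k => le_min (le_trans hε₀.le (hεstep k)) hβ2.le,
    fun k => mul_nonneg (mul_nonneg (hα k).le (hν_pos k).le) (Real.sqrt_nonneg _),
    fun k => mul_nonneg (mul_nonneg (hα k).le (hν_pos k).le) (Real.sqrt_nonneg _),
    fun k => mul_nonneg (mul_nonneg (hα k).le (hν_pos k).le) (Real.sqrt_nonneg _),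
    fun k _ => mul_nonneg (hC0 k) (hc k),
    fun k => stronglyMeasurable_const,
    fun k => integrable_const _,
    hsum_u,
    ⟨min ε₀ (1/(2*β)), lt_min hε₀ hβ2, fun k => min_le_min (hεstep k) le_rfl⟩,
    hsum_a, hsum_c,
    Filter.Eventually.of_forall (fun ω => hsum_w),
    ?_, ?_⟩
  · -- first inequality
    intro k
    haveI : SigmaFinite (μ.trim (hm k)) := inferInstance
    set g : Ω → H := fun ω => U k ω (gradient F (x k ω)) with hgdef
    set v : ℝ := min (α k * (μ' k - α k * β * ν k ^ 2 * b k / 2)) (1/(2*β)) with hvdef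
    have hv0 : 0 ≤ v := le_min (le_trans hε₀.le (hεstep k)) hβ2.le
    by_cases hintk : Integrable (fun ω => F (x k ω) - Fstar) μ
    · -- Case A: F (x k) - Fstar integrable
      have hsmgrad : StronglyMeasurable (fun ω => ‖gradient F (x k ω)‖ ^ 2) := by
        have hsm := ((hgx_m k).mono (hm k)).norm
        have he : (fun ω => ‖gradient F (x k ω)‖ ^ 2)
            = fun ω => ‖gradient F (x k ω)‖ * ‖gradient F (x k ω)‖ := by
          funext ω; ring
        rw [he]; exact hsm.mul hsm
      have hgradsq_int : Integrable (fun ω => ‖gradient F (x k ω)‖ ^ 2) μ := by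
        refine Integrable.mono' (hintk.const_mul (2*β)) hsmgrad.aestronglyMeasurable
          (Filter.Eventually.of_forall fun ω => ?_)
        rw [Real.norm_eq_abs, abs_of_nonneg (by positivity)]
        exact hgs (x k ω)
      have hgf_int : Integrable (fun ω => ‖g ω‖ * ‖f k ω‖) μ := by
        refine Integrable.mono' ((hgradsq_int.add (hf_sq_int k)).const_mul (ν k / 2))
          (((hg_m k).mono (hm k)).norm.aestronglyMeasurable.mul (hf_int k).1.norm) ?_
        filter_upwards [hop k] with ω hω
        rw [Real.norm_eq_abs, abs_of_nonneg (mul_nonneg (norm_nonneg _) (norm_nonneg _))]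
        have h1 : ‖g ω‖ ≤ ν k * ‖gradient F (x k ω)‖ := hω _
        have h2 : ‖g ω‖ * ‖f k ω‖ ≤ (ν k * ‖gradient F (x k ω)‖) * ‖f k ω‖ :=
          mul_le_mul_of_nonneg_right h1 (norm_nonneg _)
        simp only [Pi.add_apply]
        nlinarith [mul_nonneg (hν_pos k).le (sq_nonneg (‖gradient F (x k ω)‖ - ‖f k ω‖))]
      set G2 : Ω → ℝ := fun ω => ⟪g ω, f k ω⟫ with hG2def
      have hG2_int : Integrable G2 μ := by
        refine Integrable.mono' hgf_int
          (((hg_m k).mono (hm k)).aestronglyMeasurable.inner (hf_int k).1)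
          (Filter.Eventually.of_forall fun ω => ?_)
        rw [Real.norm_eq_abs]
        exact abs_real_inner_le_norm _ _
      set G1 : Ω → ℝ := fun ω => F (x k ω) - Fstar with hG1def
      set G3 : Ω → ℝ := fun ω => ‖f k ω‖ ^ 2 with hG3def
      set G : Ω → ℝ := G1 + (-(α k)) • G2 + C k • G3 with hGdef
      have hGapp : ∀ ω, G ω = G1 ω + (-(α k)) * G2 ω + C k * G3 ω := fun ω => rfl
      have hG_int : Integrable G μ := (hintk.add (hG2_int.smul _)).add ((hf_sq_int k).smul _)
      -- pointwise descent bound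
      have hpt : ∀ᵐ ω ∂μ, F (x (k+1) ω) - Fstar ≤ G ω := by
        filter_upwards [hop k] with ω hω
        have hdesc := descent_lemma F β hβ.le hF_diff hF_lip (x k ω) (x (k+1) ω)
        rw [hΔeq k ω] at hdesc
        have e1 : ⟪gradient F (x k ω), -(α k • U k ω (f k ω))⟫ = -(α k * G2 ω) := by
          rw [inner_neg_right, real_inner_smul_right,
            ← hU_selfadj k ω (gradient F (x k ω)) (f k ω)]
        have e2 : ‖-(α k • U k ω (f k ω))‖ ^ 2 = α k ^ 2 * ‖U k ω (f k ω)‖ ^ 2 := by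
          rw [norm_neg, norm_smul, Real.norm_eq_abs, abs_of_pos (hα k)]
          ring
        have e3 : ‖U k ω (f k ω)‖ ^ 2 ≤ (ν k * ‖f k ω‖) ^ 2 :=
          pow_le_pow_left₀ (norm_nonneg _) (hω _) 2
        rw [e1, e2] at hdesc
        rw [hGapp ω]
        have hβα : (0:ℝ) ≤ β / 2 * α k ^ 2 := by positivity
        have e4 : β / 2 * (α k ^ 2 * ‖U k ω (f k ω)‖ ^ 2)
            ≤ β / 2 * (α k ^ 2 * (ν k * ‖f k ω‖) ^ 2) := by
          apply mul_le_mul_of_nonneg_left _ (by positivity : (0:ℝ) ≤ β / 2)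
          exact mul_le_mul_of_nonneg_left e3 (by positivity)
        have e5 : β / 2 * (α k ^ 2 * (ν k * ‖f k ω‖) ^ 2) = C k * G3 ω := by
          simp only [hCdef, hG3def, mul_pow]
          ring
        simp only [hG1def, hG2def] at *
        linarith
      have hF1_int : Integrable (fun ω => F (x (k+1) ω) - Fstar) μ := by
        refine Integrable.mono' hG_int
          ((hF_diff.continuous.comp_stronglyMeasurable
            (hx_meas (k+1))).sub stronglyMeasurable_const).aestronglyMeasurable ?_
        filter_upwards [hpt] with ω hω
        rw [Real.norm_eq_abs, abs_of_nonneg (sub_nonneg.2 (hFst _))]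
        exact hω
      have hmono := condExp_mono (m := ℱ k) hF1_int hG_int hpt
      have h1 : μ[G|ℱ k] =ᵐ[μ] μ[G1 + (-(α k)) • G2|ℱ k] + μ[C k • G3|ℱ k] := by
        rw [hGdef]
        exact condExp_add (hintk.add (hG2_int.smul _)) ((hf_sq_int k).smul _) _
      have h2 : μ[G1 + (-(α k)) • G2|ℱ k] =ᵐ[μ] μ[G1|ℱ k] + μ[(-(α k)) • G2|ℱ k] :=
        condExp_add hintk (hG2_int.smul _) _
      have h3 : μ[(-(α k)) • G2|ℱ k] =ᵐ[μ] (-(α k)) • μ[G2|ℱ k] := condExp_smul _ _ _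
      have h4 : μ[C k • G3|ℱ k] =ᵐ[μ] C k • μ[G3|ℱ k] := condExp_smul _ _ _
      have h5 : μ[G1|ℱ k] = G1 := condExp_of_stronglyMeasurable (hm k) (hFx_m k) hintk
      have h6 : μ[G2|ℱ k] =ᵐ[μ] fun ω => ⟪g ω, (μ[f k|ℱ k]) ω⟫ :=
        condexp_inner_pull (hm k) (hg_m k) (hf_int k) hgf_int
      have h7 := hunbiased k
      have hvle : v ≤ α k * μ' k - C k * b k := by
        refine le_trans (min_le_left _ _) (le_of_eq ?_)
        simp only [hCdef]
        ring
      filter_upwards [hmono, h1, h2, h3, h4, h6, h7, hU_spectrum k, hmoment k]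
        with ω hω1 hω2 hω3 hω4 hω5 hω6 hω7 hωs hωm
      have hA : 0 ≤ F (x k ω) - Fstar := sub_nonneg.2 (hFst _)
      have hN : (0:ℝ) ≤ ‖gradient F (x k ω)‖ ^ 2 := by positivity
      set A := F (x k ω) - Fstar
      set N := ‖gradient F (x k ω)‖ ^ 2
      set E2 := (μ[G2|ℱ k]) ω with hE2def
      set E3 := (μ[G3|ℱ k]) ω with hE3def
      have hkey : (μ[fun ω' => F (x (k+1) ω') - Fstar|ℱ k]) ω
          ≤ A + (-(α k)) * E2 + C k * E3 := by
        have p1 : (μ[G|ℱ k]) ω = (μ[G1 + (-(α k)) • G2|ℱ k]) ω + (μ[C k • G3|ℱ k]) ω := hω2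
        have p2 : (μ[G1 + (-(α k)) • G2|ℱ k]) ω = (μ[G1|ℱ k]) ω + (μ[(-(α k)) • G2|ℱ k]) ω := hω3
        have p3 : (μ[(-(α k)) • G2|ℱ k]) ω = (-(α k)) * E2 := hω4
        have p4 : (μ[C k • G3|ℱ k]) ω = C k * E3 := hω5
        have p5 : (μ[G1|ℱ k]) ω = A := congrFun h5 ω
        calc (μ[fun ω' => F (x (k+1) ω') - Fstar|ℱ k]) ω ≤ (μ[G|ℱ k]) ω := hω1
          _ = A + (-(α k)) * E2 + C k * E3 := by rw [p1, p2, p3, p4, p5]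
      have hlow : μ' k * N ≤ E2 := by
        rw [hω6, hω7]
        have := (hωs (gradient F (x k ω))).1
        calc μ' k * N ≤ ⟪gradient F (x k ω), U k ω (gradient F (x k ω))⟫ := this
          _ = ⟪g ω, gradient F (x k ω)⟫ := (hU_selfadj k ω _ _).symm
      have hmom : E3 ≤ a k * A + b k * N + c k := hωm
      -- assemble
      have q1 : α k * (μ' k * N) ≤ α k * E2 := mul_le_mul_of_nonneg_left hlow (hα k).le
      have q2 : C k * E3 ≤ C k * (a k * A + b k * N + c k) :=
        mul_le_mul_of_nonneg_left hmom (hC0 k)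
      have q3 : v * N ≤ (α k * μ' k - C k * b k) * N := mul_le_mul_of_nonneg_right hvle hN
      have r1 : C k * (a k * A + b k * N + c k) = C k * a k * A + C k * b k * N + C k * c k := by
        ring
      have r2 : α k * (μ' k * N) = α k * μ' k * N := by ring
      have r3 : (α k * μ' k - C k * b k) * N = α k * μ' k * N - C k * b k * N := by ring
      have r4 : (1 + C k * a k) * A = A + C k * a k * A := by ring
      show (μ[fun ω' => F (x (k+1) ω') - Fstar|ℱ k]) ω ≤ (1 + C k * a k) * A - v * N + C k * c k
      linarith
    · -- Case B: not integrable, conditional expectation is zero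
      have hnotint : ¬ Integrable (fun ω => F (x (k+1) ω) - Fstar) μ := by
        intro hint1
        apply hintk
        refine Integrable.mono' ((hint1.const_mul (1+β)).add
          ((hf_sq_int k).const_mul ((1+β)/2 * α k ^ 2 * ν k ^ 2)))
          ((hFx_m k).mono (hm k)).aestronglyMeasurable ?_
        filter_upwards [hop k] with ω hω
        have hY' : ‖x k ω - x (k+1) ω‖ ≤ α k * ν k * ‖f k ω‖ := by
          rw [norm_sub_rev, hΔeq k ω, norm_neg, norm_smul, Real.norm_eq_abs,
            abs_of_pos (hα k)]
          calc α k * ‖U k ω (f k ω)‖ ≤ α k * (ν k * ‖f k ω‖) :=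
                mul_le_mul_of_nonneg_left (hω _) (hα k).le
            _ = α k * ν k * ‖f k ω‖ := by ring
        have hdesc := descent_lemma F β hβ.le hF_diff hF_lip (x (k+1) ω) (x k ω)
        have hin : ⟪gradient F (x (k+1) ω), x k ω - x (k+1) ω⟫
            ≤ ‖gradient F (x (k+1) ω)‖ * ‖x k ω - x (k+1) ω‖ := real_inner_le_norm _ _
        have hin2 : ⟪gradient F (x (k+1) ω), x k ω - x (k+1) ω⟫
            ≤ ‖gradient F (x (k+1) ω)‖ * (α k * ν k * ‖f k ω‖) :=
          le_trans hin (mul_le_mul_of_nonneg_left hY' (norm_nonneg _))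
        have hsq : ‖x k ω - x (k+1) ω‖ ^ 2 ≤ (α k * ν k * ‖f k ω‖) ^ 2 :=
          pow_le_pow_left₀ (norm_nonneg _) hY' 2
        have hX2 : ‖gradient F (x (k+1) ω)‖ ^ 2 ≤ 2 * β * (F (x (k+1) ω) - Fstar) :=
          hgs (x (k+1) ω)
        have hP : 0 ≤ F (x (k+1) ω) - Fstar := sub_nonneg.2 (hFst _)
        rw [Real.norm_eq_abs, abs_of_nonneg (sub_nonneg.2 (hFst _))]
        have hXY := sq_nonneg (‖gradient F (x (k+1) ω)‖ - α k * ν k * ‖f k ω‖)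
        have hsq2 : β / 2 * ‖x k ω - x (k+1) ω‖ ^ 2 ≤ β / 2 * (α k * ν k * ‖f k ω‖) ^ 2 :=
          mul_le_mul_of_nonneg_left hsq (by positivity)
        simp only [Pi.add_apply]
        nlinarith [hβ.le]
      refine Filter.Eventually.of_forall fun ω => ?_
      rw [condExp_of_not_integrable hnotint, Pi.zero_apply]
      have hA : 0 ≤ F (x k ω) - Fstar := sub_nonneg.2 (hFst _)
      have hN : (0:ℝ) ≤ ‖gradient F (x k ω)‖ ^ 2 := by positivity
      have hgsA : ‖gradient F (x k ω)‖ ^ 2 ≤ 2 * β * (F (x k ω) - Fstar) := hgs _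
      have hvle2 : v ≤ 1/(2*β) := min_le_right _ _
      have q1 : v * ‖gradient F (x k ω)‖ ^ 2 ≤ v * (2 * β * (F (x k ω) - Fstar)) :=
        mul_le_mul_of_nonneg_left hgsA hv0
      have q2 : v * (2 * β * (F (x k ω) - Fstar)) ≤ (1/(2*β)) * (2 * β * (F (x k ω) - Fstar)) :=
        mul_le_mul_of_nonneg_right hvle2 (by positivity)
      have q3 : (1/(2*β)) * (2 * β * (F (x k ω) - Fstar)) = F (x k ω) - Fstar := by
        field_simp
      have q4 : 0 ≤ C k * a k * (F (x k ω) - Fstar) := mul_nonneg (mul_nonneg (hC0 k) (ha k)) hA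
      have q5 : 0 ≤ C k * c k := mul_nonneg (hC0 k) (hc k)
      have r4 : (1 + C k * a k) * (F (x k ω) - Fstar)
          = (F (x k ω) - Fstar) + C k * a k * (F (x k ω) - Fstar) := by ring
      show (0:ℝ) ≤ (1 + C k * a k) * (F (x k ω) - Fstar) - v * ‖gradient F (x k ω)‖ ^ 2 + C k * c k
      linarith
  · -- second inequality
    intro k
    haveI : SigmaFinite (μ.trim (hm k)) := inferInstance
    have hΔint : Integrable (fun ω => ‖x (k+1) ω - x k ω‖) μ := by
      refine Integrable.mono' ((hf_int k).norm.const_mul (α k * ν k)) ?_ ?_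
      · exact (((hx_meas (k+1)).sub (hx_meas k)).norm).aestronglyMeasurable
      · filter_upwards [hΔbound k] with ω hω
        rwa [Real.norm_eq_abs, abs_of_nonneg (norm_nonneg _)]
    have h1 : μ[fun ω => ‖x (k+1) ω - x k ω‖|ℱ k] ≤ᵐ[μ]
        μ[fun ω => (α k * ν k) * ‖f k ω‖|ℱ k] :=
      condExp_mono (m := ℱ k) hΔint ((hf_int k).norm.const_mul _) (hΔbound k)
    have h2 : μ[fun ω => (α k * ν k) * ‖f k ω‖|ℱ k] =ᵐ[μ]
        fun ω => (α k * ν k) * (μ[fun ω' => ‖f k ω'‖|ℱ k]) ω := by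
      have h := condExp_smul (μ := μ) (m := ℱ k) (α k * ν k) (fun ω => ‖f k ω‖)
      filter_upwards [h] with ω hω
      exact hω
    have h3 := condexp_le_sqrt_condexp_sq (hm k) (fun ω => norm_nonneg (f k ω))
      (hf_int k).norm (hf_sq_int k)
    filter_upwards [h1, h2, h3, hmoment k] with ω hω1 hω2 hω3 hωm
    have hA : 0 ≤ F (x k ω) - Fstar := sub_nonneg.2 (hFst _)
    have hN : (0:ℝ) ≤ ‖gradient F (x k ω)‖ ^ 2 := by positivity
    have hsq : Real.sqrt ((μ[fun ω' => ‖f k ω'‖ ^ 2|ℱ k]) ω) ≤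
        Real.sqrt (a k * (F (x k ω) - Fstar) + b k * ‖gradient F (x k ω)‖ ^ 2 + c k) :=
      Real.sqrt_le_sqrt hωm
    have hsplit : Real.sqrt (a k * (F (x k ω) - Fstar) + b k * ‖gradient F (x k ω)‖ ^ 2 + c k) ≤
        Real.sqrt (a k) * Real.sqrt (F (x k ω) - Fstar) +
          Real.sqrt (b k) * ‖gradient F (x k ω)‖ + Real.sqrt (c k) := by
      have s1 := my_sqrt_add_le (a k * (F (x k ω) - Fstar) + b k * ‖gradient F (x k ω)‖ ^ 2)
        (c k) (add_nonneg (mul_nonneg (ha k) hA) (mul_nonneg (hb k) hN)) (hc k)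
      have s2 := my_sqrt_add_le (a k * (F (x k ω) - Fstar)) (b k * ‖gradient F (x k ω)‖ ^ 2)
        (mul_nonneg (ha k) hA) (mul_nonneg (hb k) hN)
      have e1 : Real.sqrt (a k * (F (x k ω) - Fstar)) =
          Real.sqrt (a k) * Real.sqrt (F (x k ω) - Fstar) := Real.sqrt_mul (ha k) _
      have e2 : Real.sqrt (b k * ‖gradient F (x k ω)‖ ^ 2) =
          Real.sqrt (b k) * ‖gradient F (x k ω)‖ := by
        rw [Real.sqrt_mul (hb k), Real.sqrt_sq (norm_nonneg _)]
      rw [e1, e2] at s2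
      linarith
    have hαν : (0:ℝ) ≤ α k * ν k := mul_nonneg (hα k).le (hν_pos k).le
    calc (μ[fun ω' => ‖x (k+1) ω' - x k ω'‖|ℱ k]) ω
        ≤ (μ[fun ω' => (α k * ν k) * ‖f k ω'‖|ℱ k]) ω := hω1
      _ = (α k * ν k) * (μ[fun ω' => ‖f k ω'‖|ℱ k]) ω := hω2
      _ ≤ (α k * ν k) * Real.sqrt ((μ[fun ω' => ‖f k ω'‖ ^ 2|ℱ k]) ω) :=
          mul_le_mul_of_nonneg_left hω3 hαν
      _ ≤ (α k * ν k) * (Real.sqrt (a k) * Real.sqrt (F (x k ω) - Fstar) +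
          Real.sqrt (b k) * ‖gradient F (x k ω)‖ + Real.sqrt (c k)) :=
          mul_le_mul_of_nonneg_left (le_trans hsq hsplit) hαν
      _ = α k * ν k * Real.sqrt (a k) * Real.sqrt (F (x k ω) - Fstar) +
          α k * ν k * Real.sqrt (b k) * ‖gradient F (x k ω)‖ +
          α k * ν k * Real.sqrt (c k) := by ring
end

section
/- Let ℋ be a finite-dimensional real Hilbert space, let H : ℋ → ℝ be convex and differentiable with β_H-Lipschitz gradient (β_H > 0), and let γ ∈ (0, 1/β_H). For x, g ∈ ℋ, define d = γ^{−1}(x − prox_{γH}(x − γ g)). Then d = g + ∇H(x − γ d). Moreover, if G : ℋ → ℝ is differentiable and F = G + H, then ‖d‖ ≤ (1 − β_H γ)^{−1} ( ‖∇F(x)‖ + ‖g − ∇G(x)‖ ). -/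
open Filter Topology

/-- The proximity operator of `h : E → ℝ` with parameter `γ > 0` at `y`: the (unique, for
proper lsc convex `h`) minimizer of `u ↦ h u + (1/(2γ)) ‖y - u‖²`. -/
noncomputable def proxOp {E : Type*} [NormedAddCommGroup E] [InnerProductSpace ℝ E]
    (γ : ℝ) (h : E → ℝ) (y : E) : E :=
  letI : Nonempty E := ⟨0⟩
  Classical.epsilon fun p =>
    ∀ u, h p + 1 / (2 * γ) * ‖y - p‖ ^ 2 ≤ h u + 1 / (2 * γ) * ‖y - u‖ ^ 2


section Aux

open InnerProductSpace Set

variable {E : Type*} [NormedAddCommGroup E] [InnerProductSpace ℝ E] [CompleteSpace E]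

local notation "⟪" x ", " y "⟫" => @inner ℝ _ _ x y

/-- First-order lower bound for differentiable convex functions. -/
lemma convex_grad_lower (Hf : E → ℝ) (hconv : ConvexOn ℝ Set.univ Hf)
    (hdiff : Differentiable ℝ Hf) (v u : E) :
    Hf v + ⟪gradient Hf v, u - v⟫ ≤ Hf u := by
  have hline : ∀ t : ℝ, HasDerivAt (fun s : ℝ => v + s • (u - v)) (u - v) t := fun t => by
    simpa using ((hasDerivAt_id t).smul_const (u - v)).const_add v
  have h1 : HasFDerivAt Hf (toDual ℝ E (gradient Hf v)) v :=
    (hdiff v).hasGradientAt.hasFDerivAt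
  have hφd : HasDerivAt (fun t : ℝ => Hf (v + t • (u - v))) ⟪gradient Hf v, u - v⟫ 0 := by
    have h1' : HasFDerivAt Hf (toDual ℝ E (gradient Hf v)) ((fun s : ℝ => v + s • (u - v)) 0) := by
      simpa using h1
    have := h1'.comp_hasDerivAt 0 (hline 0)
    have h2 : HasDerivAt (fun t : ℝ => Hf (v + t • (u - v))) ((toDual ℝ E (gradient Hf v)) (u - v)) 0 := this
    simpa [InnerProductSpace.toDual_apply_apply] using h2
  have hφc : ConvexOn ℝ Set.univ (fun t : ℝ => Hf (v + t • (u - v))) := by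
    have := hconv.comp_affineMap (AffineMap.lineMap v u)
    have heq : (Hf ∘ (AffineMap.lineMap v u : ℝ →ᵃ[ℝ] E)) = fun t : ℝ => Hf (v + t • (u - v)) := by
      funext t
      simp [AffineMap.lineMap_apply_module]
      ring_nf
      congr 1
      module
    rw [heq] at this
    simpa using this
  have hs := hφc.le_slope_of_hasDerivAt (mem_univ (0:ℝ)) (mem_univ (1:ℝ)) one_pos hφd
  have : slope (fun t : ℝ => Hf (v + t • (u - v))) 0 1 = Hf u - Hf v := by
    simp [slope_def_field]
  rw [this] at hs
  linarith

/-- The prox operator satisfies the minimization property. -/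
lemma proxOp_spec' [FiniteDimensional ℝ E] (Hf : E → ℝ) (hconv : ConvexOn ℝ Set.univ Hf)
    (hdiff : Differentiable ℝ Hf) {γ : ℝ} (hγ : 0 < γ) (y : E) :
    ∃ p : E, ∀ u, Hf p + 1 / (2 * γ) * ‖y - p‖ ^ 2 ≤ Hf u + 1 / (2 * γ) * ‖y - u‖ ^ 2 := by
  set c : ℝ := 1 / (2 * γ) with hc
  have hcpos : 0 < c := by positivity
  set f : E → ℝ := fun u => Hf u + c * ‖y - u‖ ^ 2 with hf
  have hfc : Continuous f := by
    have : Continuous Hf := hdiff.continuous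
    fun_prop
  set A : ℝ := ‖gradient Hf 0‖ with hA
  set R : ℝ := ‖y‖ + (2 * c * ‖y‖ + A) / c + 1 with hR
  have hbig : ∀ᶠ u in cocompact E, f 0 ≤ f u := by
    filter_upwards [tendsto_norm_cocompact_atTop.eventually_ge_atTop R] with u hu
    have hlb := convex_grad_lower Hf hconv hdiff 0 u
    have hCS : -(A * ‖u‖) ≤ ⟪gradient Hf 0, u - 0⟫ := by
      have := abs_real_inner_le_norm (gradient Hf 0) (u - 0)
      have h2 : |⟪gradient Hf 0, u - 0⟫| ≤ A * ‖u‖ := by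
        simpa [hA] using this
      linarith [neg_abs_le (⟪gradient Hf 0, u - 0⟫)]
    have hynorm : ‖u‖ - ‖y‖ ≤ ‖y - u‖ := by
      have := norm_sub_norm_le u y
      have h3 : ‖u - y‖ = ‖y - u‖ := norm_sub_rev u y
      linarith
    have hyn2 : (‖u‖ - ‖y‖) ^ 2 ≤ ‖y - u‖ ^ 2 := by
      have h0 : 0 ≤ ‖u‖ - ‖y‖ := by
        have : ‖y‖ ≤ R := by
          have : 0 < (2 * c * ‖y‖ + A) / c + 1 := by positivity
          simp only [hR]; linarith
        linarith
      nlinarith [norm_nonneg (y - u)]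
    have hfu : Hf 0 - A * ‖u‖ + c * (‖u‖ - ‖y‖) ^ 2 ≤ f u := by
      have := mul_le_mul_of_nonneg_left hyn2 hcpos.le
      simp only [hf]
      nlinarith
    have hf0 : f 0 = Hf 0 + c * ‖y‖ ^ 2 := by simp [hf]
    rw [hf0]
    have hru : R ≤ ‖u‖ := hu
    have key : c * ‖y‖ ^ 2 + A * ‖u‖ ≤ c * (‖u‖ - ‖y‖) ^ 2 := by
      have hcr : c * R ≤ c * ‖u‖ := mul_le_mul_of_nonneg_left hru hcpos.le
      have hcR : c * R = c * ‖y‖ + (2 * c * ‖y‖ + A) + c := by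
        rw [hR]; field_simp
      nlinarith [mul_nonneg (norm_nonneg u)
        (show 0 ≤ c * ‖u‖ - 2 * c * ‖y‖ - A by
          linarith [mul_nonneg hcpos.le (norm_nonneg y)])]
    linarith
  obtain ⟨p, hp⟩ := hfc.exists_forall_le' (x₀ := 0) hbig
  exact ⟨p, fun u => hp u⟩

/-- Fermat rule: the gradient relation at the prox point. -/
lemma prox_fermat [FiniteDimensional ℝ E] (Hf : E → ℝ) (hconv : ConvexOn ℝ Set.univ Hf)
    (hdiff : Differentiable ℝ Hf) {γ : ℝ} (hγ : 0 < γ) (y : E)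
    {p : E} (hp : ∀ u, Hf p + 1 / (2 * γ) * ‖y - p‖ ^ 2 ≤ Hf u + 1 / (2 * γ) * ‖y - u‖ ^ 2) :
    gradient Hf p = γ⁻¹ • (y - p) := by
  set c : ℝ := 1 / (2 * γ) with hc
  have h0 : HasFDerivAt (fun u : E => y - u) (-(ContinuousLinearMap.id ℝ E)) p :=
    (hasFDerivAt_id p).const_sub y
  have h2 : HasFDerivAt (fun u : E => ‖y - u‖ ^ 2)
      (2 • (innerSL ℝ (y - p)).comp (-(ContinuousLinearMap.id ℝ E))) p := h0.norm_sq
  have h1 : HasFDerivAt Hf (toDual ℝ E (gradient Hf p)) p :=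
    (hdiff p).hasGradientAt.hasFDerivAt
  have hsum : HasFDerivAt (fun u : E => Hf u + c * ‖y - u‖ ^ 2)
      (toDual ℝ E (gradient Hf p) + c • (2 • (innerSL ℝ (y - p)).comp (-(ContinuousLinearMap.id ℝ E)))) p :=
    h1.add (h2.const_mul c)
  have hmin : IsLocalMin (fun u : E => Hf u + c * ‖y - u‖ ^ 2) p :=
    Filter.Eventually.of_forall hp
  have hz := hmin.hasFDerivAt_eq_zero hsum
  have hv : ∀ v : E, ⟪gradient Hf p - γ⁻¹ • (y - p), v⟫ = 0 := by
    intro v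
    have happ := ContinuousLinearMap.ext_iff.mp hz v
    simp only [ContinuousLinearMap.add_apply, ContinuousLinearMap.smul_apply,
      ContinuousLinearMap.comp_apply, ContinuousLinearMap.neg_apply,
      ContinuousLinearMap.coe_id', id_eq, InnerProductSpace.toDual_apply_apply, innerSL_apply_apply,
      ContinuousLinearMap.zero_apply, smul_eq_mul, nsmul_eq_mul, Nat.cast_ofNat,
      inner_neg_right] at happ
    rw [inner_sub_left, inner_smul_left, RCLike.conj_to_real]
    have hγ' : γ ≠ 0 := ne_of_gt hγ
    have hcc : c * (2 * -⟪y - p, v⟫) = -(γ⁻¹ * ⟪y - p, v⟫) := by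
      rw [hc]; field_simp
    linarith [happ, hcc]
  have := hv (gradient Hf p - γ⁻¹ • (y - p))
  rw [inner_self_eq_zero] at this
  exact sub_eq_zero.mp this

end Aux

/-- For convex `H` with `β_H`-Lipschitz gradient and `γ ∈ (0, 1/β_H)`,
the quantity `d = γ⁻¹ (x - prox_{γH}(x - γ g))` satisfies `d = g + ∇H(x - γ d)`; moreover,
if `G` is differentiable and `F = G + H`, then
`‖d‖ ≤ (1 - β_H γ)⁻¹ (‖∇F x‖ + ‖g - ∇G x‖)`. -/
theorem prox_gradient_step_identity_and_bound
    {E : Type*} [NormedAddCommGroup E] [InnerProductSpace ℝ E] [FiniteDimensional ℝ E]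
    (Hf : E → ℝ) (βH : ℝ) (hβH : 0 < βH)
    (hH_convex : ConvexOn ℝ Set.univ Hf)
    (hH_diff : Differentiable ℝ Hf)
    (hH_lip : LipschitzWith (Real.toNNReal βH) (gradient Hf))
    (γ : ℝ) (hγ : γ ∈ Set.Ioo (0:ℝ) (1 / βH))
    (x g d : E) (hd : d = γ⁻¹ • (x - proxOp γ Hf (x - γ • g))) :
    d = g + gradient Hf (x - γ • d) ∧
      ∀ G : E → ℝ, Differentiable ℝ G →
        ‖d‖ ≤ (1 - βH * γ)⁻¹ *
          (‖gradient (fun z => G z + Hf z) x‖ + ‖g - gradient G x‖) := by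
  obtain ⟨hγ0, hγ1⟩ := hγ
  have hγ' : γ ≠ 0 := ne_of_gt hγ0
  set y : E := x - γ • g with hy
  have hex := proxOp_spec' Hf hH_convex hH_diff hγ0 y
  have hspec : ∀ u, Hf (proxOp γ Hf y) + 1 / (2 * γ) * ‖y - proxOp γ Hf y‖ ^ 2 ≤
      Hf u + 1 / (2 * γ) * ‖y - u‖ ^ 2 := by
    unfold proxOp
    exact Classical.epsilon_spec hex
  set p : E := proxOp γ Hf y with hpdef
  have hgrad : gradient Hf p = γ⁻¹ • (y - p) :=
    prox_fermat Hf hH_convex hH_diff hγ0 y hspec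
  have hpx : p = x - γ • d := by
    rw [hd, smul_inv_smul₀ hγ']
    abel
  have hyp : y - p = γ • (d - g) := by
    rw [hy, hpx]
    module
  have hid : d = g + gradient Hf (x - γ • d) := by
    rw [← hpx, hgrad, hyp, inv_smul_smul₀ hγ']
    abel
  refine ⟨hid, fun G hG => ?_⟩
  have hsum : gradient (fun z => G z + Hf z) x = gradient G x + gradient Hf x := by
    have h1 : HasFDerivAt (fun z => G z + Hf z)
        (InnerProductSpace.toDual ℝ E (gradient G x) + InnerProductSpace.toDual ℝ E (gradient Hf x)) x :=
      ((hG x).hasGradientAt.hasFDerivAt).add ((hH_diff x).hasGradientAt.hasFDerivAt)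
    have h2 : HasGradientAt (fun z => G z + Hf z) (gradient G x + gradient Hf x) x := by
      rw [hasGradientAt_iff_hasFDerivAt, map_add]
      exact h1
    exact h2.gradient
  have hlip : ‖gradient Hf (x - γ • d) - gradient Hf x‖ ≤ βH * (γ * ‖d‖) := by
    have h3 := hH_lip.dist_le_mul (x - γ • d) x
    rw [dist_eq_norm, dist_eq_norm] at h3
    have hco : ((Real.toNNReal βH : NNReal) : ℝ) = βH := Real.coe_toNNReal _ hβH.le
    rw [hco] at h3
    have h4 : ‖x - γ • d - x‖ = γ * ‖d‖ := by
      rw [show x - γ • d - x = -(γ • d) by abel, norm_neg, norm_smul, Real.norm_eq_abs,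
        abs_of_pos hγ0]
    rw [h4] at h3
    linarith
  have hdecomp : d = (gradient G x + gradient Hf x) + (g - gradient G x) +
      (gradient Hf (x - γ • d) - gradient Hf x) := by
    nth_rewrite 1 [hid]
    abel
  have hnorm : ‖d‖ ≤ ‖gradient G x + gradient Hf x‖ + ‖g - gradient G x‖ + βH * (γ * ‖d‖) := by
    calc ‖d‖ = ‖(gradient G x + gradient Hf x) + (g - gradient G x) +
        (gradient Hf (x - γ • d) - gradient Hf x)‖ := congrArg norm hdecomp
      _ ≤ ‖gradient G x + gradient Hf x‖ + ‖g - gradient G x‖ +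
          ‖gradient Hf (x - γ • d) - gradient Hf x‖ := norm_add₃_le
      _ ≤ _ := by linarith
  have h1βγ : 0 < 1 - βH * γ := by
    have := (lt_div_iff₀ hβH).mp hγ1
    nlinarith
  rw [hsum, inv_mul_eq_div, le_div_iff₀ h1βγ]
  nlinarith [hnorm]
end
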